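/- arXiv:2111.02800 — 11 statements merged into one kernel-verified Lean document; each statement's English description precedes it below -/
import Mathlib

section
/- For every Borel probability measure μ on the unit sphere S² of ℝ³, the function C ↦ g(C,μ) is convex on [0,1]: for all p₁,p₂ ≥ 0 with p₁ + p₂ = 1 and all C₁,C₂ ∈ [0,1], g(p₁C₁ + p₂C₂, μ) ≤ p₁ g(C₁,μ) + p₂ g(C₂,μ). -/
open MeasureTheory Real
open scoped ENNReal

noncomputable section

abbrev E3 := EuclideanSpace ℝ (Fin 3)

/-- The unit sphere S² in ℝ³. -/
def unitSphere : Set E3 := Metric.sphere (0 : E3) 1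

/-- `g C μ` is the supremum over unit vectors `v` of `∫ √(C² + (1−C²)⟨r,v⟩²) dμ(r)`. -/
def g (C : ℝ) (μ : Measure E3) : ℝ :=
  ⨆ v : unitSphere, ∫ r, Real.sqrt (C ^ 2 + (1 - C ^ 2) * (inner ℝ r (v : E3) : ℝ) ^ 2) ∂μ

lemma sqrt_convex_aux (a b p₁ p₂ C₁ C₂ : ℝ) (ha : 0 ≤ a) (hb : 0 ≤ b)
    (hp₁ : 0 ≤ p₁) (hp₂ : 0 ≤ p₂) (hp : p₁ + p₂ = 1) :
    Real.sqrt (a + b * (p₁ * C₁ + p₂ * C₂) ^ 2) ≤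
      p₁ * Real.sqrt (a + b * C₁ ^ 2) + p₂ * Real.sqrt (a + b * C₂ ^ 2) := by
  have h1 : (0:ℝ) ≤ a + b * C₁ ^ 2 := by positivity
  have h2 : (0:ℝ) ≤ a + b * C₂ ^ 2 := by positivity
  have s1 := Real.sq_sqrt h1
  have s2 := Real.sq_sqrt h2
  have hcs : a + b * C₁ * C₂ ≤ Real.sqrt (a + b * C₁ ^ 2) * Real.sqrt (a + b * C₂ ^ 2) := by
    rw [← Real.sqrt_mul h1]
    calc a + b * C₁ * C₂ ≤ Real.sqrt ((a + b * C₁ * C₂) ^ 2) := by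
          rw [Real.sqrt_sq_eq_abs]; exact le_abs_self _
      _ ≤ _ := Real.sqrt_le_sqrt (by nlinarith [mul_nonneg (mul_nonneg ha hb) (sq_nonneg (C₁ - C₂))])
  have hR : 0 ≤ p₁ * Real.sqrt (a + b * C₁ ^ 2) + p₂ * Real.sqrt (a + b * C₂ ^ 2) := by
    positivity
  calc Real.sqrt (a + b * (p₁ * C₁ + p₂ * C₂) ^ 2)
      ≤ Real.sqrt ((p₁ * Real.sqrt (a + b * C₁ ^ 2) + p₂ * Real.sqrt (a + b * C₂ ^ 2)) ^ 2) := by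
        apply Real.sqrt_le_sqrt
        have H := mul_le_mul_of_nonneg_left hcs (by positivity : (0:ℝ) ≤ 2 * p₁ * p₂)
        have expand : (p₁ * Real.sqrt (a + b * C₁ ^ 2) + p₂ * Real.sqrt (a + b * C₂ ^ 2)) ^ 2
            = p₁ ^ 2 * (a + b * C₁ ^ 2) + p₂ ^ 2 * (a + b * C₂ ^ 2)
              + 2 * p₁ * p₂ * (Real.sqrt (a + b * C₁ ^ 2) * Real.sqrt (a + b * C₂ ^ 2)) := by
          linear_combination (p₁ ^ 2) * s1 + (p₂ ^ 2) * s2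
        have hp2 : p₂ = 1 - p₁ := by linarith
        subst hp2
        nlinarith [H, expand]
    _ = _ := Real.sqrt_sq hR

/-- For every Borel probability measure `μ` on the unit sphere S² of ℝ³,
the function `C ↦ g C μ` is convex on `[0,1]`. -/
theorem g_convexOn (μ : Measure E3) [IsProbabilityMeasure μ] (hμ : μ unitSphereᶜ = 0)
    (p₁ p₂ C₁ C₂ : ℝ) (hp₁ : 0 ≤ p₁) (hp₂ : 0 ≤ p₂) (hp : p₁ + p₂ = 1)
    (hC₁ : C₁ ∈ Set.Icc (0 : ℝ) 1) (hC₂ : C₂ ∈ Set.Icc (0 : ℝ) 1) :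
    g (p₁ * C₁ + p₂ * C₂) μ ≤ p₁ * g C₁ μ + p₂ * g C₂ μ := by
  obtain ⟨hC₁0, hC₁1⟩ := hC₁
  obtain ⟨hC₂0, hC₂1⟩ := hC₂
  haveI : Nonempty unitSphere := by
    refine ⟨⟨EuclideanSpace.single 0 1, ?_⟩⟩
    simp [unitSphere, EuclideanSpace.norm_single]
  have hsph : ∀ᵐ r ∂μ, r ∈ unitSphere := by
    rw [ae_iff]
    exact hμ
  have hsq : ∀ r ∈ unitSphere, ∀ v : unitSphere, (inner ℝ r (v : E3) : ℝ) ^ 2 ≤ 1 := by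
    intro r hr v
    have hrn : ‖r‖ = 1 := by simpa [unitSphere] using hr
    have hvn : ‖(v : E3)‖ = 1 := by
      have := v.2
      simpa [unitSphere] using this
    have habs : |(inner ℝ r (v : E3) : ℝ)| ≤ 1 := by
      have := abs_real_inner_le_norm r (v : E3)
      rwa [hrn, hvn, one_mul] at this
    exact (sq_le_one_iff_abs_le_one _).2 habs
  have hint : ∀ D : ℝ, 0 ≤ D → D ≤ 1 → ∀ v : unitSphere,
      Integrable (fun r => Real.sqrt (D ^ 2 + (1 - D ^ 2) * (inner ℝ r (v : E3) : ℝ) ^ 2)) μ := by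
    intro D hD0 hD1 v
    apply Integrable.mono' (integrable_const (1 : ℝ))
    · apply Continuous.aestronglyMeasurable
      exact Real.continuous_sqrt.comp (continuous_const.add (continuous_const.mul
        ((continuous_id.inner continuous_const).pow 2)))
    · filter_upwards [hsph] with r hr
      rw [Real.norm_eq_abs, abs_of_nonneg (Real.sqrt_nonneg _)]
      have ht := hsq r hr v
      calc Real.sqrt (D ^ 2 + (1 - D ^ 2) * (inner ℝ r (v : E3) : ℝ) ^ 2)
          ≤ Real.sqrt 1 := Real.sqrt_le_sqrt (by
            have hD2 : D ^ 2 ≤ 1 := by nlinarith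
            nlinarith [mul_nonneg (sub_nonneg.2 hD2) (sub_nonneg.2 ht)])
        _ = 1 := Real.sqrt_one
  have hbdd : ∀ D : ℝ, 0 ≤ D → D ≤ 1 →
      BddAbove (Set.range fun v : unitSphere =>
        ∫ r, Real.sqrt (D ^ 2 + (1 - D ^ 2) * (inner ℝ r (v : E3) : ℝ) ^ 2) ∂μ) := by
    intro D hD0 hD1
    refine ⟨1, ?_⟩
    rintro x ⟨v, rfl⟩
    calc (∫ r, Real.sqrt (D ^ 2 + (1 - D ^ 2) * (inner ℝ r (v : E3) : ℝ) ^ 2) ∂μ)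
        ≤ ∫ _, (1:ℝ) ∂μ := by
          apply integral_mono_ae (hint D hD0 hD1 v) (integrable_const 1)
          filter_upwards [hsph] with r hr
          have ht := hsq r hr v
          calc Real.sqrt (D ^ 2 + (1 - D ^ 2) * (inner ℝ r (v : E3) : ℝ) ^ 2)
              ≤ Real.sqrt 1 := Real.sqrt_le_sqrt (by
            have hD2 : D ^ 2 ≤ 1 := by nlinarith
            nlinarith [mul_nonneg (sub_nonneg.2 hD2) (sub_nonneg.2 ht)])
            _ = 1 := Real.sqrt_one
      _ = 1 := by simp
  set C := p₁ * C₁ + p₂ * C₂ with hCdef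
  have hC0 : 0 ≤ C := add_nonneg (mul_nonneg hp₁ hC₁0) (mul_nonneg hp₂ hC₂0)
  have hC1 : C ≤ 1 := by nlinarith
  rw [g]
  apply ciSup_le
  intro v
  have key : (∫ r, Real.sqrt (C ^ 2 + (1 - C ^ 2) * (inner ℝ r (v : E3) : ℝ) ^ 2) ∂μ)
      ≤ p₁ * (∫ r, Real.sqrt (C₁ ^ 2 + (1 - C₁ ^ 2) * (inner ℝ r (v : E3) : ℝ) ^ 2) ∂μ)
        + p₂ * (∫ r, Real.sqrt (C₂ ^ 2 + (1 - C₂ ^ 2) * (inner ℝ r (v : E3) : ℝ) ^ 2) ∂μ) := by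
    rw [← integral_const_mul, ← integral_const_mul, ← integral_add
      ((hint C₁ hC₁0 hC₁1 v).const_mul p₁) ((hint C₂ hC₂0 hC₂1 v).const_mul p₂)]
    apply integral_mono_ae (hint C hC0 hC1 v)
      (((hint C₁ hC₁0 hC₁1 v).const_mul p₁).add ((hint C₂ hC₂0 hC₂1 v).const_mul p₂))
    filter_upwards [hsph] with r hr
    simp only [Pi.add_apply]
    have ht := hsq r hr v
    set t : ℝ := (inner ℝ r (v : E3) : ℝ) with htdef
    have e0 : C ^ 2 + (1 - C ^ 2) * t ^ 2 = t ^ 2 + (1 - t ^ 2) * (p₁ * C₁ + p₂ * C₂) ^ 2 := by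
      rw [hCdef]; ring
    have e1 : C₁ ^ 2 + (1 - C₁ ^ 2) * t ^ 2 = t ^ 2 + (1 - t ^ 2) * C₁ ^ 2 := by ring
    have e2 : C₂ ^ 2 + (1 - C₂ ^ 2) * t ^ 2 = t ^ 2 + (1 - t ^ 2) * C₂ ^ 2 := by ring
    simp only [e0, e1, e2]
    exact sqrt_convex_aux (t ^ 2) (1 - t ^ 2) p₁ p₂ C₁ C₂ (sq_nonneg t) (by linarith) hp₁ hp₂ hp
  have le₁ : (∫ r, Real.sqrt (C₁ ^ 2 + (1 - C₁ ^ 2) * (inner ℝ r (v : E3) : ℝ) ^ 2) ∂μ) ≤ g C₁ μ :=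
    le_ciSup (hbdd C₁ hC₁0 hC₁1) v
  have le₂ : (∫ r, Real.sqrt (C₂ ^ 2 + (1 - C₂ ^ 2) * (inner ℝ r (v : E3) : ℝ) ^ 2) ∂μ) ≤ g C₂ μ :=
    le_ciSup (hbdd C₂ hC₂0 hC₂1) v
  have := add_le_add (mul_le_mul_of_nonneg_left le₁ hp₁) (mul_le_mul_of_nonneg_left le₂ hp₂)
  linarith
end
end

section
/- For every Borel probability measure μ on the unit sphere S² of ℝ³ and every C ∈ [0,1], g(C,μ) ≤ √(C² + (1−C²)·‖Ξ(μ)‖), where ‖Ξ(μ)‖ is the largest eigenvalue of the verification matrix Ξ(μ). -/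
open MeasureTheory Real
open scoped ENNReal

noncomputable section

/-- The verification matrix `Ξ(μ) = ∫ r rᵀ dμ(r)` (entrywise integral). -/
def Xi (μ : Measure E3) : Matrix (Fin 3) (Fin 3) ℝ :=
  Matrix.of fun i j => ∫ r, r i * r j ∂μ

open Matrix in
/-- Rayleigh quotient bound: for a symmetric matrix, `vᵀ A v ≤ λmax` for unit `v`. -/
lemma aux_rayleigh_le (A : Matrix (Fin 3) (Fin 3) ℝ) (hA : A.IsHermitian) (v : Fin 3 → ℝ)
    (hv : v ⬝ᵥ v = 1) : v ⬝ᵥ A *ᵥ v ≤ ⨆ i, hA.eigenvalues i := by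
  set U : Matrix (Fin 3) (Fin 3) ℝ := (hA.eigenvectorUnitary : Matrix (Fin 3) (Fin 3) ℝ) with hU
  set w : Fin 3 → ℝ := (star U) *ᵥ v with hw
  have hUv : vecMul v U = w := by
    rw [hw, hU, Matrix.star_eq_conjTranspose, conjTranspose_eq_transpose_of_trivial,
      mulVec_transpose]
  have hww : w ⬝ᵥ w = 1 := by
    have h1 : U * star U = 1 := (Matrix.mem_unitaryGroup_iff).mp hA.eigenvectorUnitary.2
    calc w ⬝ᵥ w = vecMul v U ⬝ᵥ w := by rw [hUv]
    _ = v ⬝ᵥ U *ᵥ w := (dotProduct_mulVec v U w).symm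
    _ = v ⬝ᵥ (U * star U) *ᵥ v := by rw [← mulVec_mulVec]
    _ = 1 := by rw [h1, one_mulVec, hv]
  have key : v ⬝ᵥ A *ᵥ v = ∑ i, hA.eigenvalues i * w i ^ 2 := by
    conv_lhs => rw [hA.spectral_theorem, Unitary.conjStarAlgAut_apply]
    rw [← mulVec_mulVec, ← mulVec_mulVec, dotProduct_mulVec, hUv]
    simp only [dotProduct, mulVec_diagonal, Function.comp_apply, RCLike.ofReal_real_eq_id, id_eq]
    exact Finset.sum_congr rfl fun i _ => by ring
  rw [key]
  have hb : BddAbove (Set.range hA.eigenvalues) := Set.Finite.bddAbove (Set.finite_range _)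
  calc ∑ i, hA.eigenvalues i * w i ^ 2
      ≤ ∑ i, (⨆ j, hA.eigenvalues j) * w i ^ 2 := by
        refine Finset.sum_le_sum fun i _ => ?_
        exact mul_le_mul_of_nonneg_right (le_ciSup hb i) (sq_nonneg _)
    _ = (⨆ j, hA.eigenvalues j) * ∑ i, w i ^ 2 := by rw [Finset.mul_sum]
    _ = ⨆ j, hA.eigenvalues j := by
        have : ∑ i, w i ^ 2 = 1 := by simpa [dotProduct, sq] using hww
        rw [this, mul_one]

lemma aux_coord_le (r : E3) (hr : r ∈ unitSphere) (i : Fin 3) : |r i| ≤ 1 := by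
  have hnorm : ‖r‖ = 1 := by simpa [unitSphere] using hr
  have h1 : |r i| ^ 2 ≤ ∑ k, ‖r k‖ ^ 2 := by
    have := Finset.single_le_sum (f := fun k => ‖r k‖ ^ 2) (fun k _ => sq_nonneg _)
      (Finset.mem_univ i)
    simpa [Real.norm_eq_abs, sq_abs] using this
  have h2 : |r i| ≤ Real.sqrt (∑ k, ‖r k‖ ^ 2) := by
    rw [← Real.sqrt_sq_eq_abs]
    exact Real.sqrt_le_sqrt (by simpa [sq_abs] using h1)
  rwa [← EuclideanSpace.norm_eq, hnorm] at h2

open Matrix in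
/-- The per-vector bound. -/
lemma aux_integral_le (μ : Measure E3) [IsProbabilityMeasure μ] (hμ : μ unitSphereᶜ = 0)
    (hXi : (Xi μ).IsHermitian) (C : ℝ) (hC : C ∈ Set.Icc (0 : ℝ) 1) (v : E3) (hv : ‖v‖ = 1) :
    ∫ r, Real.sqrt (C ^ 2 + (1 - C ^ 2) * (inner ℝ r v : ℝ) ^ 2) ∂μ
      ≤ Real.sqrt (C ^ 2 + (1 - C ^ 2) * (⨆ i, hXi.eigenvalues i)) := by
  obtain ⟨hC0, hC1⟩ := hC
  have hC2 : C ^ 2 ≤ 1 := by nlinarith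
  have h1C : 0 ≤ 1 - C ^ 2 := by linarith
  have hae : ∀ᵐ r ∂μ, r ∈ unitSphere := by
    rw [MeasureTheory.ae_iff]; simpa [Set.compl_def] using hμ
  have hconti : ∀ i : Fin 3, Continuous fun r : E3 => r i := fun i =>
    (EuclideanSpace.proj i : E3 →L[ℝ] ℝ).continuous
  have hcont : Continuous fun r : E3 => (inner ℝ r v : ℝ) := continuous_id.inner continuous_const
  have hinner : ∀ r : E3, r ∈ unitSphere → (inner ℝ r v : ℝ) ^ 2 ≤ 1 := by
    intro r hr
    have hnorm : ‖r‖ = 1 := by simpa [unitSphere] using hr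
    have h := abs_real_inner_le_norm r v
    rw [hnorm, hv, one_mul] at h
    calc (inner ℝ r v : ℝ) ^ 2 = |(inner ℝ r v : ℝ)| ^ 2 := (sq_abs _).symm
    _ ≤ 1 := by nlinarith [abs_nonneg (inner ℝ r v : ℝ)]
  set f : E3 → ℝ := fun r => C ^ 2 + (1 - C ^ 2) * (inner ℝ r v : ℝ) ^ 2 with hf
  have hf0 : ∀ r, 0 ≤ f r := fun r => by positivity
  have hf1 : ∀ r ∈ unitSphere, f r ≤ 1 := by
    intro r hr
    have h := hinner r hr
    have h2 : (1 - C ^ 2) * (inner ℝ r v : ℝ) ^ 2 ≤ (1 - C ^ 2) * 1 :=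
      mul_le_mul_of_nonneg_left h h1C
    simp only [hf]
    linarith
  -- integrability
  have ht_int : Integrable (fun r => (inner ℝ r v : ℝ) ^ 2) μ := by
    refine (integrable_const (1 : ℝ)).mono' (hcont.pow 2).aestronglyMeasurable ?_
    refine hae.mono fun r hr => ?_
    rw [Real.norm_eq_abs, abs_of_nonneg (sq_nonneg _)]
    exact hinner r hr
  have hf_int : Integrable f μ :=
    (integrable_const (C ^ 2)).add (ht_int.const_mul _)
  have hg_int : Integrable (Real.sqrt ∘ f) μ := by
    refine (integrable_const (1 : ℝ)).mono'
      (Real.continuous_sqrt.comp (by continuity : Continuous f)).aestronglyMeasurable ?_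
    refine hae.mono fun r hr => ?_
    rw [Function.comp_apply, Real.norm_eq_abs, abs_of_nonneg (Real.sqrt_nonneg _)]
    calc Real.sqrt (f r) ≤ Real.sqrt 1 := Real.sqrt_le_sqrt (hf1 r hr)
    _ = 1 := Real.sqrt_one
  -- Jensen's inequality
  have jensen : ∫ r, Real.sqrt (f r) ∂μ ≤ Real.sqrt (∫ r, f r ∂μ) := by
    refine (Real.strictConcaveOn_sqrt.concaveOn).le_map_integral
      Real.continuous_sqrt.continuousOn isClosed_Ici
      (Filter.Eventually.of_forall fun r => hf0 r) hf_int hg_int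
  -- compute ∫ f
  have hij_int : ∀ i j : Fin 3, Integrable (fun r : E3 => r i * r j) μ := by
    intro i j
    refine (integrable_const (1 : ℝ)).mono' ((hconti i).mul (hconti j)).aestronglyMeasurable ?_
    refine hae.mono fun r hr => ?_
    rw [Real.norm_eq_abs, abs_mul]
    exact mul_le_one₀ (aux_coord_le r hr i) (abs_nonneg _) (aux_coord_le r hr j)
  have expand : ∀ r : E3, (inner ℝ r v : ℝ) ^ 2 = ∑ i, ∑ j, (v i * v j) * (r i * r j) := by
    intro r
    have h : (inner ℝ r v : ℝ) = ∑ i, r i * v i := by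
      simp [PiLp.inner_apply, RCLike.inner_apply, conj_trivial, mul_comm]
    rw [h, sq, Finset.sum_mul_sum]
    exact Finset.sum_congr rfl fun i _ => Finset.sum_congr rfl fun j _ => by ring
  have h3 : ∫ r, (inner ℝ r v : ℝ) ^ 2 ∂μ = ∑ i, ∑ j, v i * v j * (Xi μ i j) := by
    simp_rw [expand]
    rw [integral_finset_sum _ (fun i _ =>
      integrable_finset_sum _ fun j _ => (hij_int i j).const_mul _)]
    refine Finset.sum_congr rfl fun i _ => ?_
    rw [integral_finset_sum _ (fun j _ => (hij_int i j).const_mul _)]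
    refine Finset.sum_congr rfl fun j _ => ?_
    rw [MeasureTheory.integral_const_mul]; rfl
  have hvv : (fun i => v i) ⬝ᵥ (fun i => v i) = 1 := by
    have h1 : (inner ℝ v v : ℝ) = 1 := by
      rw [real_inner_self_eq_norm_sq, hv, one_pow]
    have h2 : (inner ℝ v v : ℝ) = ∑ i, v i * v i := by
      simp only [PiLp.inner_apply, RCLike.inner_apply, conj_trivial]
    simp only [dotProduct]
    rw [← h2]
    exact h1
  have h4 : ∑ i, ∑ j, v i * v j * (Xi μ i j)
      = (fun i => v i) ⬝ᵥ (Xi μ) *ᵥ (fun i => v i) := by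
    simp only [dotProduct, Matrix.mulVec, Finset.mul_sum]
    exact Finset.sum_congr rfl fun i _ => Finset.sum_congr rfl fun j _ => by ring
  have h5 : ∫ r, (inner ℝ r v : ℝ) ^ 2 ∂μ ≤ ⨆ i, hXi.eigenvalues i := by
    rw [h3, h4]
    exact aux_rayleigh_le (Xi μ) hXi _ hvv
  have hfint : ∫ r, f r ∂μ = C ^ 2 + (1 - C ^ 2) * ∫ r, (inner ℝ r v : ℝ) ^ 2 ∂μ := by
    rw [hf]
    rw [integral_add (integrable_const _) (ht_int.const_mul _), integral_const,
      MeasureTheory.integral_const_mul]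
    simp
  calc ∫ r, Real.sqrt (f r) ∂μ ≤ Real.sqrt (∫ r, f r ∂μ) := jensen
  _ ≤ Real.sqrt (C ^ 2 + (1 - C ^ 2) * (⨆ i, hXi.eigenvalues i)) := by
      apply Real.sqrt_le_sqrt
      rw [hfint]
      exact add_le_add_right (mul_le_mul_of_nonneg_left h5 h1C) _

instance : Nonempty unitSphere :=
  ⟨⟨EuclideanSpace.single 0 1, by simp [unitSphere, EuclideanSpace.norm_single]⟩⟩

/-- For every Borel probability measure `μ` on the unit sphere S² of ℝ³ and every `C ∈ [0,1]`,
`g(C,μ) ≤ √(C² + (1−C²)·‖Ξ(μ)‖)`, where `‖Ξ(μ)‖` is the largest eigenvalue of the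
(symmetric) verification matrix `Ξ(μ)`. -/
theorem g_le_sqrt_XiNorm (μ : Measure E3) [IsProbabilityMeasure μ] (hμ : μ unitSphereᶜ = 0)
    (hXi : (Xi μ).IsHermitian) (C : ℝ) (hC : C ∈ Set.Icc (0 : ℝ) 1) :
    g C μ ≤ Real.sqrt (C ^ 2 + (1 - C ^ 2) * (⨆ i, hXi.eigenvalues i)) := by
  refine ciSup_le fun v => ?_
  exact aux_integral_le μ hμ hXi C hC (v : E3) (by simpa [unitSphere] using v.2)
end
end

section
/- For every Borel probability measure μ on the unit sphere S² of ℝ³ and every C ∈ [0,1], the following chain of inequalities holds: g(C,μ) ≥ ‖Ξ(μ)‖ + (1 − ‖Ξ(μ)‖)·C ≥ (1 + 2C)/3 ≥ C, where ‖Ξ(μ)‖ is the largest eigenvalue of the verification matrix Ξ(μ). -/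
open MeasureTheory Real
open scoped ENNReal

noncomputable section

lemma coord_abs_le (r : E3) (h : ‖r‖ = 1) (i : Fin 3) : |r i| ≤ 1 := by
  calc |r i| ≤ ‖r‖ := by
        rw [EuclideanSpace.norm_eq]
        apply Real.le_sqrt_of_sq_le
        rw [sq_abs]
        simpa [Real.norm_eq_abs, sq_abs] using
          Finset.single_le_sum (f := fun j => ‖r j‖ ^ 2) (fun j _ => sq_nonneg _)
            (Finset.mem_univ i)
    _ = 1 := h

lemma inner_sum_form (r v : E3) : (inner ℝ r v : ℝ) = ∑ i, r i * v i := by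
  rw [PiLp.inner_apply]; simp [RCLike.inner_apply, mul_comm]

lemma sqrt_key {C t : ℝ} (hC0 : 0 ≤ C) (hC1 : C ≤ 1) (ht : t ^ 2 ≤ 1) :
    C + (1 - C) * t ^ 2 ≤ Real.sqrt (C ^ 2 + (1 - C ^ 2) * t ^ 2) := by
  rw [Real.le_sqrt (by nlinarith [sq_nonneg t]) (by nlinarith [sq_nonneg t])]
  nlinarith [mul_nonneg (mul_nonneg (sq_nonneg (1 - C)) (sq_nonneg t))
    (sub_nonneg.2 ht), sq_nonneg t]

/-- For every Borel probability measure `μ` on the unit sphere S² of ℝ³ and every `C ∈ [0,1]`,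
`g(C,μ) ≥ ‖Ξ(μ)‖ + (1 − ‖Ξ(μ)‖)·C ≥ (1 + 2C)/3 ≥ C`, where `‖Ξ(μ)‖` is the largest
eigenvalue of the (symmetric) verification matrix `Ξ(μ)`. -/
theorem g_lower_bounds (μ : Measure E3) [IsProbabilityMeasure μ] (hμ : μ unitSphereᶜ = 0)
    (hXi : (Xi μ).IsHermitian) (C : ℝ) (hC : C ∈ Set.Icc (0 : ℝ) 1) :
    (⨆ i, hXi.eigenvalues i) + (1 - ⨆ i, hXi.eigenvalues i) * C ≤ g C μ ∧
    (1 + 2 * C) / 3 ≤ (⨆ i, hXi.eigenvalues i) + (1 - ⨆ i, hXi.eigenvalues i) * C ∧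
    C ≤ (1 + 2 * C) / 3 := by
  obtain ⟨hC0, hC1⟩ := hC
  -- a.e. points lie on the sphere
  have hae : ∀ᵐ r ∂μ, ‖r‖ = 1 := by
    rw [MeasureTheory.ae_iff]
    have : {r : E3 | ¬ ‖r‖ = 1} = unitSphereᶜ := by
      ext r
      simp [unitSphere, mem_sphere_zero_iff_norm]
    rw [this]; exact hμ
  -- integrability of coordinate products
  have hmeas : ∀ i : Fin 3, AEStronglyMeasurable (fun r : E3 => r i) μ :=
    fun i => (EuclideanSpace.proj i).continuous.aestronglyMeasurable
  have hint : ∀ i j : Fin 3, Integrable (fun r : E3 => r i * r j) μ := by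
    intro i j
    refine Integrable.mono' (integrable_const 1) ((hmeas i).mul (hmeas j)) ?_
    filter_upwards [hae] with r hr
    rw [Real.norm_eq_abs, abs_mul]
    calc |r i| * |r j| ≤ 1 * 1 :=
          mul_le_mul (coord_abs_le r hr i) (coord_abs_le r hr j) (abs_nonneg _) zero_le_one
      _ = 1 := one_mul 1
  -- maximum eigenvalue
  obtain ⟨i₀, hi₀⟩ := Finite.exists_max hXi.eigenvalues
  have hsup : (⨆ i, hXi.eigenvalues i) = hXi.eigenvalues i₀ :=
    le_antisymm (ciSup_le hi₀) (le_ciSup (Finite.bddAbove_range _) i₀)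
  set lam := hXi.eigenvalues i₀ with hlam
  set v : E3 := hXi.eigenvectorBasis i₀ with hvdef
  have hv : ‖v‖ = 1 := hXi.eigenvectorBasis.orthonormal.1 i₀
  -- Fact A : ∫ ⟨r,v⟩² dμ = lam
  have hsq : ∀ r : E3, (inner ℝ r v : ℝ) ^ 2 = ∑ i, ∑ j, (v i * v j) * (r i * r j) := by
    intro r
    rw [inner_sum_form, sq, Finset.sum_mul_sum]
    exact Finset.sum_congr rfl fun i _ => Finset.sum_congr rfl fun j _ => by ring
  have hvsum : ∑ i, v i * v i = 1 := by
    have h1 : (inner ℝ v v : ℝ) = 1 := by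
      rw [real_inner_self_eq_norm_sq, hv]; norm_num
    rw [inner_sum_form] at h1; exact h1
  have hmv : ∀ i, ∑ j, Xi μ i j * v j = lam * v i := by
    intro i
    have := congrFun (hXi.mulVec_eigenvectorBasis i₀) i
    simpa [Matrix.mulVec, dotProduct, hvdef] using this
  have hA : ∫ r, (inner ℝ r v : ℝ) ^ 2 ∂μ = lam := by
    calc ∫ r, (inner ℝ r v : ℝ) ^ 2 ∂μ
        = ∫ r, ∑ i, ∑ j, (v i * v j) * (r i * r j) ∂μ := by simp_rw [hsq]
      _ = ∑ i, ∑ j, (v i * v j) * ∫ r, r i * r j ∂μ := by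
          rw [integral_finset_sum _ (fun i _ =>
            integrable_finset_sum _ (fun j _ => (hint i j).const_mul _))]
          refine Finset.sum_congr rfl fun i _ => ?_
          rw [integral_finset_sum _ (fun j _ => (hint i j).const_mul _)]
          exact Finset.sum_congr rfl fun j _ => integral_const_mul _ _
      _ = ∑ i, v i * (∑ j, Xi μ i j * v j) := by
          refine Finset.sum_congr rfl fun i _ => ?_
          rw [Finset.mul_sum]
          exact Finset.sum_congr rfl fun j _ => by
            show v i * v j * Xi μ i j = v i * (Xi μ i j * v j); ring
      _ = lam * ∑ i, v i * v i := by
          simp_rw [hmv, Finset.mul_sum]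
          exact Finset.sum_congr rfl fun i _ => by ring
      _ = lam := by rw [hvsum, mul_one]
  -- trace = 1
  have htrace : (Xi μ).trace = 1 := by
    have hdiag : (Xi μ).trace = ∑ i, ∫ r, r i * r i ∂μ := rfl
    rw [hdiag, ← integral_finset_sum _ (fun i _ => hint i i)]
    have : ∫ r, ∑ i : Fin 3, r i * r i ∂μ = ∫ _r, (1 : ℝ) ∂μ := by
      refine integral_congr_ae ?_
      filter_upwards [hae] with r hr
      have h1 : (inner ℝ r r : ℝ) = 1 := by
        rw [real_inner_self_eq_norm_sq, hr]; norm_num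
      rw [inner_sum_form] at h1; exact h1
    rw [this]; simp
  -- sum of eigenvalues = trace
  have hsumeig : ∑ i, hXi.eigenvalues i = 1 := by
    have h2 : (Xi μ).trace = ∑ i, hXi.eigenvalues i := by
      simpa using hXi.trace_eq_sum_eigenvalues
    rw [← h2, htrace]
  have hlam13 : (1 : ℝ) / 3 ≤ lam := by
    have h3 : ∑ i, hXi.eigenvalues i ≤ ∑ _i : Fin 3, lam :=
      Finset.sum_le_sum fun i _ => hi₀ i
    simp only [Finset.sum_const, Finset.card_univ, Fintype.card_fin, nsmul_eq_mul] at h3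
    rw [hsumeig] at h3
    norm_num at h3
    linarith
  refine ⟨?_, by rw [hsup]; nlinarith, by linarith⟩
  -- main inequality
  rw [hsup]
  have hcontw : ∀ w : E3, Continuous fun r : E3 => (inner ℝ r w : ℝ) :=
    fun w => Continuous.inner continuous_id continuous_const
  have hintf : ∀ w : unitSphere, Integrable
      (fun r => Real.sqrt (C ^ 2 + (1 - C ^ 2) * (inner ℝ r (w : E3) : ℝ) ^ 2)) μ := by
    intro w
    refine Integrable.mono' (integrable_const 1)
      ((Real.continuous_sqrt.comp (continuous_const.add
        (continuous_const.mul ((hcontw w).pow 2)))).aestronglyMeasurable) ?_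
    filter_upwards [hae] with r hr
    have hw : ‖(w : E3)‖ = 1 := mem_sphere_zero_iff_norm.mp w.2
    have ht : (inner ℝ r (w : E3) : ℝ) ^ 2 ≤ 1 := by
      have := abs_real_inner_le_norm r (w : E3)
      rw [hr, hw, one_mul] at this
      nlinarith [sq_abs (inner ℝ r (w : E3) : ℝ), abs_nonneg (inner ℝ r (w : E3) : ℝ)]
    rw [Real.norm_eq_abs, abs_of_nonneg (Real.sqrt_nonneg _)]
    refine le_trans (Real.sqrt_le_sqrt (by nlinarith [mul_nonneg (by nlinarith : (0:ℝ) ≤ 1 - C ^ 2) (by linarith : (0:ℝ) ≤ 1 - (inner ℝ r (w : E3) : ℝ) ^ 2)])) (le_of_eq Real.sqrt_one)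
  have hFle : ∀ w : unitSphere,
      (∫ r, Real.sqrt (C ^ 2 + (1 - C ^ 2) * (inner ℝ r (w : E3) : ℝ) ^ 2) ∂μ) ≤ 1 := by
    intro w
    calc (∫ r, Real.sqrt (C ^ 2 + (1 - C ^ 2) * (inner ℝ r (w : E3) : ℝ) ^ 2) ∂μ)
        ≤ ∫ _r, (1 : ℝ) ∂μ := by
          refine integral_mono_ae (hintf w) (integrable_const 1) ?_
          filter_upwards [hae] with r hr
          have hw : ‖(w : E3)‖ = 1 := mem_sphere_zero_iff_norm.mp w.2
          have ht : (inner ℝ r (w : E3) : ℝ) ^ 2 ≤ 1 := by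
            have := abs_real_inner_le_norm r (w : E3)
            rw [hr, hw, one_mul] at this
            nlinarith [sq_abs (inner ℝ r (w : E3) : ℝ), abs_nonneg (inner ℝ r (w : E3) : ℝ)]
          exact le_trans (Real.sqrt_le_sqrt (by nlinarith [mul_nonneg (by nlinarith : (0:ℝ) ≤ 1 - C ^ 2) (by linarith : (0:ℝ) ≤ 1 - (inner ℝ r (w : E3) : ℝ) ^ 2)])) (le_of_eq Real.sqrt_one)
      _ = 1 := by simp
  have hbdd : BddAbove (Set.range fun w : unitSphere =>
      ∫ r, Real.sqrt (C ^ 2 + (1 - C ^ 2) * (inner ℝ r (w : E3) : ℝ) ^ 2) ∂μ) := by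
    refine ⟨1, ?_⟩; rintro _ ⟨w, rfl⟩; exact hFle w
  have hv_mem : v ∈ unitSphere := mem_sphere_zero_iff_norm.mpr hv
  have hintinner : Integrable (fun r : E3 => (inner ℝ r v : ℝ) ^ 2) μ := by
    simp_rw [hsq]
    exact integrable_finset_sum _ (fun i _ =>
      integrable_finset_sum _ (fun j _ => (hint i j).const_mul _))
  have key : lam + (1 - lam) * C ≤
      ∫ r, Real.sqrt (C ^ 2 + (1 - C ^ 2) * (inner ℝ r v : ℝ) ^ 2) ∂μ := by
    have h1 : ∫ r, (C + (1 - C) * (inner ℝ r v : ℝ) ^ 2) ∂μ = C + (1 - C) * lam := by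
      rw [integral_add (integrable_const C) (hintinner.const_mul _), integral_const,
        integral_const_mul, hA]
      simp
    calc lam + (1 - lam) * C = C + (1 - C) * lam := by ring
      _ = ∫ r, (C + (1 - C) * (inner ℝ r v : ℝ) ^ 2) ∂μ := h1.symm
      _ ≤ ∫ r, Real.sqrt (C ^ 2 + (1 - C ^ 2) * (inner ℝ r v : ℝ) ^ 2) ∂μ := by
          refine integral_mono_ae ((integrable_const C).add (hintinner.const_mul _))
            (hintf ⟨v, hv_mem⟩) ?_
          filter_upwards [hae] with r hr
          have ht : (inner ℝ r v : ℝ) ^ 2 ≤ 1 := by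
            have := abs_real_inner_le_norm r v
            rw [hr, hv, one_mul] at this
            nlinarith [sq_abs (inner ℝ r v : ℝ), abs_nonneg (inner ℝ r v : ℝ)]
          exact sqrt_key hC0 hC1 ht
  exact key.trans (le_ciSup hbdd (⟨v, hv_mem⟩ : unitSphere))
end
end

section
/- For every Borel probability measure μ on the unit sphere S² of ℝ³ and all C₁, C₂ with 0 ≤ C₁ ≤ C₂ ≤ 1, one has g(C₂,μ) − g(C₁,μ) ≤ (2/3)·(C₂ − C₁). -/
open MeasureTheory Real
open scoped ENNReal

noncomputable section

lemma ptwise_lower (C t : ℝ) (hC0 : 0 ≤ C) (hC1 : C ≤ 1) (ht : t ^ 2 ≤ 1) :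
    C + (1 - C) * t ^ 2 ≤ Real.sqrt (C ^ 2 + (1 - C ^ 2) * t ^ 2) := by
  have h0 : 0 ≤ C + (1 - C) * t ^ 2 := by nlinarith [sq_nonneg t]
  rw [← Real.sqrt_sq h0]
  apply Real.sqrt_le_sqrt
  nlinarith [mul_nonneg (mul_nonneg (sq_nonneg t) (sq_nonneg (1 - C))) (sub_nonneg.mpr ht)]

lemma ptwise_upper_one (C t : ℝ) (hC0 : 0 ≤ C) (hC1 : C ≤ 1) (ht : t ^ 2 ≤ 1) :
    Real.sqrt (C ^ 2 + (1 - C ^ 2) * t ^ 2) ≤ 1 := by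
  have h : C ^ 2 + (1 - C ^ 2) * t ^ 2 ≤ 1 := by
    nlinarith [mul_nonneg (by nlinarith : (0:ℝ) ≤ 1 - C ^ 2) (sub_nonneg.mpr ht)]
  calc Real.sqrt (C ^ 2 + (1 - C ^ 2) * t ^ 2) ≤ Real.sqrt 1 := Real.sqrt_le_sqrt h
  _ = 1 := Real.sqrt_one

lemma sq_aux (C₁ L s t : ℝ) (hssq : s ^ 2 = C₁ ^ 2 + (1 - C₁ ^ 2) * t ^ 2)
    (key : 0 ≤ 2 * L * (1 - L) * (s - (C₁ + (1 - C₁) * t ^ 2))) :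
    (L * C₁ + (1 - L)) ^ 2 + (1 - (L * C₁ + (1 - L)) ^ 2) * t ^ 2 ≤ (L * s + (1 - L)) ^ 2 := by
  have h2 : L ^ 2 * s ^ 2 = L ^ 2 * (C₁ ^ 2 + (1 - C₁ ^ 2) * t ^ 2) := by rw [hssq]
  nlinarith [h2, key]

lemma ptwise_convex (C₁ C₂ t : ℝ) (h0 : 0 ≤ C₁) (h12 : C₁ ≤ C₂) (h1 : C₂ ≤ 1)
    (hlt : C₁ < 1) (ht : t ^ 2 ≤ 1) :
    Real.sqrt (C₂ ^ 2 + (1 - C₂ ^ 2) * t ^ 2) ≤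
      (1 - C₂) / (1 - C₁) * Real.sqrt (C₁ ^ 2 + (1 - C₁ ^ 2) * t ^ 2)
        + (1 - (1 - C₂) / (1 - C₁)) := by
  set L := (1 - C₂) / (1 - C₁) with hL
  have hd : (0:ℝ) < 1 - C₁ := by linarith
  have hL0 : 0 ≤ L := div_nonneg (by linarith) hd.le
  have hL1 : L ≤ 1 := by rw [hL, div_le_one hd]; linarith
  have hLC : L * (1 - C₁) = 1 - C₂ := div_mul_cancel₀ _ hd.ne'
  have hC₂ : C₂ = L * C₁ + (1 - L) := by nlinarith [hLC]
  set s := Real.sqrt (C₁ ^ 2 + (1 - C₁ ^ 2) * t ^ 2) with hs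
  have hs0 : 0 ≤ s := Real.sqrt_nonneg _
  have hssq : s ^ 2 = C₁ ^ 2 + (1 - C₁ ^ 2) * t ^ 2 := Real.sq_sqrt (by nlinarith [sq_nonneg t])
  have hslow : C₁ + (1 - C₁) * t ^ 2 ≤ s := ptwise_lower C₁ t h0 hlt.le ht
  have hrhs0 : 0 ≤ L * s + (1 - L) := by nlinarith
  rw [← Real.sqrt_sq hrhs0]
  apply Real.sqrt_le_sqrt
  rw [hC₂]
  exact sq_aux C₁ L s t hssq
    (mul_nonneg (mul_nonneg (by linarith) (by linarith)) (by linarith))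

lemma sum_sq_inner (r : E3) (h : ‖r‖ = 1) :
    ∑ i : Fin 3, (inner ℝ r (EuclideanSpace.single i (1:ℝ)) : ℝ) ^ 2 = 1 := by
  have hn := PiLp.norm_sq_eq_of_L2 (fun _ : Fin 3 => ℝ) r
  rw [h] at hn
  simp only [Real.norm_eq_abs, sq_abs] at hn
  have he : ∀ i : Fin 3, (inner ℝ r (EuclideanSpace.single i (1:ℝ)) : ℝ) = r i := by
    intro i; rw [EuclideanSpace.inner_single_right]; simp
  simp_rw [he]
  linarith [hn]

/-- For every Borel probability measure `μ` on the unit sphere S² of ℝ³ and all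
`0 ≤ C₁ ≤ C₂ ≤ 1`, one has `g(C₂,μ) − g(C₁,μ) ≤ (2/3)(C₂ − C₁)`. -/
theorem g_slope_bound (μ : Measure E3) [IsProbabilityMeasure μ] (hμ : μ unitSphereᶜ = 0)
    (C₁ C₂ : ℝ) (h0 : 0 ≤ C₁) (h12 : C₁ ≤ C₂) (h1 : C₂ ≤ 1) :
    g C₂ μ - g C₁ μ ≤ (2 / 3) * (C₂ - C₁) := by
  have hae : ∀ᵐ r ∂μ, r ∈ unitSphere := by
    rw [ae_iff]; exact hμ
  -- a.e. bound on inner products with unit vectors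
  have hsq : ∀ w : E3, ‖w‖ = 1 → ∀ᵐ r ∂μ, (inner ℝ r w : ℝ) ^ 2 ≤ 1 := by
    intro w hw
    filter_upwards [hae] with r hr
    have hr1 : ‖r‖ = 1 := by simpa [unitSphere] using hr
    have habs : |(inner ℝ r w : ℝ)| ≤ 1 := by
      have := abs_real_inner_le_norm r w
      rw [hr1, hw] at this; simpa using this
    calc (inner ℝ r w : ℝ) ^ 2 = |(inner ℝ r w : ℝ)| ^ 2 := (sq_abs _).symm
    _ ≤ 1 ^ 2 := pow_le_pow_left₀ (abs_nonneg _) habs 2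
    _ = 1 := one_pow 2
  -- continuity & integrability of the main integrand
  have contF : ∀ (C : ℝ) (w : E3),
      Continuous fun r : E3 => Real.sqrt (C ^ 2 + (1 - C ^ 2) * (inner ℝ r w : ℝ) ^ 2) :=
    fun C w => (continuous_const.add (continuous_const.mul
      ((continuous_id.inner continuous_const).pow 2))).sqrt
  have intF : ∀ (C : ℝ) (w : E3), 0 ≤ C → C ≤ 1 → ‖w‖ = 1 →
      Integrable (fun r : E3 => Real.sqrt (C ^ 2 + (1 - C ^ 2) * (inner ℝ r w : ℝ) ^ 2)) μ := by
    intro C w hC0 hC1 hw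
    refine (integrable_const (1:ℝ)).mono' (contF C w).aestronglyMeasurable ?_
    filter_upwards [hsq w hw] with r hr
    rw [Real.norm_eq_abs, abs_of_nonneg (Real.sqrt_nonneg _)]
    exact ptwise_upper_one C _ hC0 hC1 hr
  -- integrability of squared inner product
  have intQ : ∀ w : E3, ‖w‖ = 1 →
      Integrable (fun r : E3 => (inner ℝ r w : ℝ) ^ 2) μ := by
    intro w hw
    refine (integrable_const (1:ℝ)).mono'
      (((continuous_id.inner continuous_const).pow 2).aestronglyMeasurable) ?_
    filter_upwards [hsq w hw] with r hr
    rw [Real.norm_eq_abs, abs_of_nonneg (sq_nonneg _)]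
    exact hr
  -- integral bounded by one
  have int_le_one : ∀ (C : ℝ) (w : E3), 0 ≤ C → C ≤ 1 → ‖w‖ = 1 →
      (∫ r, Real.sqrt (C ^ 2 + (1 - C ^ 2) * (inner ℝ r w : ℝ) ^ 2) ∂μ) ≤ 1 := by
    intro C w hC0 hC1 hw
    calc (∫ r, Real.sqrt (C ^ 2 + (1 - C ^ 2) * (inner ℝ r w : ℝ) ^ 2) ∂μ)
        ≤ ∫ _, (1:ℝ) ∂μ := by
          refine integral_mono_ae (intF C w hC0 hC1 hw) (integrable_const 1) ?_
          filter_upwards [hsq w hw] with r hr using ptwise_upper_one C _ hC0 hC1 hr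
    _ = 1 := by simp
  have hne : Nonempty unitSphere := by
    refine ⟨⟨EuclideanSpace.single 0 (1:ℝ), ?_⟩⟩
    simp [unitSphere]
  have hbdd : ∀ (C : ℝ), 0 ≤ C → C ≤ 1 → BddAbove (Set.range fun v : unitSphere =>
      ∫ r, Real.sqrt (C ^ 2 + (1 - C ^ 2) * (inner ℝ r (v : E3) : ℝ) ^ 2) ∂μ) := by
    intro C hC0 hC1
    refine ⟨1, ?_⟩
    rintro x ⟨v, rfl⟩
    have hv : ‖(v : E3)‖ = 1 := by
      have := v.2; simpa [unitSphere] using this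
    exact int_le_one C v hC0 hC1 hv
  -- lower bound for g C₁
  obtain ⟨i, hi⟩ : ∃ i : Fin 3,
      1/3 ≤ ∫ r, (inner ℝ r (EuclideanSpace.single i (1:ℝ)) : ℝ) ^ 2 ∂μ := by
    by_contra hcon
    push_neg at hcon
    have hone : ∀ i : Fin 3, ‖EuclideanSpace.single i (1:ℝ)‖ = 1 := by intro i; simp
    have hsum : ∑ i : Fin 3,
        ∫ r, (inner ℝ r (EuclideanSpace.single i (1:ℝ)) : ℝ) ^ 2 ∂μ = 1 := by
      rw [← integral_finset_sum _ (fun i _ => intQ _ (hone i))]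
      have : ∀ᵐ r ∂μ, ∑ i : Fin 3, (inner ℝ r (EuclideanSpace.single i (1:ℝ)) : ℝ) ^ 2 = 1 := by
        filter_upwards [hae] with r hr
        exact sum_sq_inner r (by simpa [unitSphere] using hr)
      rw [integral_congr_ae this]
      simp
    rw [Fin.sum_univ_three] at hsum
    linarith [hcon 0, hcon 1, hcon 2]
  have hv1 : ‖EuclideanSpace.single i (1:ℝ)‖ = 1 := by simp
  set e : E3 := EuclideanSpace.single i (1:ℝ) with he
  have glow : (1 + 2 * C₁) / 3 ≤ g C₁ μ := by
    have hC11 : C₁ ≤ 1 := h12.trans h1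
    have step1 : (∫ r, (C₁ + (1 - C₁) * (inner ℝ r e : ℝ) ^ 2) ∂μ)
        ≤ ∫ r, Real.sqrt (C₁ ^ 2 + (1 - C₁ ^ 2) * (inner ℝ r e : ℝ) ^ 2) ∂μ := by
      refine integral_mono_ae ((integrable_const C₁).add ((intQ e hv1).const_mul _))
        (intF C₁ e h0 hC11 hv1) ?_
      filter_upwards [hsq e hv1] with r hr using ptwise_lower C₁ _ h0 hC11 hr
    have step0 : (∫ r, (C₁ + (1 - C₁) * (inner ℝ r e : ℝ) ^ 2) ∂μ)
        = C₁ + (1 - C₁) * ∫ r, (inner ℝ r e : ℝ) ^ 2 ∂μ := by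
      rw [integral_add (integrable_const C₁) ((intQ e hv1).const_mul _),
        integral_const, integral_const_mul]
      simp
    have step2 : (∫ r, Real.sqrt (C₁ ^ 2 + (1 - C₁ ^ 2) * (inner ℝ r e : ℝ) ^ 2) ∂μ) ≤ g C₁ μ := by
      have hmem : e ∈ unitSphere := by simp [unitSphere, he]
      exact le_ciSup (hbdd C₁ h0 hC11) (⟨e, hmem⟩ : unitSphere)
    have : C₁ + (1 - C₁) * (1/3) ≤ C₁ + (1 - C₁) * ∫ r, (inner ℝ r e : ℝ) ^ 2 ∂μ := by
      have h1C : (0:ℝ) ≤ 1 - C₁ := by linarith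
      nlinarith [mul_le_mul_of_nonneg_left hi h1C]
    linarith [step0 ▸ step1, step2, this]
  -- main case split
  rcases eq_or_lt_of_le (h12.trans h1) with hC1eq | hlt
  · have hC2eq : C₂ = 1 := le_antisymm h1 (hC1eq ▸ h12)
    rw [hC2eq, ← hC1eq]
    simp
  · set L := (1 - C₂) / (1 - C₁) with hL
    have hd : (0:ℝ) < 1 - C₁ := by linarith
    have hL0 : 0 ≤ L := div_nonneg (by linarith) hd.le
    have hL1 : L ≤ 1 := by rw [hL, div_le_one hd]; linarith
    have hLC : L * (1 - C₁) = 1 - C₂ := div_mul_cancel₀ _ hd.ne'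
    have gup : g C₂ μ ≤ L * g C₁ μ + (1 - L) := by
      refine ciSup_le fun v => ?_
      have hv : ‖(v : E3)‖ = 1 := by
        have := v.2; simpa [unitSphere] using this
      have hstep : (∫ r, Real.sqrt (C₂ ^ 2 + (1 - C₂ ^ 2) * (inner ℝ r (v : E3) : ℝ) ^ 2) ∂μ)
          ≤ ∫ r, (L * Real.sqrt (C₁ ^ 2 + (1 - C₁ ^ 2) * (inner ℝ r (v : E3) : ℝ) ^ 2)
              + (1 - L)) ∂μ := by
        refine integral_mono_ae (intF C₂ v (h0.trans h12) h1 hv)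
          (((intF C₁ v h0 hlt.le hv).const_mul L).add (integrable_const _)) ?_
        filter_upwards [hsq v hv] with r hr
        exact ptwise_convex C₁ C₂ _ h0 h12 h1 hlt hr
      have heq : (∫ r, (L * Real.sqrt (C₁ ^ 2 + (1 - C₁ ^ 2) * (inner ℝ r (v : E3) : ℝ) ^ 2)
            + (1 - L)) ∂μ)
          = L * (∫ r, Real.sqrt (C₁ ^ 2 + (1 - C₁ ^ 2) * (inner ℝ r (v : E3) : ℝ) ^ 2) ∂μ)
            + (1 - L) := by
        rw [integral_add ((intF C₁ v h0 hlt.le hv).const_mul L) (integrable_const _),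
          integral_const, integral_const_mul]
        simp
      have hle : (∫ r, Real.sqrt (C₁ ^ 2 + (1 - C₁ ^ 2) * (inner ℝ r (v : E3) : ℝ) ^ 2) ∂μ)
          ≤ g C₁ μ := le_ciSup (hbdd C₁ h0 hlt.le) v
      calc (∫ r, Real.sqrt (C₂ ^ 2 + (1 - C₂ ^ 2) * (inner ℝ r (v : E3) : ℝ) ^ 2) ∂μ)
          ≤ L * (∫ r, Real.sqrt (C₁ ^ 2 + (1 - C₁ ^ 2) * (inner ℝ r (v : E3) : ℝ) ^ 2) ∂μ)
            + (1 - L) := heq ▸ hstep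
      _ ≤ L * g C₁ μ + (1 - L) := by
          exact add_le_add_left (mul_le_mul_of_nonneg_left hle hL0) _
    nlinarith [gup, glow, hLC, hL0, hL1, mul_le_mul_of_nonneg_left glow (sub_nonneg.mpr hL1)]
end
end

section
/- Let μ be a Borel probability measure on the unit sphere S² of ℝ³ whose barycenter vanishes, i.e. the vector-valued integral ∫_{S²} r dμ(r) equals 0. Then g*(μ) = 2 · sup over Borel subsets R of S² of ‖∫_R r dμ(r)‖ = 2 · sup over unit vectors v ∈ S² of ‖∫_{{r ∈ S² : ⟨r,v⟩ ≥ 0}} r dμ(r)‖. -/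
open MeasureTheory Real
open scoped ENNReal

noncomputable section

/-- `gstar μ` is the supremum over unit vectors `v` of `∫ |⟨r,v⟩| dμ(r)`. -/
def gstar (μ : Measure E3) : ℝ :=
  ⨆ v : unitSphere, ∫ r, |(inner ℝ r (v : E3) : ℝ)| ∂μ

/-- If `μ` is a Borel probability measure on the unit sphere S² of ℝ³ with vanishing
barycenter `∫ r dμ(r) = 0`, then
`g*(μ) = 2 · sup_{R Borel} ‖∫_R r dμ‖ = 2 · sup_{v unit} ‖∫_{⟨r,v⟩ ≥ 0} r dμ‖`. -/
theorem gstar_eq_two_sup (μ : Measure E3) [IsProbabilityMeasure μ] (hμ : μ unitSphereᶜ = 0)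
    (hbary : (∫ r, r ∂μ) = 0) :
    gstar μ = 2 * ⨆ R : Set E3, ⨆ _ : MeasurableSet R, ‖∫ r in R, r ∂μ‖ ∧
    gstar μ = 2 * ⨆ v : unitSphere, ‖∫ r in {r : E3 | 0 ≤ (inner ℝ r (v : E3) : ℝ)}, r ∂μ‖ := by
  have hae : ∀ᵐ r ∂μ, ‖r‖ = 1 := by
    have h : ∀ᵐ r ∂μ, r ∈ unitSphere := by
      rw [MeasureTheory.ae_iff]
      simpa [Set.compl_def] using hμ
    exact h.mono fun r hr => by simpa [unitSphere, mem_sphere_zero_iff_norm] using hr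
  have hid : Integrable (fun r : E3 => r) μ :=
    (integrable_const (1 : ℝ)).mono' aestronglyMeasurable_id (hae.mono fun r h => by simp [h])
  have hfc : ∀ v : E3, Continuous (fun r : E3 => (inner ℝ r v : ℝ)) :=
    fun v => continuous_id.inner continuous_const
  have hfint : ∀ v : E3, Integrable (fun r : E3 => (inner ℝ r v : ℝ)) μ := by
    intro v
    refine (integrable_const ‖v‖).mono' (hfc v).aestronglyMeasurable (hae.mono fun r h => ?_)
    calc ‖(inner ℝ r v : ℝ)‖ = |(inner ℝ r v : ℝ)| := rfl
      _ ≤ ‖r‖ * ‖v‖ := abs_real_inner_le_norm r v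
      _ = ‖v‖ := by rw [h, one_mul]
  have hpos : ∀ v : E3, Integrable (fun r : E3 => max (inner ℝ r v : ℝ) 0) μ :=
    fun v => (hfint v).pos_part
  have hmeas : ∀ v : E3, MeasurableSet {r : E3 | 0 ≤ (inner ℝ r v : ℝ)} :=
    fun v => (isClosed_le continuous_const (hfc v)).measurableSet
  have hinner_set : ∀ (v : E3) (R : Set E3),
      ∫ r in R, (inner ℝ r v : ℝ) ∂μ = (inner ℝ (∫ r in R, r ∂μ) v : ℝ) := by
    intro v R
    calc ∫ r in R, (inner ℝ r v : ℝ) ∂μ = ∫ r in R, (inner ℝ v r : ℝ) ∂μ := by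
          simp_rw [real_inner_comm]
      _ = (inner ℝ v (∫ r in R, r ∂μ) : ℝ) := integral_inner (hid.restrict) v
      _ = (inner ℝ (∫ r in R, r ∂μ) v : ℝ) := real_inner_comm _ _
  have h0 : ∀ v : E3, ∫ r, (inner ℝ r v : ℝ) ∂μ = 0 := by
    intro v
    have h := hinner_set v Set.univ
    simpa [hbary] using h
  have habs : ∀ v : E3, ∫ r, |(inner ℝ r v : ℝ)| ∂μ = 2 * ∫ r, max (inner ℝ r v : ℝ) 0 ∂μ := by
    intro v
    have hptw : ∀ r : E3, |(inner ℝ r v : ℝ)| = 2 * max (inner ℝ r v : ℝ) 0 - (inner ℝ r v : ℝ) := by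
      intro r; rcases le_total (0 : ℝ) (inner ℝ r v) with h | h
      · rw [abs_of_nonneg h, max_eq_left h]; ring
      · rw [abs_of_nonpos h, max_eq_right h]; ring
    calc ∫ r, |(inner ℝ r v : ℝ)| ∂μ
        = ∫ r, (2 * max (inner ℝ r v : ℝ) 0 - (inner ℝ r v : ℝ)) ∂μ := by simp_rw [hptw]
      _ = (∫ r, 2 * max (inner ℝ r v : ℝ) 0 ∂μ) - ∫ r, (inner ℝ r v : ℝ) ∂μ :=
          integral_sub ((hpos v).const_mul 2) (hfint v)
      _ = 2 * ∫ r, max (inner ℝ r v : ℝ) 0 ∂μ := by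
          rw [integral_const_mul, h0 v, sub_zero]
  have hset : ∀ v : E3, ∫ r, max (inner ℝ r v : ℝ) 0 ∂μ
      = ∫ r in {r : E3 | 0 ≤ (inner ℝ r v : ℝ)}, (inner ℝ r v : ℝ) ∂μ := by
    intro v
    rw [← integral_indicator (hmeas v)]
    refine integral_congr_ae (Filter.Eventually.of_forall fun r => ?_)
    simp only [Set.indicator_apply, Set.mem_setOf_eq]
    by_cases h : 0 ≤ (inner ℝ r v : ℝ)
    · rw [if_pos h]; exact max_eq_left h
    · rw [if_neg h]; exact max_eq_right (le_of_not_ge h)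
  have hRle2 : ∀ (v : E3) (R : Set E3),
      ∫ r in R, (inner ℝ r v : ℝ) ∂μ ≤ ∫ r, max (inner ℝ r v : ℝ) 0 ∂μ := by
    intro v R
    calc ∫ r in R, (inner ℝ r v : ℝ) ∂μ ≤ ∫ r in R, max (inner ℝ r v : ℝ) 0 ∂μ :=
          integral_mono ((hfint v).restrict) ((hpos v).restrict) fun r => le_max_left _ _
      _ ≤ ∫ r, max (inner ℝ r v : ℝ) 0 ∂μ :=
          setIntegral_le_integral (hpos v) (Filter.Eventually.of_forall fun r => le_max_right _ _)
  have hnorm_le : ∀ R : Set E3, ‖∫ r in R, r ∂μ‖ ≤ 1 := by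
    intro R
    calc ‖∫ r in R, r ∂μ‖ ≤ ∫ r in R, ‖r‖ ∂μ := norm_integral_le_integral_norm _
      _ ≤ ∫ r, ‖r‖ ∂μ :=
          setIntegral_le_integral hid.norm (Filter.Eventually.of_forall fun r => norm_nonneg r)
      _ = ∫ r, (1 : ℝ) ∂μ := integral_congr_ae (hae.mono fun r h => h)
      _ = 1 := by simp
  have hI_le_one : ∀ v : unitSphere, (∫ r, |(inner ℝ r (v : E3) : ℝ)| ∂μ) ≤ 1 := by
    intro v
    have hv1 : ‖(v : E3)‖ = 1 := by
      have h2 := v.2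
      simp only [unitSphere, mem_sphere_zero_iff_norm] at h2
      exact h2
    calc (∫ r, |(inner ℝ r (v : E3) : ℝ)| ∂μ) ≤ ∫ r, (1 : ℝ) ∂μ := by
          refine integral_mono_ae (hfint _).abs (integrable_const 1) (hae.mono fun r h => ?_)
          calc |(inner ℝ r (v : E3) : ℝ)| ≤ ‖r‖ * ‖(v : E3)‖ := abs_real_inner_le_norm _ _
            _ = 1 := by rw [h, hv1, one_mul]
      _ = 1 := by simp
  have hbddI : BddAbove (Set.range fun v : unitSphere => ∫ r, |(inner ℝ r (v : E3) : ℝ)| ∂μ) := by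
    refine ⟨1, ?_⟩
    rintro x ⟨v, rfl⟩
    exact hI_le_one v
  have hgs_nonneg : 0 ≤ gstar μ :=
    Real.iSup_nonneg fun v => integral_nonneg fun r => abs_nonneg _
  have hRle : ∀ R : Set E3, 2 * ‖∫ r in R, r ∂μ‖ ≤ gstar μ := by
    intro R
    set m := ∫ r in R, r ∂μ with hm
    by_cases hm0 : m = 0
    · simpa [hm0] using hgs_nonneg
    · set v : E3 := ‖m‖⁻¹ • m with hv
      have hvnorm : ‖v‖ = 1 := by
        rw [hv, norm_smul, norm_inv, norm_norm, inv_mul_cancel₀ (norm_ne_zero_iff.mpr hm0)]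
      have hmv : ‖m‖ = (inner ℝ m v : ℝ) := by
        rw [hv, real_inner_smul_right, real_inner_self_eq_norm_sq]
        field_simp [norm_ne_zero_iff.mpr hm0]
      have hvmem : v ∈ unitSphere := by
        simp only [unitSphere, mem_sphere_zero_iff_norm]; exact hvnorm
      calc 2 * ‖m‖ = 2 * (inner ℝ m v : ℝ) := by rw [hmv]
        _ = 2 * ∫ r in R, (inner ℝ r v : ℝ) ∂μ := by rw [hinner_set v R]
        _ ≤ 2 * ∫ r, max (inner ℝ r v : ℝ) 0 ∂μ := by linarith [hRle2 v R]
        _ = ∫ r, |(inner ℝ r v : ℝ)| ∂μ := (habs v).symm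
        _ ≤ gstar μ := le_ciSup hbddI (⟨v, hvmem⟩ : unitSphere)
  have hkey : ∀ v : unitSphere, (∫ r, |(inner ℝ r (v : E3) : ℝ)| ∂μ)
      ≤ 2 * ‖∫ r in {r : E3 | 0 ≤ (inner ℝ r (v : E3) : ℝ)}, r ∂μ‖ := by
    intro v
    have hv1 : ‖(v : E3)‖ = 1 := by
      have h2 := v.2
      simp only [unitSphere, mem_sphere_zero_iff_norm] at h2
      exact h2
    rw [habs, hset, hinner_set]
    have h1 : (inner ℝ (∫ r in {r : E3 | 0 ≤ (inner ℝ r (v : E3) : ℝ)}, r ∂μ) (v : E3) : ℝ)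
        ≤ ‖∫ r in {r : E3 | 0 ≤ (inner ℝ r (v : E3) : ℝ)}, r ∂μ‖ := by
      calc (inner ℝ (∫ r in {r : E3 | 0 ≤ (inner ℝ r (v : E3) : ℝ)}, r ∂μ) (v : E3) : ℝ)
          ≤ ‖∫ r in {r : E3 | 0 ≤ (inner ℝ r (v : E3) : ℝ)}, r ∂μ‖ * ‖(v : E3)‖ :=
            real_inner_le_norm _ _
        _ = ‖∫ r in {r : E3 | 0 ≤ (inner ℝ r (v : E3) : ℝ)}, r ∂μ‖ := by rw [hv1, mul_one]
    linarith
  -- bounds for B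
  have hBdd_inner : ∀ R : Set E3, (⨆ _ : MeasurableSet R, ‖∫ r in R, r ∂μ‖) ≤ 1 :=
    fun R => Real.iSup_le (fun _ => hnorm_le R) zero_le_one
  have hBddB : BddAbove (Set.range fun R : Set E3 =>
      ⨆ _ : MeasurableSet R, ‖∫ r in R, r ∂μ‖) := by
    refine ⟨1, ?_⟩; rintro x ⟨R, rfl⟩; exact hBdd_inner R
  have hleB : ∀ R : Set E3, MeasurableSet R →
      ‖∫ r in R, r ∂μ‖ ≤ ⨆ R : Set E3, ⨆ _ : MeasurableSet R, ‖∫ r in R, r ∂μ‖ := by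
    intro R hR
    have hconst : (⨆ _ : MeasurableSet R, ‖∫ r in R, r ∂μ‖) = ‖∫ r in R, r ∂μ‖ := by
      haveI : Nonempty (MeasurableSet R) := ⟨hR⟩
      exact ciSup_const
    rw [← hconst]
    exact le_ciSup hBddB R
  have hBnonneg : 0 ≤ ⨆ R : Set E3, ⨆ _ : MeasurableSet R, ‖∫ r in R, r ∂μ‖ :=
    Real.iSup_nonneg fun R => Real.iSup_nonneg fun _ => norm_nonneg _
  have hBddC : BddAbove (Set.range fun v : unitSphere =>
      ‖∫ r in {r : E3 | 0 ≤ (inner ℝ r (v : E3) : ℝ)}, r ∂μ‖) := by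
    refine ⟨1, ?_⟩; rintro x ⟨v, rfl⟩; exact hnorm_le _
  have hCnonneg : 0 ≤ ⨆ v : unitSphere, ‖∫ r in {r : E3 | 0 ≤ (inner ℝ r (v : E3) : ℝ)}, r ∂μ‖ :=
    Real.iSup_nonneg fun v => norm_nonneg _
  constructor
  · apply le_antisymm
    · rw [gstar]
      refine Real.iSup_le (fun v => ?_) (by linarith)
      calc (∫ r, |(inner ℝ r (v : E3) : ℝ)| ∂μ)
          ≤ 2 * ‖∫ r in {r : E3 | 0 ≤ (inner ℝ r (v : E3) : ℝ)}, r ∂μ‖ := hkey v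
        _ ≤ 2 * ⨆ R : Set E3, ⨆ _ : MeasurableSet R, ‖∫ r in R, r ∂μ‖ := by
            have := hleB _ (hmeas (v : E3)); linarith
    · have hB : (⨆ R : Set E3, ⨆ _ : MeasurableSet R, ‖∫ r in R, r ∂μ‖) ≤ gstar μ / 2 := by
        refine Real.iSup_le (fun R => ?_) (by linarith)
        refine Real.iSup_le (fun _ => ?_) (by linarith)
        linarith [hRle R]
      linarith
  · apply le_antisymm
    · rw [gstar]
      refine Real.iSup_le (fun v => ?_) (by linarith)
      calc (∫ r, |(inner ℝ r (v : E3) : ℝ)| ∂μ)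
          ≤ 2 * ‖∫ r in {r : E3 | 0 ≤ (inner ℝ r (v : E3) : ℝ)}, r ∂μ‖ := hkey v
        _ ≤ 2 * ⨆ v : unitSphere, ‖∫ r in {r : E3 | 0 ≤ (inner ℝ r (v : E3) : ℝ)}, r ∂μ‖ := by
            have := le_ciSup hBddC v; linarith
    · have hC : (⨆ v : unitSphere, ‖∫ r in {r : E3 | 0 ≤ (inner ℝ r (v : E3) : ℝ)}, r ∂μ‖)
          ≤ gstar μ / 2 := by
        refine Real.iSup_le (fun v => ?_) (by linarith)
        linarith [hRle {r : E3 | 0 ≤ (inner ℝ r (v : E3) : ℝ)}]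
      linarith
end
end

section
/- Let S = {r₁,…,r_M} be a set of M distinct unit vectors in ℝ³ that is center symmetric (r ∈ S implies −r ∈ S), and let μ be the uniform distribution on S. Then g*(μ) = (1/M)·max over unit vectors v of Σ_{j=1}^M |⟨r_j,v⟩| = (2/M)·max over subsets S' ⊆ S of ‖Σ_{r ∈ S'} r‖. Moreover, if a subset S' attains the maximum of ‖Σ_{r ∈ S'} r‖, then S' contains exactly M/2 vectors, and writing η(S') = Σ_{r ∈ S'} r, one has ⟨η(S'), r⟩ ≥ 1/2 for all r ∈ S' and ⟨η(S'), r⟩ ≤ −1/2 for all r ∈ S \ S'. -/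
open MeasureTheory Real
open scoped ENNReal

noncomputable section

/-- Let `S` be a (nonempty) finite set of unit vectors in ℝ³ that is center symmetric, and let
`μ` be the uniform distribution on `S`.  Then
`g*(μ) = (1/M) · sup_v Σ_{r ∈ S} |⟨r,v⟩| = (2/M) · max_{S' ⊆ S} ‖Σ_{r ∈ S'} r‖` where `M = |S|`.
Moreover, any maximizing subset `S'` has exactly `M/2` elements and, with `η = Σ_{r ∈ S'} r`,
satisfies `⟨η,r⟩ ≥ 1/2` for `r ∈ S'` and `⟨η,r⟩ ≤ −1/2` for `r ∈ S \ S'`. -/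
theorem gstar_center_symmetric (S : Finset E3) (hne : S.Nonempty)
    (hunit : ∀ r ∈ S, ‖r‖ = 1) (hsym : ∀ r ∈ S, -r ∈ S) :
    gstar ((S.card : ℝ≥0∞)⁻¹ • ∑ r ∈ S, Measure.dirac r)
        = (1 / S.card) * ⨆ v : unitSphere, ∑ r ∈ S, |(inner ℝ r (v : E3) : ℝ)| ∧
    gstar ((S.card : ℝ≥0∞)⁻¹ • ∑ r ∈ S, Measure.dirac r)
        = (2 / S.card) * ⨆ S' ∈ S.powerset, ‖∑ r ∈ S', r‖ ∧
    ∀ S' ∈ S.powerset, (∀ S'' ∈ S.powerset, ‖∑ r ∈ S'', r‖ ≤ ‖∑ r ∈ S', r‖) →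
      2 * S'.card = S.card ∧
      (∀ r ∈ S', (1 : ℝ) / 2 ≤ (inner ℝ (∑ x ∈ S', x) r : ℝ)) ∧
      (∀ r ∈ S, r ∉ S' → (inner ℝ (∑ x ∈ S', x) r : ℝ) ≤ -(1 / 2)) := by
  haveI : DecidableEq E3 := Classical.decEq _
  haveI : Nonempty unitSphere := by
    refine ⟨⟨EuclideanSpace.single 0 1, ?_⟩⟩
    simp [unitSphere, EuclideanSpace.norm_single]
  have hMpos : (0:ℝ) < S.card := by exact_mod_cast Finset.card_pos.mpr hne
  -- sum of all vectors is zero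
  have hsum0 : ∑ r ∈ S, r = 0 := by
    apply Finset.sum_involution (fun a _ => -a) (fun a ha => by simp)
      (fun a ha hn hc => ?_) (fun a ha => hsym a ha) (fun a ha => by simp)
    exfalso; apply hn
    have h2 : a + a = a + -a := by rw [hc]
    have h3 : (2:ℝ) • a = 0 := by rw [two_smul]; simpa using h2
    simpa using (smul_eq_zero.1 h3).resolve_left (by norm_num)
  set K : E3 → ℝ := fun v => ∑ r ∈ S, |(inner ℝ r v : ℝ)| with hK
  set G : Finset E3 → ℝ := fun S' => ⨆ _ : S' ∈ S.powerset, ‖∑ r ∈ S', r‖ with hG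
  have hKnonneg : ∀ v, 0 ≤ K v := fun v => Finset.sum_nonneg fun r _ => abs_nonneg _
  have hKbound : ∀ v : unitSphere, K v ≤ S.card := by
    intro v
    calc K v ≤ ∑ r ∈ S, 1 := Finset.sum_le_sum fun r hr => by
          have := abs_real_inner_le_norm r (v : E3)
          have hv : ‖(v : E3)‖ = 1 := by
            have := v.2; simpa [unitSphere, mem_sphere_zero_iff_norm] using this
          rw [hunit r hr, hv] at this; simpa using this
      _ = S.card := by simp
  have hbddA : BddAbove (Set.range fun v : unitSphere => K v) :=
    ⟨S.card, by rintro x ⟨v, rfl⟩; exact hKbound v⟩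
  have hGbound : ∀ S', G S' ≤ S.card := by
    intro S'
    refine Real.iSup_le (fun h => ?_) hMpos.le
    have hsub := Finset.mem_powerset.1 h
    calc ‖∑ r ∈ S', r‖ ≤ ∑ r ∈ S', ‖r‖ := norm_sum_le _ _
      _ = ∑ r ∈ S', 1 := Finset.sum_congr rfl fun r hr => hunit r (hsub hr)
      _ = S'.card := by simp
      _ ≤ S.card := by exact_mod_cast Finset.card_le_card hsub
  have hbddB : BddAbove (Set.range G) := ⟨S.card, by rintro x ⟨S', rfl⟩; exact hGbound S'⟩
  have hGval : ∀ S' ∈ S.powerset, G S' = ‖∑ r ∈ S', r‖ := fun S' h => ciSup_pos h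
  set B : ℝ := ⨆ S', G S' with hB
  have hBnonneg : 0 ≤ B := by
    have h0 : G ∅ = 0 := by rw [hGval ∅ (Finset.empty_mem_powerset S)]; simp
    have := le_ciSup hbddB (∅ : Finset E3)
    rw [h0] at this; exact this
  -- key lower bound: 2⟨η(S'),v⟩ ≤ K v for any S' ⊆ S, v
  have hkey : ∀ S' ⊆ S, ∀ v : E3, 2 * (inner ℝ (∑ r ∈ S', r) v : ℝ) ≤ K v := by
    intro S' hsub v
    have hsplit : ∑ r ∈ S', |(inner ℝ r v : ℝ)| + ∑ r ∈ S \ S', |(inner ℝ r v : ℝ)| = K v := by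
      rw [hK, add_comm]; exact Finset.sum_sdiff hsub
    have hzero : (∑ r ∈ S', (inner ℝ r v : ℝ)) + ∑ r ∈ S \ S', (inner ℝ r v : ℝ) = 0 := by
      rw [add_comm, Finset.sum_sdiff hsub, ← sum_inner, hsum0, inner_zero_left]
    have h1 : ∑ r ∈ S', (inner ℝ r v : ℝ) ≤ ∑ r ∈ S', |(inner ℝ r v : ℝ)| :=
      Finset.sum_le_sum fun r _ => le_abs_self _
    have h2 : ∑ r ∈ S \ S', -(inner ℝ r v : ℝ) ≤ ∑ r ∈ S \ S', |(inner ℝ r v : ℝ)| :=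
      Finset.sum_le_sum fun r _ => neg_le_abs _
    rw [Finset.sum_neg_distrib] at h2
    have hη : (inner ℝ (∑ r ∈ S', r) v : ℝ) = ∑ r ∈ S', (inner ℝ r v : ℝ) := sum_inner _ _ _
    linarith
  -- upper bound: K v ≤ 2 B for unit v
  have hupper : ∀ v : unitSphere, K v ≤ 2 * B := by
    intro v
    set S₀ := S.filter (fun r => 0 ≤ (inner ℝ r (v:E3) : ℝ)) with hS₀
    have hsub : S₀ ⊆ S := Finset.filter_subset _ _
    have hsplit : ∑ r ∈ S₀, |(inner ℝ r (v:E3) : ℝ)| + ∑ r ∈ S \ S₀, |(inner ℝ r (v:E3) : ℝ)|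
        = K (v:E3) := by rw [hK, add_comm]; exact Finset.sum_sdiff hsub
    have hpos : ∀ r ∈ S₀, |(inner ℝ r (v:E3) : ℝ)| = (inner ℝ r (v:E3) : ℝ) := fun r hr =>
      abs_of_nonneg (Finset.mem_filter.1 hr).2
    have hneg : ∀ r ∈ S \ S₀, |(inner ℝ r (v:E3) : ℝ)| = -(inner ℝ r (v:E3) : ℝ) := by
      intro r hr
      have := Finset.mem_sdiff.1 hr
      have : (inner ℝ r (v:E3) : ℝ) < 0 := by
        by_contra hcon
        exact this.2 (Finset.mem_filter.2 ⟨this.1, not_lt.1 hcon⟩)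
      exact abs_of_neg this
    have hzero : (∑ r ∈ S₀, (inner ℝ r (v:E3) : ℝ)) + ∑ r ∈ S \ S₀, (inner ℝ r (v:E3) : ℝ) = 0 := by
      rw [add_comm, Finset.sum_sdiff hsub, ← sum_inner, hsum0, inner_zero_left]
    have hKeq : K (v:E3) = 2 * (inner ℝ (∑ r ∈ S₀, r) (v:E3) : ℝ) := by
      rw [← hsplit, Finset.sum_congr rfl hpos, Finset.sum_congr rfl hneg, sum_inner]
      have : ∑ r ∈ S \ S₀, -(inner ℝ r (v:E3) : ℝ) = -∑ r ∈ S \ S₀, (inner ℝ r (v:E3) : ℝ) :=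
        Finset.sum_neg_distrib _
      rw [this]
      linarith [hzero]
    rw [hKeq]
    have hv : ‖(v : E3)‖ = 1 := by
      have := v.2; simpa [unitSphere, mem_sphere_zero_iff_norm] using this
    have h1 : (inner ℝ (∑ r ∈ S₀, r) (v:E3) : ℝ) ≤ ‖∑ r ∈ S₀, r‖ := by
      calc (inner ℝ (∑ r ∈ S₀, r) (v:E3) : ℝ) ≤ ‖∑ r ∈ S₀, r‖ * ‖(v:E3)‖ :=
        real_inner_le_norm _ _
      _ = ‖∑ r ∈ S₀, r‖ := by rw [hv, mul_one]
    have h2 : ‖∑ r ∈ S₀, r‖ ≤ B := by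
      have := le_ciSup hbddB S₀
      rwa [hGval S₀ (Finset.mem_powerset.2 hsub)] at this
    linarith
  -- lower bound: 2 * G S' ≤ A
  set A : ℝ := ⨆ v : unitSphere, K v with hA
  have hAnonneg : 0 ≤ A := by
    obtain ⟨v⟩ := (inferInstance : Nonempty unitSphere)
    exact le_trans (hKnonneg v) (le_ciSup hbddA v)
  have hlower : ∀ S', 2 * G S' ≤ A := by
    intro S'
    rw [Real.mul_iSup_of_nonneg (by norm_num : (0:ℝ) ≤ 2)]
    refine Real.iSup_le (fun h => ?_) hAnonneg
    have hsub := Finset.mem_powerset.1 h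
    set η := ∑ r ∈ S', r with hη
    rcases eq_or_ne η 0 with h0 | h0
    · rw [h0]; simpa using hAnonneg
    · set v : E3 := ‖η‖⁻¹ • η with hv
      have hnv : ‖v‖ = 1 := by
        rw [hv, norm_smul, norm_inv, norm_norm, inv_mul_cancel₀ (norm_ne_zero_iff.2 h0)]
      have hvmem : v ∈ unitSphere := by
        simpa [unitSphere, mem_sphere_zero_iff_norm] using hnv
      have hinner : (inner ℝ η v : ℝ) = ‖η‖ := by
        rw [hv, real_inner_smul_right, real_inner_self_eq_norm_mul_norm]
        field_simp
      have := hkey S' hsub v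
      rw [← hη, hinner] at this
      exact le_trans this (le_ciSup hbddA ⟨v, hvmem⟩)
  have hAB : A = 2 * B := by
    apply le_antisymm
    · exact Real.iSup_le (fun v => hupper v) (by linarith)
    · rw [Real.mul_iSup_of_nonneg (by norm_num : (0:ℝ) ≤ 2)]
      exact Real.iSup_le hlower hAnonneg
  -- compute gstar
  have hgstar : gstar ((S.card : ℝ≥0∞)⁻¹ • ∑ r ∈ S, Measure.dirac r) = (1 / S.card) * A := by
    rw [gstar]
    have hint : ∀ v : unitSphere,
        (∫ r, |(inner ℝ r (v : E3) : ℝ)| ∂((S.card : ℝ≥0∞)⁻¹ • ∑ r ∈ S, Measure.dirac r))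
          = (1 / S.card) * K (v : E3) := by
      intro v
      rw [integral_smul_measure, integral_finset_sum_measure
        (fun i _ => (integrable_congr (ae_eq_dirac _)).mpr (integrable_const _))]
      simp only [integral_dirac]
      rw [ENNReal.toReal_inv, ENNReal.toReal_natCast, smul_eq_mul, one_div]
    calc (⨆ v : unitSphere, ∫ r, |(inner ℝ r (v : E3) : ℝ)|
            ∂((S.card : ℝ≥0∞)⁻¹ • ∑ r ∈ S, Measure.dirac r))
        = ⨆ v : unitSphere, (1 / S.card) * K (v : E3) := by
          congr 1; ext v; exact hint v
      _ = (1 / S.card) * A := by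
          rw [hA, Real.mul_iSup_of_nonneg (by positivity)]
  refine ⟨hgstar, ?_, ?_⟩
  · rw [hgstar, hAB]; ring
  -- third part
  · intro S' hS' hmax
    have hsub := Finset.mem_powerset.1 hS'
    set η := ∑ x ∈ S', x with hη
    have h1 : ∀ r ∈ S', (1:ℝ)/2 ≤ (inner ℝ η r : ℝ) := by
      intro r hr
      have hmem : S'.erase r ∈ S.powerset :=
        Finset.mem_powerset.2 ((Finset.erase_subset r S').trans hsub)
      have hle := hmax _ hmem
      rw [Finset.sum_erase_eq_sub hr, ← hη] at hle
      have hsq : ‖η - r‖^2 ≤ ‖η‖^2 := by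
        have := mul_self_le_mul_self (norm_nonneg _) hle
        nlinarith [norm_nonneg (η - r), norm_nonneg η]
      rw [norm_sub_sq_real, hunit r (hsub hr)] at hsq
      linarith
    have h2 : ∀ r ∈ S, r ∉ S' → (inner ℝ η r : ℝ) ≤ -(1/2) := by
      intro r hrS hr
      have hmem : insert r S' ∈ S.powerset :=
        Finset.mem_powerset.2 (Finset.insert_subset hrS hsub)
      have hle := hmax _ hmem
      rw [Finset.sum_insert hr, ← hη] at hle
      have hsq : ‖r + η‖^2 ≤ ‖η‖^2 := by
        have := mul_self_le_mul_self (norm_nonneg _) hle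
        nlinarith [norm_nonneg (r + η), norm_nonneg η]
      rw [norm_add_sq_real, hunit r hrS, real_inner_comm] at hsq
      linarith
    refine ⟨?_, h1, h2⟩
    have hcard : S'.card = (S \ S').card := by
      apply Finset.card_bij (fun a _ => -a)
      · intro a ha
        refine Finset.mem_sdiff.2 ⟨hsym a (hsub ha), fun hcon => ?_⟩
        have ha1 := h1 a ha
        have ha2 := h1 (-a) hcon
        rw [inner_neg_right] at ha2
        linarith
      · intro a ha b hb hab
        simpa using hab
      · intro b hb
        obtain ⟨hbS, hbS'⟩ := Finset.mem_sdiff.1 hb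
        refine ⟨-b, ?_, by simp⟩
        by_contra hcon
        have hb1 := h2 b hbS hbS'
        have hb2 := h2 (-b) (hsym b hbS) hcon
        rw [inner_neg_right] at hb2
        linarith
    have hcs := Finset.card_sdiff_of_subset hsub
    have hle := Finset.card_le_card hsub
    omega
end
end

section
/- Let r₁, r₂ be unit vectors in ℝ³ with ⟨r₁,r₂⟩ = cos α ≥ 0, and let μ = (δ_{r₁} + δ_{r₂})/2 be the uniform distribution on {r₁, r₂}. Then for all C ∈ [0,1], g(C,μ) = √((1 + C² + (1−C²)·cos α)/2). In particular, if r₁ and r₂ are orthogonal, g(C,μ) = √((1+C²)/2). -/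
open MeasureTheory Real
open scoped ENNReal

noncomputable section

lemma key_inner_sq_bound (r₁ r₂ v : E3) (h₁ : ‖r₁‖ = 1) (h₂ : ‖r₂‖ = 1) (hv : ‖v‖ = 1)
    (hc : 0 ≤ (inner ℝ r₁ r₂ : ℝ)) :
    (inner ℝ r₁ v : ℝ) ^ 2 + (inner ℝ r₂ v : ℝ) ^ 2 ≤ 1 + (inner ℝ r₁ r₂ : ℝ) := by
  set c : ℝ := inner ℝ r₁ r₂ with hcdef
  set x : ℝ := inner ℝ r₁ v with hxdef
  set y : ℝ := inner ℝ r₂ v with hydef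
  have hP : ∀ a b : ℝ, 0 ≤ a^2 + b^2 + 1 + 2*a*b*c + 2*a*x + 2*b*y := by
    intro a b
    have h := real_inner_self_nonneg (x := a • r₁ + b • r₂ + v)
    simp only [inner_add_left, inner_add_right, real_inner_smul_left, real_inner_smul_right] at h
    rw [real_inner_self_eq_norm_sq, real_inner_self_eq_norm_sq, real_inner_self_eq_norm_sq,
      h₁, h₂, hv] at h
    have hcs : (inner ℝ r₂ r₁ : ℝ) = c := (real_inner_comm r₁ r₂).symm ▸ rfl
    have hxs : (inner ℝ v r₁ : ℝ) = x := (real_inner_comm r₁ v).symm ▸ rfl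
    have hys : (inner ℝ v r₂ : ℝ) = y := (real_inner_comm r₂ v).symm ▸ rfl
    rw [hcs, hxs, hys] at h
    nlinarith [h]
  have hc1 : c ≤ 1 := by
    have := real_inner_le_norm r₁ r₂; rw [h₁, h₂] at this; linarith
  rcases eq_or_lt_of_le hc1 with heq | hlt
  · have hn : ‖r₁ - r₂‖ ^ 2 = 0 := by
      rw [norm_sub_pow_two_real, h₁, h₂, ← hcdef, heq]; ring
    have hr : r₁ = r₂ := by
      have h0 : ‖r₁ - r₂‖ = 0 := by
        have := sq_eq_zero_iff.mp hn; exact this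
      exact sub_eq_zero.mp (norm_eq_zero.mp h0)
    have hxy : y = x := by rw [hydef, hxdef, hr]
    have hx1 : x ^ 2 ≤ 1 := by
      have := abs_real_inner_le_norm r₁ v
      rw [h₁, hv] at this
      nlinarith [sq_abs x, this, abs_nonneg x]
    rw [hxy, ← heq]; nlinarith
  · have h1c : (0:ℝ) < 1 - c^2 := by nlinarith
    set t : ℝ := (1 - c^2)⁻¹ with htdef
    have ht : t * (1 - c^2) = 1 := inv_mul_cancel₀ (by linarith)
    have ht2 : t^2 * (1 - c^2) = t := by
      rw [pow_two, mul_assoc, ht, mul_one]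
    have h := hP ((c*y - x)*t) ((c*x - y)*t)
    have ht0 : 0 ≤ t := le_of_lt (inv_pos.mpr h1c)
    have hK : x^2 + y^2 - 2*c*x*y ≤ 1 - c^2 := by
      have hQ : 0 ≤ 1 - t * (x^2 + y^2 - 2*c*x*y) := by nlinarith [h, ht2, ht]
      nlinarith [mul_le_mul_of_nonneg_right hQ (le_of_lt h1c), ht]
    nlinarith [hK, mul_nonneg hc (sq_nonneg (x - y))]

lemma integrable_dirac' (f : E3 → ℝ) (hf : Continuous f) (a : E3) :
    Integrable f (Measure.dirac a) := by
  refine ⟨hf.aestronglyMeasurable, ?_⟩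
  rw [HasFiniteIntegral, lintegral_dirac]
  exact ENNReal.coe_lt_top

/-- Let `r₁, r₂` be unit vectors in ℝ³ with `⟨r₁,r₂⟩ = cos α ≥ 0` and let
`μ = (δ_{r₁} + δ_{r₂})/2`.  Then for all `C ∈ [0,1]`,
`g(C,μ) = √((1 + C² + (1−C²)·cos α)/2)`; in particular, if `r₁ ⊥ r₂` then
`g(C,μ) = √((1+C²)/2)`. -/
theorem g_two_settings (r₁ r₂ : E3) (h₁ : ‖r₁‖ = 1) (h₂ : ‖r₂‖ = 1)
    (α : ℝ) (hα : (inner ℝ r₁ r₂ : ℝ) = Real.cos α) (hcos : 0 ≤ Real.cos α)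
    (C : ℝ) (hC : C ∈ Set.Icc (0 : ℝ) 1) :
    g C ((2 : ℝ≥0∞)⁻¹ • (Measure.dirac r₁ + Measure.dirac r₂))
        = Real.sqrt ((1 + C ^ 2 + (1 - C ^ 2) * Real.cos α) / 2) ∧
    ((inner ℝ r₁ r₂ : ℝ) = 0 →
      g C ((2 : ℝ≥0∞)⁻¹ • (Measure.dirac r₁ + Measure.dirac r₂))
        = Real.sqrt ((1 + C ^ 2) / 2)) := by
  obtain ⟨hC0, hC1⟩ := hC
  have hs0 : 0 ≤ 1 - C ^ 2 := by nlinarith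
  have hc1 : Real.cos α ≤ 1 := Real.cos_le_one α
  set T : ℝ := Real.sqrt ((1 + C ^ 2 + (1 - C ^ 2) * Real.cos α) / 2) with hTdef
  have hT2 : T ^ 2 = (1 + C ^ 2 + (1 - C ^ 2) * Real.cos α) / 2 := by
    rw [hTdef, sq_sqrt]
    have : 0 ≤ (1 - C ^ 2) * Real.cos α := mul_nonneg hs0 hcos
    nlinarith
  have hT0 : 0 ≤ T := Real.sqrt_nonneg _
  -- the integral computation
  have hI : ∀ v : E3,
      (∫ r, Real.sqrt (C ^ 2 + (1 - C ^ 2) * (inner ℝ r v : ℝ) ^ 2)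
        ∂((2 : ℝ≥0∞)⁻¹ • (Measure.dirac r₁ + Measure.dirac r₂)))
      = 2⁻¹ * (Real.sqrt (C ^ 2 + (1 - C ^ 2) * (inner ℝ r₁ v : ℝ) ^ 2)
          + Real.sqrt (C ^ 2 + (1 - C ^ 2) * (inner ℝ r₂ v : ℝ) ^ 2)) := by
    intro v
    have hinn : Continuous fun r : E3 => (inner ℝ r v : ℝ) :=
      continuous_id.inner continuous_const
    have hcont : Continuous fun r : E3 =>
        Real.sqrt (C ^ 2 + (1 - C ^ 2) * (inner ℝ r v : ℝ) ^ 2) :=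
      Real.continuous_sqrt.comp (continuous_const.add (continuous_const.mul (hinn.pow 2)))
    rw [integral_smul_measure,
      integral_add_measure (integrable_dirac' _ hcont r₁) (integrable_dirac' _ hcont r₂),
      integral_dirac, integral_dirac]
    simp [ENNReal.toReal_inv]
  -- upper bound
  have hub : ∀ v : E3, ‖v‖ = 1 →
      2⁻¹ * (Real.sqrt (C ^ 2 + (1 - C ^ 2) * (inner ℝ r₁ v : ℝ) ^ 2)
          + Real.sqrt (C ^ 2 + (1 - C ^ 2) * (inner ℝ r₂ v : ℝ) ^ 2)) ≤ T := by
    intro v hv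
    set x : ℝ := inner ℝ r₁ v
    set y : ℝ := inner ℝ r₂ v
    have hxy : x ^ 2 + y ^ 2 ≤ 1 + Real.cos α :=
      hα ▸ key_inner_sq_bound r₁ r₂ v h₁ h₂ hv (hα ▸ hcos)
    set A : ℝ := C ^ 2 + (1 - C ^ 2) * x ^ 2 with hAdef
    set B : ℝ := C ^ 2 + (1 - C ^ 2) * y ^ 2 with hBdef
    have hA0 : 0 ≤ A := by rw [hAdef]; positivity
    have hB0 : 0 ≤ B := by rw [hBdef]; positivity
    have haA := Real.sq_sqrt hA0
    have hbB := Real.sq_sqrt hB0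
    have ha0 := Real.sqrt_nonneg A
    have hb0 := Real.sqrt_nonneg B
    have hAB : A + B ≤ 2 * T ^ 2 := by
      rw [hT2, hAdef, hBdef]
      nlinarith [mul_le_mul_of_nonneg_left hxy hs0]
    nlinarith [sq_nonneg (Real.sqrt A - Real.sqrt B), haA, hbB, ha0, hb0, hT0, hAB]
  -- the maximizer
  have hn2 : ‖r₁ + r₂‖ ^ 2 = 2 + 2 * Real.cos α := by
    rw [norm_add_pow_two_real, h₁, h₂, hα]; ring
  have hnpos : 0 < ‖r₁ + r₂‖ := by
    rcases (norm_nonneg (r₁ + r₂)).lt_or_eq with h | h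
    · exact h
    · exfalso; rw [← h] at hn2; simp at hn2; nlinarith
  set v₀ : E3 := ‖r₁ + r₂‖⁻¹ • (r₁ + r₂) with hv₀def
  have hv₀ : ‖v₀‖ = 1 := by
    rw [hv₀def, norm_smul, norm_inv, norm_norm, inv_mul_cancel₀ hnpos.ne']
  have hx₀ : (inner ℝ r₁ v₀ : ℝ) = ‖r₁ + r₂‖⁻¹ * (1 + Real.cos α) := by
    rw [hv₀def, real_inner_smul_right, inner_add_right, real_inner_self_eq_norm_sq, h₁, hα]
    ring
  have hy₀ : (inner ℝ r₂ v₀ : ℝ) = ‖r₁ + r₂‖⁻¹ * (1 + Real.cos α) := by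
    rw [hv₀def, real_inner_smul_right, inner_add_right, real_inner_self_eq_norm_sq, h₂,
      real_inner_comm, hα]
    ring
  have h2c : (2:ℝ) + 2 * Real.cos α ≠ 0 := by nlinarith
  have hx₀2 : (inner ℝ r₁ v₀ : ℝ) ^ 2 = (1 + Real.cos α) / 2 := by
    rw [hx₀, mul_pow, inv_pow, hn2]
    field_simp
  have hval : 2⁻¹ * (Real.sqrt (C ^ 2 + (1 - C ^ 2) * (inner ℝ r₁ v₀ : ℝ) ^ 2)
      + Real.sqrt (C ^ 2 + (1 - C ^ 2) * (inner ℝ r₂ v₀ : ℝ) ^ 2)) = T := by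
    rw [hy₀, ← hx₀, hx₀2]
    have harg : C ^ 2 + (1 - C ^ 2) * ((1 + Real.cos α) / 2)
        = (1 + C ^ 2 + (1 - C ^ 2) * Real.cos α) / 2 := by ring
    rw [harg, hTdef]; ring
  -- put it together
  have hne : Nonempty unitSphere := ⟨⟨r₁, by
    simp [unitSphere, mem_sphere_iff_norm, h₁]⟩⟩
  have hmain : g C ((2 : ℝ≥0∞)⁻¹ • (Measure.dirac r₁ + Measure.dirac r₂)) = T := by
    rw [g]
    have hbdd : BddAbove (Set.range fun v : unitSphere =>
        ∫ r, Real.sqrt (C ^ 2 + (1 - C ^ 2) * (inner ℝ r (v : E3) : ℝ) ^ 2)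
          ∂((2 : ℝ≥0∞)⁻¹ • (Measure.dirac r₁ + Measure.dirac r₂))) := by
      refine ⟨T, ?_⟩
      rintro _ ⟨v, rfl⟩
      exact le_of_eq_of_le (hI v) (hub v (mem_sphere_zero_iff_norm.mp v.2))
    apply le_antisymm
    · exact ciSup_le fun v =>
        le_of_eq_of_le (hI v) (hub v (mem_sphere_zero_iff_norm.mp v.2))
    · have hmem : v₀ ∈ unitSphere := mem_sphere_zero_iff_norm.mpr hv₀
      have h := le_ciSup hbdd (⟨v₀, hmem⟩ : unitSphere)
      calc T = ∫ r, Real.sqrt (C ^ 2 + (1 - C ^ 2) * (inner ℝ r v₀ : ℝ) ^ 2)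
                ∂((2 : ℝ≥0∞)⁻¹ • (Measure.dirac r₁ + Measure.dirac r₂)) := by
              rw [hI v₀, hval]
        _ ≤ _ := h
  refine ⟨hmain, fun hperp => ?_⟩
  have hc0 : Real.cos α = 0 := by rw [← hα]; exact hperp
  rw [hmain, hTdef, hc0]
  norm_num
end
end

section
/- Let μ = p₁ δ_{r₁} + p₂ δ_{r₂} be a two-point probability measure on the unit sphere S² of ℝ³ (r₁, r₂ unit vectors, p₁, p₂ ≥ 0, p₁ + p₂ = 1). Then for every C ∈ [0,1], g(C,μ) ≥ √((1+C²)/2). Moreover, for 0 ≤ C < 1, equality holds if and only if r₁ and r₂ are orthogonal and p₁ = p₂ = 1/2. -/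
open MeasureTheory Real
open scoped ENNReal

noncomputable section

open scoped RealInnerProductSpace

namespace GTwoAux

lemma integrable_dirac'' (φ : E3 → ℝ) (a : E3) : Integrable φ (Measure.dirac a) := by
  have h : φ =ᵐ[Measure.dirac a] fun _ => φ a := by
    rw [Filter.EventuallyEq, ae_dirac_eq]
    exact Filter.eventually_pure.2 rfl
  exact (integrable_const (φ a)).congr h.symm

lemma integral_two (p₁ p₂ : ℝ) (hp₁ : 0 ≤ p₁) (hp₂ : 0 ≤ p₂) (r₁ r₂ : E3)
    (φ : E3 → ℝ) :
    ∫ r, φ r ∂(ENNReal.ofReal p₁ • Measure.dirac r₁ + ENNReal.ofReal p₂ • Measure.dirac r₂)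
      = p₁ * φ r₁ + p₂ * φ r₂ := by
  rw [integral_add_measure ((integrable_dirac'' φ r₁).smul_measure ENNReal.ofReal_ne_top)
      ((integrable_dirac'' φ r₂).smul_measure ENNReal.ofReal_ne_top),
    integral_smul_measure, integral_smul_measure, integral_dirac, integral_dirac,
    ENNReal.toReal_ofReal hp₁, ENNReal.toReal_ofReal hp₂, smul_eq_mul, smul_eq_mul]

lemma g_eq (C p₁ p₂ : ℝ) (hp₁ : 0 ≤ p₁) (hp₂ : 0 ≤ p₂) (r₁ r₂ : E3) :
    g C (ENNReal.ofReal p₁ • Measure.dirac r₁ + ENNReal.ofReal p₂ • Measure.dirac r₂)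
      = ⨆ v : unitSphere,
          (p₁ * Real.sqrt (C ^ 2 + (1 - C ^ 2) * (⟪r₁, (v : E3)⟫) ^ 2)
            + p₂ * Real.sqrt (C ^ 2 + (1 - C ^ 2) * (⟪r₂, (v : E3)⟫) ^ 2)) := by
  unfold g
  exact iSup_congr fun v => integral_two p₁ p₂ hp₁ hp₂ r₁ r₂
    (fun r => Real.sqrt (C ^ 2 + (1 - C ^ 2) * (⟪r, (v : E3)⟫) ^ 2))

lemma combo_spec (r₁ r₂ : E3) (h₁ : ‖r₁‖ = 1) (h₂ : ‖r₂‖ = 1) (α β : ℝ)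
    (hαβ : α ^ 2 + β ^ 2 + 2 * α * β * ⟪r₁, r₂⟫ = 1) :
    ∃ v : unitSphere, ⟪r₁, (v : E3)⟫ = α + β * ⟪r₁, r₂⟫
      ∧ ⟪r₂, (v : E3)⟫ = α * ⟪r₁, r₂⟫ + β := by
  have e11 : ⟪r₁, r₁⟫ = 1 := by rw [real_inner_self_eq_norm_sq, h₁]; norm_num
  have e22 : ⟪r₂, r₂⟫ = 1 := by rw [real_inner_self_eq_norm_sq, h₂]; norm_num
  have e21 : ⟪r₂, r₁⟫ = ⟪r₁, r₂⟫ := real_inner_comm _ _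
  have hmem : (α • r₁ + β • r₂) ∈ unitSphere := by
    have hn : ‖α • r₁ + β • r₂‖ ^ 2 = 1 := by
      rw [← real_inner_self_eq_norm_sq]
      rw [inner_add_left, inner_add_right, inner_add_right, real_inner_smul_left,
        real_inner_smul_left, real_inner_smul_left, real_inner_smul_left, real_inner_smul_right,
        real_inner_smul_right, real_inner_smul_right, real_inner_smul_right, e11, e22, e21]
      nlinarith [hαβ]
    have h0 := norm_nonneg (α • r₁ + β • r₂)
    have : ‖α • r₁ + β • r₂‖ = 1 := by nlinarith
    simpa [unitSphere, mem_sphere_zero_iff_norm] using this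
  refine ⟨⟨α • r₁ + β • r₂, hmem⟩, ?_, ?_⟩
  · rw [inner_add_right, real_inner_smul_right, real_inner_smul_right, e11]; ring
  · rw [inner_add_right, real_inner_smul_right, real_inner_smul_right, e21, e22]; ring

/-- a symmetric (bisector) unit vector whose inner products with `r₁, r₂` both
square to `(1+|⟪r₁,r₂⟫|)/2`. -/
lemma exists_sym_v (r₁ r₂ : E3) (h₁ : ‖r₁‖ = 1) (h₂ : ‖r₂‖ = 1) :
    ∃ v : unitSphere, ⟪r₁, (v : E3)⟫ ^ 2 = (1 + |⟪r₁, r₂⟫|) / 2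
      ∧ ⟪r₂, (v : E3)⟫ ^ 2 = (1 + |⟪r₁, r₂⟫|) / 2 := by
  set t := ⟪r₁, r₂⟫ with htdef
  set s : ℝ := if 0 ≤ t then 1 else -1 with hsdef
  have hst : s * t = |t| := by
    by_cases h : 0 ≤ t
    · simp [hsdef, h, abs_of_nonneg h]
    · push_neg at h
      simp [hsdef, not_le.2 h, abs_of_neg h]
  have hs2 : s ^ 2 = 1 := by
    by_cases h : 0 ≤ t <;> simp [hsdef, h]
  have htabs : (0:ℝ) ≤ |t| := abs_nonneg t
  set n : ℝ := Real.sqrt (2 + 2 * |t|) with hndef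
  have hnpos : 0 < n := Real.sqrt_pos.2 (by linarith)
  have hn2 : n ^ 2 = 2 + 2 * |t| := Real.sq_sqrt (by linarith)
  have hne : n ≠ 0 := ne_of_gt hnpos
  have hcond : (n⁻¹) ^ 2 + (s * n⁻¹) ^ 2 + 2 * n⁻¹ * (s * n⁻¹) * t = 1 := by
    have : (n⁻¹) ^ 2 + (s * n⁻¹) ^ 2 + 2 * n⁻¹ * (s * n⁻¹) * t
        = (1 + s ^ 2 + 2 * (s * t)) / n ^ 2 := by
      field_simp
    rw [this, hs2, hst, hn2]
    field_simp
    ring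
  obtain ⟨v, hv1, hv2⟩ := combo_spec r₁ r₂ h₁ h₂ n⁻¹ (s * n⁻¹) hcond
  have hq1 : (n⁻¹ + s * n⁻¹ * t) ^ 2 = (1 + |t|) / 2 := by
    have e : n⁻¹ + s * n⁻¹ * t = n⁻¹ * (1 + s * t) := by ring
    rw [e, hst, mul_pow, inv_pow, hn2]
    field_simp
  have hq2 : (n⁻¹ * t + s * n⁻¹) ^ 2 = (1 + |t|) / 2 := by
    have e : n⁻¹ * t + s * n⁻¹ = n⁻¹ * (t + s) := by ring
    have e2 : (t + s) ^ 2 = (1 + |t|) ^ 2 := by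
      linear_combination 2 * hst + hs2 - sq_abs t
    rw [e, mul_pow, e2, inv_pow, hn2]
    field_simp
  exact ⟨v, by rw [hv1]; exact hq1, by rw [hv2]; exact hq2⟩

lemma sqrt_term_le_one (C : ℝ) (hC0 : 0 ≤ C) (hC1 : C ≤ 1) (r v : E3)
    (hr : ‖r‖ = 1) (hv : ‖v‖ = 1) :
    Real.sqrt (C ^ 2 + (1 - C ^ 2) * ⟪r, v⟫ ^ 2) ≤ 1 := by
  have h := abs_real_inner_le_norm r v
  rw [hr, hv] at h
  have hs : ⟪r, v⟫ ^ 2 ≤ 1 := by nlinarith [sq_abs ⟪r, v⟫, abs_nonneg ⟪r, v⟫]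
  have harg : C ^ 2 + (1 - C ^ 2) * ⟪r, v⟫ ^ 2 ≤ 1 := by
    nlinarith [mul_nonneg (show (0:ℝ) ≤ 1 - C ^ 2 by nlinarith)
      (show (0:ℝ) ≤ 1 - ⟪r, v⟫ ^ 2 by nlinarith)]
  calc Real.sqrt (C ^ 2 + (1 - C ^ 2) * ⟪r, v⟫ ^ 2) ≤ Real.sqrt 1 :=
        Real.sqrt_le_sqrt harg
    _ = 1 := Real.sqrt_one

lemma bdd (C p₁ p₂ : ℝ) (hC0 : 0 ≤ C) (hC1 : C ≤ 1) (hp₁ : 0 ≤ p₁) (hp₂ : 0 ≤ p₂)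
    (hp : p₁ + p₂ = 1) (r₁ r₂ : E3) (h₁ : ‖r₁‖ = 1) (h₂ : ‖r₂‖ = 1) :
    BddAbove (Set.range fun v : unitSphere =>
      (p₁ * Real.sqrt (C ^ 2 + (1 - C ^ 2) * (⟪r₁, (v : E3)⟫) ^ 2)
        + p₂ * Real.sqrt (C ^ 2 + (1 - C ^ 2) * (⟪r₂, (v : E3)⟫) ^ 2))) := by
  refine ⟨1, ?_⟩
  rintro x ⟨v, rfl⟩
  dsimp only
  have hv : ‖(v : E3)‖ = 1 := mem_sphere_zero_iff_norm.mp v.2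
  have t1 := sqrt_term_le_one C hC0 hC1 r₁ v h₁ hv
  have t2 := sqrt_term_le_one C hC0 hC1 r₂ v h₂ hv
  have n1 : 0 ≤ Real.sqrt (C ^ 2 + (1 - C ^ 2) * (⟪r₁, (v : E3)⟫) ^ 2) := Real.sqrt_nonneg _
  have n2 : 0 ≤ Real.sqrt (C ^ 2 + (1 - C ^ 2) * (⟪r₂, (v : E3)⟫) ^ 2) := Real.sqrt_nonneg _
  nlinarith [mul_le_mul_of_nonneg_left t1 hp₁, mul_le_mul_of_nonneg_left t2 hp₂]

instance : Nonempty unitSphere :=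
  ⟨⟨EuclideanSpace.single 0 1, by
    simp [unitSphere, mem_sphere_zero_iff_norm, EuclideanSpace.norm_single]⟩⟩

lemma lower (C p₁ p₂ : ℝ) (hC0 : 0 ≤ C) (hC1 : C ≤ 1) (hp₁ : 0 ≤ p₁) (hp₂ : 0 ≤ p₂)
    (hp : p₁ + p₂ = 1) (r₁ r₂ : E3) (h₁ : ‖r₁‖ = 1) (h₂ : ‖r₂‖ = 1) :
    Real.sqrt ((1 + C ^ 2) / 2)
      ≤ ⨆ v : unitSphere,
          (p₁ * Real.sqrt (C ^ 2 + (1 - C ^ 2) * (⟪r₁, (v : E3)⟫) ^ 2)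
            + p₂ * Real.sqrt (C ^ 2 + (1 - C ^ 2) * (⟪r₂, (v : E3)⟫) ^ 2)) := by
  obtain ⟨v₀, hv1, hv2⟩ := exists_sym_v r₁ r₂ h₁ h₂
  have htabs : (0:ℝ) ≤ |⟪r₁, r₂⟫| := abs_nonneg _
  have hstep : Real.sqrt ((1 + C ^ 2) / 2)
      ≤ p₁ * Real.sqrt (C ^ 2 + (1 - C ^ 2) * (⟪r₁, (v₀ : E3)⟫) ^ 2)
        + p₂ * Real.sqrt (C ^ 2 + (1 - C ^ 2) * (⟪r₂, (v₀ : E3)⟫) ^ 2) := by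
    rw [hv1, hv2, ← add_mul, hp, one_mul]
    exact Real.sqrt_le_sqrt (by nlinarith [mul_nonneg (show (0:ℝ) ≤ 1 - C ^ 2 by nlinarith) htabs])
  exact hstep.trans (le_ciSup (bdd C p₁ p₂ hC0 hC1 hp₁ hp₂ hp r₁ r₂ h₁ h₂) v₀)

lemma ub_calc (C a b : ℝ) (hC0 : 0 ≤ C) (hC1 : C ≤ 1) (hab : a ^ 2 + b ^ 2 ≤ 1) :
    1 / 2 * Real.sqrt (C ^ 2 + (1 - C ^ 2) * a ^ 2)
      + 1 / 2 * Real.sqrt (C ^ 2 + (1 - C ^ 2) * b ^ 2)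
      ≤ Real.sqrt ((1 + C ^ 2) / 2) := by
  have hX : (0:ℝ) ≤ C ^ 2 + (1 - C ^ 2) * a ^ 2 := by
    nlinarith [mul_nonneg (show (0:ℝ) ≤ 1 - C ^ 2 by nlinarith) (sq_nonneg a)]
  have hY : (0:ℝ) ≤ C ^ 2 + (1 - C ^ 2) * b ^ 2 := by
    nlinarith [mul_nonneg (show (0:ℝ) ≤ 1 - C ^ 2 by nlinarith) (sq_nonneg b)]
  have hXY : (C ^ 2 + (1 - C ^ 2) * a ^ 2) + (C ^ 2 + (1 - C ^ 2) * b ^ 2) ≤ 1 + C ^ 2 := by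
    nlinarith [mul_nonneg (show (0:ℝ) ≤ 1 - C ^ 2 by nlinarith)
      (show (0:ℝ) ≤ 1 - (a ^ 2 + b ^ 2) by linarith)]
  have sX := Real.sq_sqrt hX
  have sY := Real.sq_sqrt hY
  have nX := Real.sqrt_nonneg (C ^ 2 + (1 - C ^ 2) * a ^ 2)
  have nY := Real.sqrt_nonneg (C ^ 2 + (1 - C ^ 2) * b ^ 2)
  rw [Real.le_sqrt (by positivity) (by positivity)]
  nlinarith [sq_nonneg (Real.sqrt (C ^ 2 + (1 - C ^ 2) * a ^ 2)
    - Real.sqrt (C ^ 2 + (1 - C ^ 2) * b ^ 2))]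

lemma bessel (r₁ r₂ v : E3) (h₁ : ‖r₁‖ = 1) (h₂ : ‖r₂‖ = 1) (hv : ‖v‖ = 1)
    (ht : ⟪r₁, r₂⟫ = 0) : ⟪r₁, v⟫ ^ 2 + ⟪r₂, v⟫ ^ 2 ≤ 1 := by
  have e11 : ⟪r₁, r₁⟫ = 1 := by rw [real_inner_self_eq_norm_sq, h₁]; norm_num
  have e22 : ⟪r₂, r₂⟫ = 1 := by rw [real_inner_self_eq_norm_sq, h₂]; norm_num
  have evv : ⟪v, v⟫ = 1 := by rw [real_inner_self_eq_norm_sq, hv]; norm_num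
  have e21 : ⟪r₂, r₁⟫ = (0:ℝ) := by rw [real_inner_comm]; exact ht
  have ev1 : ⟪v, r₁⟫ = ⟪r₁, v⟫ := real_inner_comm _ _
  have ev2 : ⟪v, r₂⟫ = ⟪r₂, v⟫ := real_inner_comm _ _
  have h0 : (0:ℝ) ≤ ⟪v - ⟪r₁, v⟫ • r₁ - ⟪r₂, v⟫ • r₂, v - ⟪r₁, v⟫ • r₁ - ⟪r₂, v⟫ • r₂⟫ :=
    real_inner_self_nonneg
  rw [inner_sub_left, inner_sub_left, inner_sub_right, inner_sub_right, inner_sub_right,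
    inner_sub_right, inner_sub_right, inner_sub_right, real_inner_smul_left,
    real_inner_smul_left, real_inner_smul_left, real_inner_smul_left, real_inner_smul_left,
    real_inner_smul_left, real_inner_smul_right, real_inner_smul_right, real_inner_smul_right,
    real_inner_smul_right, real_inner_smul_right, real_inner_smul_right,
    e11, e22, evv, e21, ht, ev1, ev2] at h0
  nlinarith [h0]

set_option maxHeartbeats 1000000 in
lemma helper (C p q : ℝ) (hC0 : 0 ≤ C) (hC1 : C < 1) (hq0 : 0 ≤ q) (hqp : q < p)
    (hsum : p + q = 1) (r₁ r₂ : E3) (h₁ : ‖r₁‖ = 1) (h₂ : ‖r₂‖ = 1)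
    (ht : ⟪r₁, r₂⟫ = 0) :
    ∃ v : unitSphere, Real.sqrt ((1 + C ^ 2) / 2)
      < p * Real.sqrt (C ^ 2 + (1 - C ^ 2) * (⟪r₁, (v : E3)⟫) ^ 2)
        + q * Real.sqrt (C ^ 2 + (1 - C ^ 2) * (⟪r₂, (v : E3)⟫) ^ 2) := by
  have hp0 : 0 < p := lt_of_le_of_lt hq0 hqp
  by_cases hcase : q < p * C
  · -- endpoint v = r₁
    obtain ⟨v, hv1, hv2⟩ := combo_spec r₁ r₂ h₁ h₂ 1 0 (by rw [ht]; ring)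
    rw [ht] at hv1 hv2
    simp only [mul_zero, zero_mul, add_zero, zero_add, mul_one, one_mul] at hv1 hv2
    refine ⟨v, ?_⟩
    rw [hv1, hv2]
    have e1 : C ^ 2 + (1 - C ^ 2) * (1:ℝ) ^ 2 = 1 := by ring
    have e2 : C ^ 2 + (1 - C ^ 2) * (0:ℝ) ^ 2 = C ^ 2 := by ring
    rw [e1, e2, Real.sqrt_one, Real.sqrt_sq hC0]
    have hpos : 0 < p * 1 + q * C := by nlinarith
    rw [Real.sqrt_lt' hpos]
    have hε : 0 < C - q * (1 + C) := by nlinarith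
    nlinarith [sq_nonneg (1 - C), mul_nonneg hε.le (show (0:ℝ) ≤ 1 - C by linarith),
      mul_pos hε hε, sq_nonneg (C - q * (1 + C)),
      mul_nonneg (mul_nonneg hε.le (show (0:ℝ) ≤ 1 - C by linarith))
        (show (0:ℝ) ≤ 1 + C ^ 2 by positivity)]
  · push_neg at hcase
    set s : ℝ := p ^ 2 + q ^ 2 with hsdef
    have hs : 0 < s := by positivity
    have hC2 : 0 < 1 - C ^ 2 := by nlinarith
    set A : ℝ := p ^ 2 * (1 + C ^ 2) / s with hAdef
    set B : ℝ := q ^ 2 * (1 + C ^ 2) / s with hBdef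
    have hA : C ^ 2 ≤ A := by
      rw [hAdef, le_div_iff₀ hs]
      nlinarith [mul_nonneg hq0 hC0]
    have hB : C ^ 2 ≤ B := by
      rw [hBdef, le_div_iff₀ hs]
      nlinarith [mul_nonneg hp0.le hC0]
    have hAB : A + B = 1 + C ^ 2 := by
      rw [hAdef, hBdef]
      field_simp
      ring
    set α : ℝ := Real.sqrt ((A - C ^ 2) / (1 - C ^ 2)) with hαdef
    set β : ℝ := Real.sqrt ((B - C ^ 2) / (1 - C ^ 2)) with hβdef
    have hα2 : α ^ 2 = (A - C ^ 2) / (1 - C ^ 2) :=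
      Real.sq_sqrt (div_nonneg (by linarith) hC2.le)
    have hβ2 : β ^ 2 = (B - C ^ 2) / (1 - C ^ 2) :=
      Real.sq_sqrt (div_nonneg (by linarith) hC2.le)
    have hcond : α ^ 2 + β ^ 2 + 2 * α * β * ⟪r₁, r₂⟫ = 1 := by
      rw [ht, hα2, hβ2]
      field_simp
      linarith [hAB]
    obtain ⟨v, hv1, hv2⟩ := combo_spec r₁ r₂ h₁ h₂ α β hcond
    rw [ht] at hv1 hv2
    simp only [mul_zero, zero_mul, add_zero, zero_add, mul_one, one_mul] at hv1 hv2
    refine ⟨v, ?_⟩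
    rw [hv1, hv2]
    have eA : C ^ 2 + (1 - C ^ 2) * α ^ 2 = A := by
      rw [hα2]; field_simp; ring
    have eB : C ^ 2 + (1 - C ^ 2) * β ^ 2 = B := by
      rw [hβ2]; field_simp; ring
    rw [eA, eB]
    have hS : 0 < (1 + C ^ 2) / s := by positivity
    have esA : Real.sqrt A = p * Real.sqrt ((1 + C ^ 2) / s) := by
      rw [show A = p ^ 2 * ((1 + C ^ 2) / s) by rw [hAdef]; ring,
        Real.sqrt_mul (sq_nonneg p), Real.sqrt_sq hp0.le]
    have esB : Real.sqrt B = q * Real.sqrt ((1 + C ^ 2) / s) := by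
      rw [show B = q ^ 2 * ((1 + C ^ 2) / s) by rw [hBdef]; ring,
        Real.sqrt_mul (sq_nonneg q), Real.sqrt_sq hq0]
    rw [esA, esB]
    have val_eq : p * (p * Real.sqrt ((1 + C ^ 2) / s)) + q * (q * Real.sqrt ((1 + C ^ 2) / s))
        = Real.sqrt (s * (1 + C ^ 2)) := by
      have e : s * (1 + C ^ 2) = s ^ 2 * ((1 + C ^ 2) / s) := by field_simp
      rw [e, Real.sqrt_mul (sq_nonneg s), Real.sqrt_sq hs.le, hsdef]; ring
    rw [val_eq]
    refine Real.sqrt_lt_sqrt (by positivity) ?_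
    have h12 : (0:ℝ) < s - 1 / 2 := by nlinarith [sq_nonneg (p - q)]
    nlinarith [mul_pos h12 (show (0:ℝ) < 1 + C ^ 2 by positivity)]

end GTwoAux

/-- For a two-point probability measure `μ = p₁ δ_{r₁} + p₂ δ_{r₂}` on the unit sphere S² of ℝ³
and every `C ∈ [0,1]`, `g(C,μ) ≥ √((1+C²)/2)`; moreover, for `0 ≤ C < 1`, equality holds iff
`r₁ ⊥ r₂` and `p₁ = p₂ = 1/2`. -/
theorem g_two_settings_optimal (r₁ r₂ : E3) (h₁ : ‖r₁‖ = 1) (h₂ : ‖r₂‖ = 1)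
    (p₁ p₂ : ℝ) (hp₁ : 0 ≤ p₁) (hp₂ : 0 ≤ p₂) (hp : p₁ + p₂ = 1) :
    (∀ C ∈ Set.Icc (0 : ℝ) 1,
      Real.sqrt ((1 + C ^ 2) / 2)
        ≤ g C (ENNReal.ofReal p₁ • Measure.dirac r₁ + ENNReal.ofReal p₂ • Measure.dirac r₂)) ∧
    ∀ C : ℝ, 0 ≤ C → C < 1 →
      (g C (ENNReal.ofReal p₁ • Measure.dirac r₁ + ENNReal.ofReal p₂ • Measure.dirac r₂)
          = Real.sqrt ((1 + C ^ 2) / 2)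
        ↔ (inner ℝ r₁ r₂ : ℝ) = 0 ∧ p₁ = 1 / 2 ∧ p₂ = 1 / 2) := by
  constructor
  · intro C hC
    rw [GTwoAux.g_eq C p₁ p₂ hp₁ hp₂ r₁ r₂]
    exact GTwoAux.lower C p₁ p₂ hC.1 hC.2 hp₁ hp₂ hp r₁ r₂ h₁ h₂
  · intro C hC0 hC1
    rw [GTwoAux.g_eq C p₁ p₂ hp₁ hp₂ r₁ r₂]
    have hb := GTwoAux.bdd C p₁ p₂ hC0 hC1.le hp₁ hp₂ hp r₁ r₂ h₁ h₂
    constructor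
    · intro hg
      obtain ⟨v₀, hv1, hv2⟩ := GTwoAux.exists_sym_v r₁ r₂ h₁ h₂
      have hle := le_ciSup hb v₀
      rw [hg] at hle
      rw [hv1, hv2, ← add_mul, hp, one_mul] at hle
      have harg := (Real.sqrt_le_sqrt_iff (by positivity)).1 hle
      have ht : ⟪r₁, r₂⟫ = 0 := by
        by_contra hne
        have habs : 0 < |⟪r₁, r₂⟫| := abs_pos.2 hne
        nlinarith [mul_pos (show (0:ℝ) < 1 - C ^ 2 by nlinarith) habs]
      have hpp : p₁ = p₂ := by
        rcases lt_trichotomy p₁ p₂ with hlt | he | hgt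
        · obtain ⟨v, hv⟩ := GTwoAux.helper C p₂ p₁ hC0 hC1 hp₁ hlt (by linarith) r₂ r₁ h₂ h₁
            (by rw [real_inner_comm]; exact ht)
          have hle2 := le_ciSup hb v
          rw [hg] at hle2
          linarith [hv, hle2]
        · exact he
        · obtain ⟨v, hv⟩ := GTwoAux.helper C p₁ p₂ hC0 hC1 hp₂ hgt hp r₁ r₂ h₁ h₂ ht
          have hle2 := le_ciSup hb v
          rw [hg] at hle2
          linarith [hv, hle2]
      exact ⟨ht, by linarith, by linarith⟩
    · rintro ⟨ht, hq₁, hq₂⟩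
      subst hq₁; subst hq₂
      apply le_antisymm
      · refine ciSup_le fun v => ?_
        have hv : ‖(v : E3)‖ = 1 := mem_sphere_zero_iff_norm.mp v.2
        exact GTwoAux.ub_calc C _ _ hC0 hC1.le (GTwoAux.bessel r₁ r₂ v h₁ h₂ hv ht)
      · exact GTwoAux.lower C _ _ hC0 hC1.le hp₁ hp₂ hp r₁ r₂ h₁ h₂
end
end

section
/- Let μ = p₁ δ_{r₁} + p₂ δ_{r₂} + p₃ δ_{r₃} be a three-point probability measure on the unit sphere S² of ℝ³ (r₁, r₂, r₃ unit vectors, p₁, p₂, p₃ ≥ 0, p₁ + p₂ + p₃ = 1). Then g*(μ) ≥ 1/√3, and equality holds if and only if r₁, r₂, r₃ are mutually orthogonal and p₁ = p₂ = p₃ = 1/3. -/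
open MeasureTheory Real
open scoped ENNReal

noncomputable section

lemma integrable_c_dirac {f : E3 → ℝ} (hf : Continuous f) (p : ℝ) (a : E3) :
    Integrable f (ENNReal.ofReal p • Measure.dirac a) := by
  refine Integrable.smul_measure ?_ ENNReal.ofReal_ne_top
  refine ⟨hf.aestronglyMeasurable, ?_⟩
  simp [HasFiniteIntegral, lintegral_dirac]

lemma integral_three (f : E3 → ℝ) (hf : Continuous f) (r₁ r₂ r₃ : E3) (p₁ p₂ p₃ : ℝ)
    (hp₁ : 0 ≤ p₁) (hp₂ : 0 ≤ p₂) (hp₃ : 0 ≤ p₃) :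
    ∫ r, f r ∂(ENNReal.ofReal p₁ • Measure.dirac r₁ + ENNReal.ofReal p₂ • Measure.dirac r₂
      + ENNReal.ofReal p₃ • Measure.dirac r₃) = p₁ * f r₁ + p₂ * f r₂ + p₃ * f r₃ := by
  rw [integral_add_measure ((integrable_c_dirac hf p₁ r₁).add_measure (integrable_c_dirac hf p₂ r₂))
        (integrable_c_dirac hf p₃ r₃),
      integral_add_measure (integrable_c_dirac hf p₁ r₁) (integrable_c_dirac hf p₂ r₂),
      integral_smul_measure, integral_smul_measure, integral_smul_measure,
      integral_dirac, integral_dirac, integral_dirac,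
      ENNReal.toReal_ofReal hp₁, ENNReal.toReal_ofReal hp₂, ENNReal.toReal_ofReal hp₃]
  simp [smul_eq_mul]

lemma norm_sq_triple (x y z : E3) (a b c : ℝ) :
    ‖a • x + b • y + c • z‖ ^ 2 = a^2*‖x‖^2 + b^2*‖y‖^2 + c^2*‖z‖^2
      + 2*(a*b*(inner ℝ x y : ℝ) + a*c*(inner ℝ x z : ℝ) + b*c*(inner ℝ y z : ℝ)) := by
  simp only [← real_inner_self_eq_norm_sq, inner_add_left, inner_add_right,
    real_inner_smul_left, real_inner_smul_right, real_inner_comm y x, real_inner_comm z x,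
    real_inner_comm z y]
  ring

set_option maxHeartbeats 1600000 in
/-- For a three-point probability measure `μ = p₁ δ_{r₁} + p₂ δ_{r₂} + p₃ δ_{r₃}` on the unit
sphere S² of ℝ³, `g*(μ) ≥ 1/√3`, with equality iff `r₁, r₂, r₃` are mutually orthogonal and
`p₁ = p₂ = p₃ = 1/3`. -/
theorem gstar_three_settings_optimal (r₁ r₂ r₃ : E3)
    (h₁ : ‖r₁‖ = 1) (h₂ : ‖r₂‖ = 1) (h₃ : ‖r₃‖ = 1)
    (p₁ p₂ p₃ : ℝ) (hp₁ : 0 ≤ p₁) (hp₂ : 0 ≤ p₂) (hp₃ : 0 ≤ p₃) (hp : p₁ + p₂ + p₃ = 1) :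
    1 / Real.sqrt 3
      ≤ gstar (ENNReal.ofReal p₁ • Measure.dirac r₁ + ENNReal.ofReal p₂ • Measure.dirac r₂
          + ENNReal.ofReal p₃ • Measure.dirac r₃) ∧
    (gstar (ENNReal.ofReal p₁ • Measure.dirac r₁ + ENNReal.ofReal p₂ • Measure.dirac r₂
          + ENNReal.ofReal p₃ • Measure.dirac r₃) = 1 / Real.sqrt 3
      ↔ (inner ℝ r₁ r₂ : ℝ) = 0 ∧ (inner ℝ r₁ r₃ : ℝ) = 0 ∧ (inner ℝ r₂ r₃ : ℝ) = 0
          ∧ p₁ = 1 / 3 ∧ p₂ = 1 / 3 ∧ p₃ = 1 / 3) := by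
  have sqrt3_pos : (0:ℝ) < Real.sqrt 3 := Real.sqrt_pos.mpr (by norm_num)
  have sqrt3_sq : Real.sqrt 3 ^ 2 = 3 := Real.sq_sqrt (by norm_num)
  set μ := ENNReal.ofReal p₁ • Measure.dirac r₁ + ENNReal.ofReal p₂ • Measure.dirac r₂
      + ENNReal.ofReal p₃ • Measure.dirac r₃ with hμ
  set F : E3 → ℝ := fun v =>
    p₁ * |(inner ℝ r₁ v : ℝ)| + p₂ * |(inner ℝ r₂ v : ℝ)| + p₃ * |(inner ℝ r₃ v : ℝ)| with hF
  have hInt : ∀ v : E3, (∫ r, |(inner ℝ r v : ℝ)| ∂μ) = F v := by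
    intro v
    exact integral_three (fun r => |(inner ℝ r v : ℝ)|)
      ((continuous_id.inner continuous_const).abs) r₁ r₂ r₃ p₁ p₂ p₃ hp₁ hp₂ hp₃
  haveI : Nonempty unitSphere := by
    refine ⟨⟨EuclideanSpace.single 0 1, ?_⟩⟩
    simp [unitSphere, EuclideanSpace.norm_single]
  have hgs : gstar μ = ⨆ v : unitSphere, F ↑v := by
    unfold gstar
    congr 1
    funext v
    exact hInt ↑v
  have hF1 : ∀ v : E3, ‖v‖ = 1 → F v ≤ 1 := by
    intro v hv
    have e1 : |(inner ℝ r₁ v : ℝ)| ≤ 1 := by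
      simpa [h₁, hv] using abs_real_inner_le_norm r₁ v
    have e2 : |(inner ℝ r₂ v : ℝ)| ≤ 1 := by
      simpa [h₂, hv] using abs_real_inner_le_norm r₂ v
    have e3 : |(inner ℝ r₃ v : ℝ)| ≤ 1 := by
      simpa [h₃, hv] using abs_real_inner_le_norm r₃ v
    have m1 := mul_le_mul_of_nonneg_left e1 hp₁
    have m2 := mul_le_mul_of_nonneg_left e2 hp₂
    have m3 := mul_le_mul_of_nonneg_left e3 hp₃
    simp only [mul_one] at m1 m2 m3
    simp only [hF]
    linarith
  have hbdd : BddAbove (Set.range fun v : unitSphere => F ↑v) := by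
    refine ⟨1, ?_⟩
    rintro x ⟨v, rfl⟩
    exact hF1 ↑v (by simpa [unitSphere] using mem_sphere_zero_iff_norm.mp v.2)
  have hle : ∀ v : E3, ‖v‖ = 1 → F v ≤ gstar μ := by
    intro v hv
    rw [hgs]
    exact le_ciSup hbdd ⟨v, by simpa [unitSphere] using mem_sphere_zero_iff_norm.mpr hv⟩
  have hub : ∀ c : ℝ, (∀ v : E3, ‖v‖ = 1 → F v ≤ c) → gstar μ ≤ c := by
    intro c hc
    rw [hgs]
    exact ciSup_le fun v => hc ↑v (by simpa [unitSphere] using mem_sphere_zero_iff_norm.mp v.2)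
  have hgs_nonneg : 0 ≤ gstar μ := by
    have := hle (EuclideanSpace.single 0 1) (by simp [EuclideanSpace.norm_single])
    refine le_trans ?_ this
    positivity
  -- key: for any signs, the norm of the signed combination is below gstar
  have hkey : ∀ s₂ s₃ : ℝ, s₂ ^ 2 = 1 → s₃ ^ 2 = 1 →
      ‖p₁ • r₁ + (s₂ * p₂) • r₂ + (s₃ * p₃) • r₃‖ ≤ gstar μ := by
    intro s₂ s₃ hs₂ hs₃
    set u : E3 := p₁ • r₁ + (s₂ * p₂) • r₂ + (s₃ * p₃) • r₃ with hu
    by_cases h0 : u = 0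
    · rw [h0]; simpa using hgs_nonneg
    · have hun : (0:ℝ) < ‖u‖ := norm_pos_iff.mpr h0
      set v : E3 := ‖u‖⁻¹ • u with hvdef
      have hv : ‖v‖ = 1 := by
        rw [hvdef, norm_smul, norm_inv, norm_norm, inv_mul_cancel₀ (ne_of_gt hun)]
      have hiuv : (inner ℝ u v : ℝ) = ‖u‖ := by
        rw [hvdef, real_inner_smul_right, real_inner_self_eq_norm_sq]
        field_simp
      have habs₂ : |s₂| = 1 := by
        rw [← Real.sqrt_sq_eq_abs, hs₂, Real.sqrt_one]
      have habs₃ : |s₃| = 1 := by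
        rw [← Real.sqrt_sq_eq_abs, hs₃, Real.sqrt_one]
      have hexp : (inner ℝ u v : ℝ) =
          p₁ * (inner ℝ r₁ v : ℝ) + (s₂ * p₂) * (inner ℝ r₂ v : ℝ)
            + (s₃ * p₃) * (inner ℝ r₃ v : ℝ) := by
        rw [hu]
        simp only [inner_add_left, real_inner_smul_left]
      have hterm : ∀ s q t : ℝ, |s| = 1 → 0 ≤ q → (s * q) * t ≤ q * |t| := by
        intro s q t hs hq
        calc (s * q) * t ≤ |(s * q) * t| := le_abs_self _
          _ = q * |t| := by rw [abs_mul, abs_mul, hs, abs_of_nonneg hq, one_mul]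
      have h1' : p₁ * (inner ℝ r₁ v : ℝ) ≤ p₁ * |(inner ℝ r₁ v : ℝ)| :=
        mul_le_mul_of_nonneg_left (le_abs_self _) hp₁
      have h2' := hterm s₂ p₂ (inner ℝ r₂ v : ℝ) habs₂ hp₂
      have h3' := hterm s₃ p₃ (inner ℝ r₃ v : ℝ) habs₃ hp₃
      have : ‖u‖ ≤ F v := by
        rw [← hiuv, hexp, hF]
        dsimp only
        linarith
      exact this.trans (hle v hv)
  -- norm squared formula
  have hnormsq : ∀ s₂ s₃ : ℝ, s₂ ^ 2 = 1 → s₃ ^ 2 = 1 →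
      ‖p₁ • r₁ + (s₂ * p₂) • r₂ + (s₃ * p₃) • r₃‖ ^ 2
        = p₁^2 + p₂^2 + p₃^2 + 2 * (s₂ * (p₁ * p₂ * (inner ℝ r₁ r₂ : ℝ))
            + s₃ * (p₁ * p₃ * (inner ℝ r₁ r₃ : ℝ)) + s₂ * s₃ * (p₂ * p₃ * (inner ℝ r₂ r₃ : ℝ))) := by
    intro s₂ s₃ hs₂ hs₃
    rw [norm_sq_triple, h₁, h₂, h₃]
    rw [mul_pow, mul_pow, hs₂, hs₃]
    ring
  have hsum_sq : 1 / 3 ≤ p₁^2 + p₂^2 + p₃^2 := by nlinarith [sq_nonneg (p₁ - p₂), sq_nonneg (p₁ - p₃), sq_nonneg (p₂ - p₃)]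
  -- Part 1: lower bound
  have part1 : 1 / Real.sqrt 3 ≤ gstar μ := by
    set a := (inner ℝ r₁ r₂ : ℝ)
    set b := (inner ℝ r₁ r₃ : ℝ)
    set c := (inner ℝ r₂ r₃ : ℝ)
    set s₂ : ℝ := if 0 ≤ a then 1 else -1 with hs₂def
    set s₃ : ℝ := if 0 ≤ p₁ * p₃ * b + s₂ * (p₂ * p₃ * c) then 1 else -1 with hs₃def
    have hs₂ : s₂ ^ 2 = 1 := by rw [hs₂def]; split <;> norm_num
    have hs₃ : s₃ ^ 2 = 1 := by rw [hs₃def]; split <;> norm_num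
    have hcross1 : 0 ≤ s₂ * (p₁ * p₂ * a) := by
      rw [hs₂def]; split
      · positivity
      · next h => nlinarith [mul_nonneg hp₁ hp₂]
    have hcross2 : 0 ≤ s₃ * (p₁ * p₃ * b + s₂ * (p₂ * p₃ * c)) := by
      rw [hs₃def]; split
      · next h => linarith
      · next h => nlinarith
    have hge : 1 / 3 ≤ ‖p₁ • r₁ + (s₂ * p₂) • r₂ + (s₃ * p₃) • r₃‖ ^ 2 := by
      rw [hnormsq s₂ s₃ hs₂ hs₃]
      nlinarith
    have : 1 / Real.sqrt 3 ≤ ‖p₁ • r₁ + (s₂ * p₂) • r₂ + (s₃ * p₃) • r₃‖ := by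
      rw [one_div, ← Real.sqrt_inv]
      calc Real.sqrt 3⁻¹ ≤ Real.sqrt (‖p₁ • r₁ + (s₂ * p₂) • r₂ + (s₃ * p₃) • r₃‖ ^ 2) :=
            Real.sqrt_le_sqrt (by linarith)
        _ = ‖p₁ • r₁ + (s₂ * p₂) • r₂ + (s₃ * p₃) • r₃‖ := Real.sqrt_sq (norm_nonneg _)
    exact this.trans (hkey s₂ s₃ hs₂ hs₃)
  refine ⟨part1, ?_⟩
  constructor
  · -- equality ⇒ orthogonal and uniform
    intro heq
    set a := (inner ℝ r₁ r₂ : ℝ) with ha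
    set b := (inner ℝ r₁ r₃ : ℝ) with hb
    set c := (inner ℝ r₂ r₃ : ℝ) with hc
    have hQ : ∀ s₂ s₃ : ℝ, s₂ ^ 2 = 1 → s₃ ^ 2 = 1 →
        p₁^2 + p₂^2 + p₃^2 + 2 * (s₂ * (p₁ * p₂ * a) + s₃ * (p₁ * p₃ * b)
          + s₂ * s₃ * (p₂ * p₃ * c)) ≤ 1 / 3 := by
      intro s₂ s₃ hs₂ hs₃
      have h1 : ‖p₁ • r₁ + (s₂ * p₂) • r₂ + (s₃ * p₃) • r₃‖ ≤ 1 / Real.sqrt 3 := by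
        rw [← heq]; exact hkey s₂ s₃ hs₂ hs₃
      have h2 : ‖p₁ • r₁ + (s₂ * p₂) • r₂ + (s₃ * p₃) • r₃‖ ^ 2 ≤ (1 / Real.sqrt 3) ^ 2 :=
        pow_le_pow_left₀ (norm_nonneg _) h1 2
      have h3 : (1 / Real.sqrt 3 : ℝ) ^ 2 = 1 / 3 := by
        rw [div_pow, one_pow, sqrt3_sq]
      rw [hnormsq s₂ s₃ hs₂ hs₃, h3] at h2
      exact h2
    have Q1 := hQ 1 1 (by norm_num) (by norm_num)
    have Q2 := hQ 1 (-1) (by norm_num) (by norm_num)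
    have Q3 := hQ (-1) 1 (by norm_num) (by norm_num)
    have Q4 := hQ (-1) (-1) (by norm_num) (by norm_num)
    have hsum : p₁^2 + p₂^2 + p₃^2 ≤ 1 / 3 := by linarith
    have hdec : (p₁ - 1/3)^2 + (p₂ - 1/3)^2 + (p₃ - 1/3)^2
        = p₁^2 + p₂^2 + p₃^2 - 2/3 * (p₁ + p₂ + p₃) + 1/3 := by ring
    have hzero : (p₁ - 1/3)^2 + (p₂ - 1/3)^2 + (p₃ - 1/3)^2 ≤ 0 := by
      rw [hdec, hp]; linarith
    have hp1 : p₁ = 1 / 3 := by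
      have e : (p₁ - 1/3)^2 = 0 := le_antisymm
        (by linarith [sq_nonneg (p₂ - 1/3), sq_nonneg (p₃ - 1/3)]) (sq_nonneg _)
      have := sq_eq_zero_iff.mp e
      linarith
    have hp2 : p₂ = 1 / 3 := by
      have e : (p₂ - 1/3)^2 = 0 := le_antisymm
        (by linarith [sq_nonneg (p₁ - 1/3), sq_nonneg (p₃ - 1/3)]) (sq_nonneg _)
      have := sq_eq_zero_iff.mp e
      linarith
    have hp3 : p₃ = 1 / 3 := by
      have e : (p₃ - 1/3)^2 = 0 := le_antisymm
        (by linarith [sq_nonneg (p₁ - 1/3), sq_nonneg (p₂ - 1/3)]) (sq_nonneg _)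
      have := sq_eq_zero_iff.mp e
      linarith
    subst hp1; subst hp2; subst hp3
    refine ⟨by linarith, by linarith, by linarith, rfl, rfl, rfl⟩
  · -- orthogonal and uniform ⇒ equality
    rintro ⟨ha, hb, hc, hq1, hq2, hq3⟩
    refine le_antisymm ?_ part1
    refine hub _ ?_
    intro v hv
    set c₁ := (inner ℝ r₁ v : ℝ) with hc₁
    set c₂ := (inner ℝ r₂ v : ℝ) with hc₂
    set c₃ := (inner ℝ r₃ v : ℝ) with hc₃
    -- Bessel inequality
    have hBessel : c₁^2 + c₂^2 + c₃^2 ≤ 1 := by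
      have h0 : (0:ℝ) ≤ ‖v - (c₁ • r₁ + c₂ • r₂ + c₃ • r₃)‖ ^ 2 := sq_nonneg _
      have hw : ‖c₁ • r₁ + c₂ • r₂ + c₃ • r₃‖ ^ 2 = c₁^2 + c₂^2 + c₃^2 := by
        rw [norm_sq_triple, h₁, h₂, h₃, ha, hb, hc]; ring
      have hvw : (inner ℝ v (c₁ • r₁ + c₂ • r₂ + c₃ • r₃) : ℝ) = c₁^2 + c₂^2 + c₃^2 := by
        simp only [inner_add_right, real_inner_smul_right]
        rw [real_inner_comm r₁ v, real_inner_comm r₂ v, real_inner_comm r₃ v,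
          ← hc₁, ← hc₂, ← hc₃]
        ring
      rw [norm_sub_sq_real, hw, hvw, hv] at h0
      nlinarith
    have hS2 : (|c₁| + |c₂| + |c₃|)^2 ≤ 3 := by
      nlinarith [sq_nonneg (|c₁| - |c₂|), sq_nonneg (|c₁| - |c₃|), sq_nonneg (|c₂| - |c₃|),
        sq_abs c₁, sq_abs c₂, sq_abs c₃]
    have hS : (|c₁| + |c₂| + |c₃|) * Real.sqrt 3 ≤ 3 := by
      nlinarith [sq_nonneg (|c₁| + |c₂| + |c₃| - Real.sqrt 3)]
    rw [hF]
    dsimp only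
    rw [hq1, hq2, hq3, ← hc₁, ← hc₂, ← hc₃, le_div_iff₀ sqrt3_pos]
    nlinarith
end
end

section
/- Let σ be the uniform (rotation-invariant) probability measure on the unit sphere S² of ℝ³. Then for every C ∈ [0,1], g(C,σ) = ∫₀¹ √(C² + (1−C²)x²) dx, which for 0 < C < 1 equals 1/2 + C²·arcsinh(√(1−C²)/C)/(2√(1−C²)); in particular g(0,σ) = 1/2. Moreover, σ is optimal: every Borel probability measure μ on S² satisfies g(C,μ) ≥ g(C,σ) for all C ∈ [0,1]. -/
open MeasureTheory Real
open scoped ENNReal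

noncomputable section

namespace GIso

def τ : Measure (Metric.sphere (0 : E3) 1) := (volume : Measure E3).toSphere

instance : IsFiniteMeasure τ := inferInstanceAs (IsFiniteMeasure (volume : Measure E3).toSphere)

lemma τ_def : τ = (volume : Measure E3).toSphere := rfl

def τ' : Measure (Metric.sphere (0 : E3) 1) := (ENNReal.ofReal (4 * π))⁻¹ • τ

def e0 : E3 := EuclideanSpace.single 0 1

lemma norm_e0 : ‖e0‖ = 1 := by simp [e0, EuclideanSpace.norm_single]

lemma e0_mem : e0 ∈ unitSphere := by
  simp [unitSphere, mem_sphere_zero_iff_norm, norm_e0]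

instance : Nonempty unitSphere := ⟨⟨e0, e0_mem⟩⟩

lemma inner_e0 (x : E3) : (inner ℝ x e0 : ℝ) = x 0 := by
  simp [e0, EuclideanSpace.inner_single_right]

/-- ball integrand associated to a direction `r`. -/
def bi (f : ℝ → ℝ) (r : E3) (x : E3) : ℝ :=
  if ‖x‖ < 1 then f ((inner ℝ x r : ℝ) / ‖x‖) else 0

lemma arg_le (x r : E3) : |(inner ℝ x r : ℝ) / ‖x‖| ≤ ‖r‖ := by
  rcases eq_or_ne x 0 with rfl | hx
  · simp
  · rw [abs_div, abs_norm, div_le_iff₀ (norm_pos_iff.2 hx)]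
    calc |(inner ℝ x r : ℝ)| ≤ ‖x‖ * ‖r‖ := abs_real_inner_le_norm x r
    _ = ‖r‖ * ‖x‖ := by ring

lemma bi_measurable (f : ℝ → ℝ) (hf : Continuous f) (r : E3) : Measurable (bi f r) := by
  have h1 : Measurable fun x : E3 => (inner ℝ x r : ℝ) / ‖x‖ :=
    (continuous_id.inner continuous_const).measurable.div continuous_norm.measurable
  exact Measurable.ite (measurableSet_lt continuous_norm.measurable measurable_const)
    (hf.measurable.comp h1) measurable_const

lemma bi_integrable (f : ℝ → ℝ) (hf : Continuous f) (r : E3) :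
    Integrable (bi f r) (volume : Measure E3) := by
  obtain ⟨M, hM⟩ := (isCompact_Icc (a := -‖r‖) (b := ‖r‖)).exists_bound_of_continuousOn
    hf.continuousOn
  have hbi : bi f r = Set.indicator (Metric.ball (0 : E3) 1)
      (fun x => f ((inner ℝ x r : ℝ) / ‖x‖)) := by
    funext x
    simp only [bi, Set.indicator, Metric.mem_ball, dist_zero_right]
  rw [hbi]
  rw [integrable_indicator_iff measurableSet_ball]
  apply Measure.integrableOn_of_bounded (M := M) (by simp [measure_ball_lt_top.ne])
  · exact ((hf.measurable.comp
      ((continuous_id.inner continuous_const).measurable.div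
        continuous_norm.measurable)).aestronglyMeasurable)
  · filter_upwards with x
    have := arg_le x r
    exact hM _ (by constructor <;> [linarith [abs_le.1 this |>.1]; linarith [abs_le.1 this |>.2]])


def Q (f : ℝ → ℝ) (p : ℝ × ℝ × ℝ) : ℝ :=
  if Real.sqrt (p.1^2 + p.2.1^2 + p.2.2^2) < 1
    then f (p.1 / Real.sqrt (p.1^2 + p.2.1^2 + p.2.2^2)) else 0

def K (f : ℝ → ℝ) (z a : ℝ) : ℝ :=
  if Real.sqrt (z^2 + a^2) < 1 then f (z / Real.sqrt (z^2 + a^2)) else 0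

def W (f : ℝ → ℝ) (z u : ℝ) : ℝ :=
  if |z| < u ∧ u < 1 then u * f (z/u) else 0

def em3 : E3 ≃ᵐ ℝ × ℝ × ℝ :=
  (MeasurableEquiv.toLp 2 (Fin 3 → ℝ)).symm.trans
    ((MeasurableEquiv.piFinSuccAbove (fun _ : Fin 3 => ℝ) 0).trans
      ((MeasurableEquiv.refl ℝ).prodCongr (MeasurableEquiv.finTwoArrow)))

lemma em3_mp : MeasurePreserving (⇑em3) (volume : Measure E3) volume := by
  have h1 := EuclideanSpace.volume_preserving_symm_measurableEquiv_toLp (Fin 3)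
  have h2 := volume_preserving_piFinSuccAbove (fun _ : Fin 3 => ℝ) 0
  have h3 := (MeasurePreserving.id (volume : Measure ℝ)).prod
    (volume_preserving_finTwoArrow ℝ)
  exact (h3.comp (h2.comp h1) : _)

lemma em3_apply (x : E3) : em3 x = (x 0, x 1, x 2) := rfl

lemma norm3 (x : E3) : ‖x‖ = Real.sqrt ((x 0)^2 + (x 1)^2 + (x 2)^2) := by
  rw [EuclideanSpace.norm_eq]
  congr 1
  rw [Fin.sum_univ_three]
  simp [Real.norm_eq_abs, sq_abs]

lemma bi_eq_Q (f : ℝ → ℝ) (x : E3) : bi f e0 x = Q f (em3 x) := by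
  rw [em3_apply]
  simp only [bi, Q, inner_e0, norm3]

lemma Q_integrable (f : ℝ → ℝ) (hf : Continuous f) :
    Integrable (Q f) (volume : Measure (ℝ × ℝ × ℝ)) := by
  refine (em3_mp.integrable_comp_emb em3.measurableEmbedding).1 ?_
  have : Q f ∘ ⇑em3 = bi f e0 := funext fun x => (bi_eq_Q f x).symm
  rw [this]
  exact bi_integrable f hf e0

lemma step1 (f : ℝ → ℝ) : ∫ x : E3, bi f e0 x = ∫ p, Q f p := by
  rw [← em3_mp.integral_comp em3.measurableEmbedding (Q f)]
  exact integral_congr_ae (Filter.Eventually.of_forall fun x => bi_eq_Q f x)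

lemma step4 (f : ℝ → ℝ) (z : ℝ) :
    (∫ w : ℝ × ℝ, Q f (z, w)) = (2 * π) * ∫ a in Set.Ioi (0:ℝ), a * K f z a := by
  rw [← integral_comp_polarCoord_symm (fun w => Q f (z, w))]
  have hfun : ∀ q : ℝ × ℝ, q.1 • Q f (z, polarCoord.symm q) = q.1 * K f z q.1 := by
    intro q
    have hsym : polarCoord.symm q = (q.1 * Real.cos q.2, q.1 * Real.sin q.2) := rfl
    have hsum : z^2 + (q.1 * Real.cos q.2)^2 + (q.1 * Real.sin q.2)^2 = z^2 + q.1^2 := by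
      linear_combination (q.1^2) * (Real.sin_sq_add_cos_sq q.2)
    simp only [Q, K, hsym, smul_eq_mul]
    rw [hsum]
  rw [show (fun q : ℝ × ℝ => q.1 • Q f (z, polarCoord.symm q))
      = fun q : ℝ × ℝ => q.1 * K f z q.1 from funext hfun]
  have htarget : polarCoord.target = Set.Ioi (0:ℝ) ×ˢ Set.Ioo (-π) π := rfl
  rw [htarget, Measure.volume_eq_prod, ← Measure.prod_restrict]
  rw [show (fun q : ℝ × ℝ => q.1 * K f z q.1)
      = fun q : ℝ × ℝ => (q.1 * K f z q.1) * (fun _ : ℝ => (1:ℝ)) q.2 from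
    funext fun q => (mul_one _).symm]
  rw [integral_prod_mul (μ := volume.restrict (Set.Ioi (0:ℝ)))
      (ν := volume.restrict (Set.Ioo (-π) π))
      (f := fun a : ℝ => a * K f z a) (g := fun _ : ℝ => (1:ℝ))]
  have : (∫ _ : ℝ in Set.Ioo (-π) π, (1:ℝ)) = 2 * π := by
    simp [Real.volume_Ioo]
    rw [max_eq_left (by positivity)]
    ring
  rw [this]
  ring

lemma ioi_to_ioo (G F : ℝ → ℝ) (R : ℝ) (hR : 0 ≤ R)
    (hFG : ∀ a ∈ Set.Ioi (0:ℝ), F a = if a < R then G a else 0) :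
    ∫ a in Set.Ioi (0:ℝ), F a = ∫ a in (0:ℝ)..R, G a := by
  have h1 : ∫ a in Set.Ioi (0:ℝ), F a
      = ∫ a in Set.Ioi (0:ℝ), Set.indicator (Set.Ioo 0 R) G a := by
    refine setIntegral_congr_fun measurableSet_Ioi fun a ha => ?_
    rw [hFG a ha, Set.indicator]
    by_cases h : a < R
    · rw [if_pos h, if_pos ⟨ha, h⟩]
    · rw [if_neg h, if_neg (fun hmem => h hmem.2)]
  rw [h1, setIntegral_indicator measurableSet_Ioo,
    Set.inter_eq_self_of_subset_right Set.Ioo_subset_Ioi_self,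
    intervalIntegral.integral_of_le hR, integral_Ioc_eq_integral_Ioo]

lemma W_eq_indicator (f : ℝ → ℝ) (z : ℝ) :
    (fun u => W f z u) = Set.indicator (Set.Ioo |z| 1) (fun u => u * f (z/u)) := by
  funext u
  by_cases h : |z| < u ∧ u < 1
  · rw [W, if_pos h, Set.indicator_of_mem (Set.mem_Ioo.2 h)]
  · rw [W, if_neg h, Set.indicator_of_notMem (by simpa [Set.mem_Ioo] using h)]

lemma step5 (f : ℝ → ℝ) (hf : Continuous f) (z : ℝ) :
    (∫ a in Set.Ioi (0:ℝ), a * K f z a) = ∫ u : ℝ, W f z u := by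
  rcases le_or_gt 1 |z| with hz | hz
  · have hK : ∀ a : ℝ, a * K f z a = 0 := by
      intro a
      have h1 : (1:ℝ) ≤ Real.sqrt (z^2 + a^2) := by
        calc (1:ℝ) ≤ |z| := hz
        _ = Real.sqrt (z^2) := (Real.sqrt_sq_eq_abs z).symm
        _ ≤ Real.sqrt (z^2 + a^2) := Real.sqrt_le_sqrt (by nlinarith [sq_nonneg a])
      rw [K, if_neg (not_lt.2 h1), mul_zero]
    have hW : ∀ u : ℝ, W f z u = 0 := by
      intro u
      rw [W, if_neg]
      rintro ⟨h1, h2⟩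
      linarith
    calc (∫ a in Set.Ioi (0:ℝ), a * K f z a) = 0 := by
          rw [show (fun a => a * K f z a) = fun _ => (0:ℝ) from funext hK]; simp
    _ = ∫ u : ℝ, W f z u := by
          rw [show (fun u => W f z u) = fun _ => (0:ℝ) from funext hW]; simp
  · have hz2 : z^2 < 1 := by nlinarith [sq_abs z, abs_nonneg z]
    set R := Real.sqrt (1 - z^2) with hR
    have hRpos : 0 < R := Real.sqrt_pos.2 (by linarith)
    have hR2 : R^2 = 1 - z^2 := Real.sq_sqrt (by linarith)
    have hcond : ∀ a : ℝ, 0 < a → (Real.sqrt (z^2 + a^2) < 1 ↔ a < R) := by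
      intro a ha
      rw [Real.sqrt_lt' one_pos, Real.lt_sqrt ha.le]
      constructor <;> intro h <;> nlinarith
    have hLHS : (∫ a in Set.Ioi (0:ℝ), a * K f z a)
        = ∫ a in (0:ℝ)..R, a * f (z / Real.sqrt (z^2 + a^2)) := by
      refine ioi_to_ioo _ _ R hRpos.le fun a ha => ?_
      rw [K, mul_ite, mul_zero]
      exact if_congr (hcond a ha) rfl rfl
    have hRHS : (∫ u : ℝ, W f z u) = ∫ u in |z|..1, u * f (z/u) := by
      rw [W_eq_indicator, integral_indicator measurableSet_Ioo,
        intervalIntegral.integral_of_le hz.le, integral_Ioc_eq_integral_Ioo]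
    rw [hLHS, hRHS]
    rcases eq_or_ne z 0 with rfl | hz0
    · -- z = 0 : both sides are ∫ u in 0..1, u * f(0/u) basically
      have e1 : ∀ a ∈ Set.uIcc (0:ℝ) R, a * f (0 / Real.sqrt (0^2 + a^2)) = a * f 0 := by
        intro a _
        rw [zero_div]
      have e2 : ∀ u ∈ Set.uIcc |(0:ℝ)| 1, u * f (0/u) = u * f 0 := by
        intro u _
        rw [zero_div]
      rw [intervalIntegral.integral_congr e1, intervalIntegral.integral_congr e2]
      have hR1 : R = 1 := by rw [hR]; simp
      rw [hR1]
      simp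
    · -- main substitution
      set φ : ℝ → ℝ := fun a => Real.sqrt (z^2 + a^2) with hφ
      set φ' : ℝ → ℝ := fun a => a / Real.sqrt (z^2 + a^2) with hφ'
      have hpos : ∀ a : ℝ, 0 < z^2 + a^2 := fun a => by positivity
      have hder : ∀ a ∈ Set.uIcc (0:ℝ) R, HasDerivAt φ (φ' a) a := by
        intro a _
        have hq : HasDerivAt (fun y : ℝ => z^2 + y^2) (2*a) a := by
          have := ((hasDerivAt_pow 2 a)).const_add (z^2)
          refine this.congr_deriv (Eq.symm ?_)
          norm_num
        have h := (Real.hasDerivAt_sqrt (ne_of_gt (hpos a))).comp a hq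
        refine h.congr_deriv (Eq.symm ?_)
        rw [hφ']
        field_simp
      have hder' : ContinuousOn φ' (Set.uIcc (0:ℝ) R) := by
        apply Continuous.continuousOn
        exact continuous_id.div (Real.continuous_sqrt.comp (by continuity))
          (fun a => ne_of_gt (Real.sqrt_pos.2 (hpos a)))
      have himg : φ '' (Set.uIcc (0:ℝ) R) ⊆ Set.Icc |z| 1 := by
        intro u ⟨a, ha, hau⟩
        rw [Set.uIcc_of_le hRpos.le] at ha
        constructor
        · rw [← hau, ← Real.sqrt_sq_eq_abs]
          exact Real.sqrt_le_sqrt (by nlinarith [sq_nonneg a])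
        · rw [← hau, ← Real.sqrt_one]
          apply Real.sqrt_le_sqrt
          nlinarith [ha.1, ha.2]
      have hgcont0 : ContinuousOn (fun u => u * f (z/u)) (Set.Icc |z| 1) := by
        have habs : 0 < |z| := abs_pos.2 hz0
        refine ContinuousOn.mul continuous_id.continuousOn ?_
        refine hf.comp_continuousOn ?_
        refine ContinuousOn.div continuousOn_const continuous_id.continuousOn ?_
        intro u hu
        exact ne_of_gt (lt_of_lt_of_le habs hu.1)
      have hgcont : ContinuousOn (fun u => u * f (z/u)) (φ '' (Set.uIcc (0:ℝ) R)) :=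
        hgcont0.mono himg
      have hsub := intervalIntegral.integral_comp_smul_deriv' hder hder' hgcont
      have hφ0 : φ 0 = |z| := by
        rw [hφ]
        simp [Real.sqrt_sq_eq_abs]
      have hφR : φ R = 1 := by
        rw [hφ]
        simp only []
        rw [show z^2 + R^2 = 1 by rw [hR2]; ring]
        exact Real.sqrt_one
      rw [hφ0, hφR] at hsub
      rw [← hsub]
      refine intervalIntegral.integral_congr fun a ha => ?_
      have hφa : 0 < Real.sqrt (z^2 + a^2) := Real.sqrt_pos.2 (hpos a)
      simp only [Function.comp, smul_eq_mul, hφ', hφ]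
      field_simp

def S2 : Set (ℝ × ℝ) := {p : ℝ × ℝ | |p.1| < p.2 ∧ p.2 < 1}

lemma S2_meas : MeasurableSet S2 :=
  (measurableSet_lt (measurable_fst.abs) measurable_snd).inter
    (measurableSet_lt measurable_snd measurable_const)

lemma W_integrable (f : ℝ → ℝ) (hf : Continuous f) :
    Integrable (Function.uncurry (W f)) ((volume : Measure ℝ).prod volume) := by
  obtain ⟨M, hM⟩ := (isCompact_Icc (a := (-1:ℝ)) (b := 1)).exists_bound_of_continuousOn
    hf.continuousOn
  have hWind : Function.uncurry (W f)
      = Set.indicator S2 (fun p : ℝ × ℝ => p.2 * f (p.1/p.2)) := by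
    funext p
    by_cases h : |p.1| < p.2 ∧ p.2 < 1
    · rw [Function.uncurry, W, if_pos h, Set.indicator_of_mem (by exact h)]
    · rw [Function.uncurry, W, if_neg h, Set.indicator_of_notMem (by exact h)]
  rw [hWind, integrable_indicator_iff S2_meas]
  have hSsub : S2 ⊆ Set.Ioo (-1:ℝ) 1 ×ˢ Set.Ioo (0:ℝ) 1 := by
    rintro ⟨z, u⟩ ⟨h1, h2⟩
    have h0 : 0 ≤ |z| := abs_nonneg z
    have habs := abs_lt.1 h1
    exact ⟨⟨by linarith [habs.1], by linarith [habs.2]⟩, ⟨by linarith, h2⟩⟩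
  have hfin : volume S2 ≠ ⊤ := by
    refine ne_top_of_le_ne_top ?_ (measure_mono hSsub)
    rw [Measure.volume_eq_prod, Measure.prod_prod]
    simp [Real.volume_Ioo]
  apply Measure.integrableOn_of_bounded (M := max M 0) hfin
  · exact (measurable_snd.mul (hf.measurable.comp
      (measurable_fst.div measurable_snd))).aestronglyMeasurable
  · filter_upwards [ae_restrict_mem S2_meas] with p hp
    obtain ⟨h1, h2⟩ := hp
    have hu0 : 0 < p.2 := lt_of_le_of_lt (abs_nonneg _) h1
    have harg : |p.1 / p.2| ≤ 1 := by
      rw [abs_div, abs_of_pos hu0, div_le_one hu0]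
      exact h1.le
    have hfb : |f (p.1/p.2)| ≤ M := by
      have h' := abs_le.1 harg
      simpa [Real.norm_eq_abs] using hM _ (Set.mem_Icc.2 ⟨h'.1, h'.2⟩)
    rw [Real.norm_eq_abs, abs_mul]
    calc |p.2| * |f (p.1/p.2)| ≤ 1 * M := by
          refine mul_le_mul ?_ hfb (abs_nonneg _) zero_le_one
          rw [abs_of_pos hu0]; exact h2.le
    _ = M := one_mul M
    _ ≤ max M 0 := le_max_left M 0

lemma step7 (f : ℝ → ℝ) (hf : Continuous f) (u : ℝ) :
    (∫ z : ℝ, W f z u)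
      = Set.indicator (Set.Ioo (0:ℝ) 1) (fun u => u^2 * ∫ t in (-1:ℝ)..1, f t) u := by
  by_cases hu : u ∈ Set.Ioo (0:ℝ) 1
  · obtain ⟨hu0, hu1⟩ := hu
    have hWz : (fun z => W f z u)
        = Set.indicator (Set.Ioo (-u) u) (fun z => u * f (z/u)) := by
      funext z
      by_cases h : |z| < u
      · rw [W, if_pos ⟨h, hu1⟩,
          Set.indicator_of_mem (Set.mem_Ioo.2 ⟨(abs_lt.1 h).1, (abs_lt.1 h).2⟩)]
      · rw [W, if_neg (fun hc => h hc.1),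
          Set.indicator_of_notMem (fun hc => h (abs_lt.2 (Set.mem_Ioo.1 hc)))]
    rw [hWz, integral_indicator measurableSet_Ioo,
      ← integral_Ioc_eq_integral_Ioo, ← intervalIntegral.integral_of_le (by linarith : -u ≤ u)]
    rw [intervalIntegral.integral_const_mul, intervalIntegral.integral_comp_div
      (fun t => f t) (ne_of_gt hu0)]
    rw [Set.indicator_of_mem (Set.mem_Ioo.2 ⟨hu0, hu1⟩)]
    rw [neg_div, div_self (ne_of_gt hu0)]
    simp only [smul_eq_mul]
    ring
  · have hWz : ∀ z : ℝ, W f z u = 0 := by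
      intro z
      rw [W, if_neg]
      rintro ⟨h1, h2⟩
      rw [Set.mem_Ioo] at hu
      exact hu ⟨lt_of_le_of_lt (abs_nonneg z) h1, h2⟩
    rw [show (fun z => W f z u) = fun _ => (0:ℝ) from funext hWz,
      Set.indicator_of_notMem hu]
    simp

lemma key3d (f : ℝ → ℝ) (hf : Continuous f) :
    ∫ x : E3, bi f e0 x = (2 * π / 3) * ∫ t in (-1 : ℝ)..1, f t := by
  rw [step1 f]
  have hvol : (volume : Measure (ℝ × ℝ × ℝ)) = (volume : Measure ℝ).prod volume :=
    Measure.volume_eq_prod ℝ (ℝ × ℝ)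
  have hQi : Integrable (Q f) ((volume : Measure ℝ).prod (volume : Measure (ℝ × ℝ))) := by
    rw [← hvol]; exact Q_integrable f hf
  rw [hvol, integral_prod _ hQi]
  rw [show (fun z => ∫ w : ℝ × ℝ, Q f (z, w))
      = fun z => (2*π) * ∫ u : ℝ, W f z u from funext fun z => by
    rw [step4 f z, step5 f hf z]]
  rw [MeasureTheory.integral_const_mul]
  rw [integral_integral_swap (W_integrable f hf)]
  rw [show (fun u => ∫ z : ℝ, W f z u)
      = Set.indicator (Set.Ioo (0:ℝ) 1) (fun u => u^2 * ∫ t in (-1:ℝ)..1, f t) from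
    funext fun u => step7 f hf u]
  rw [integral_indicator measurableSet_Ioo, ← integral_Ioc_eq_integral_Ioo,
    ← intervalIntegral.integral_of_le zero_le_one, intervalIntegral.integral_mul_const,
    integral_pow]
  norm_num
  ring


lemma polar3 (f : ℝ → ℝ) (hf : Continuous f) (r : E3) :
    (∫ v : Metric.sphere (0 : E3) 1, f (inner ℝ (v : E3) r : ℝ) ∂τ)
      = 3 * ∫ x : E3, bi f r x := by
  have hdim : Module.finrank ℝ E3 = 3 := by simp [finrank_euclideanSpace]
  set G : Metric.sphere (0 : E3) 1 × Set.Ioi (0 : ℝ) → ℝ :=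
    fun p => f (inner ℝ (p.1 : E3) r : ℝ) * (if (p.2 : ℝ) < 1 then 1 else 0) with hG
  have hMP := (volume : Measure E3).measurePreserving_homeomorphUnitSphereProd
  rw [hdim] at hMP
  norm_num at hMP
  rw [← τ_def] at hMP
  have h2 : (∫ x : ({0}ᶜ : Set E3), bi f r x.1 ∂((volume : Measure E3).comap Subtype.val))
      = ∫ p, G p ∂(τ.prod (Measure.volumeIoiPow 2)) := by
    rw [← hMP.integral_comp (Homeomorph.measurableEmbedding _) G]
    refine integral_congr_ae (Filter.Eventually.of_forall fun x => ?_)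
    have hx0 : (x : E3) ≠ 0 := x.2
    simp only [hG, homeomorphUnitSphereProd_apply_fst_coe, homeomorphUnitSphereProd_apply_snd_coe,
      bi, real_inner_smul_left]
    rw [mul_ite, mul_one, mul_zero]
    congr 1
    rw [div_eq_inv_mul]
  have h3 : (∫ x : E3, bi f r x)
      = ∫ x : ({0}ᶜ : Set E3), bi f r x.1 ∂((volume : Measure E3).comap Subtype.val) := by
    rw [integral_subtype_comap (measurableSet_singleton 0).compl fun x => bi f r x,
      restrict_compl_singleton]
  have h4 : (∫ p, G p ∂(τ.prod (Measure.volumeIoiPow 2)))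
      = (∫ v : Metric.sphere (0 : E3) 1, f (inner ℝ (v : E3) r : ℝ) ∂τ)
        * ∫ t : Set.Ioi (0 : ℝ), (if (t : ℝ) < 1 then (1:ℝ) else 0) ∂(Measure.volumeIoiPow 2) :=
    integral_prod_mul (f := fun v : Metric.sphere (0 : E3) 1 => f (inner ℝ (v : E3) r : ℝ))
      (g := fun t : Set.Ioi (0:ℝ) => if (t : ℝ) < 1 then (1:ℝ) else 0)
  have h5 : (∫ t : Set.Ioi (0 : ℝ), (if (t : ℝ) < 1 then (1:ℝ) else 0)
      ∂(Measure.volumeIoiPow 2)) = 1 / 3 := by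
    have hind : (fun t : Set.Ioi (0:ℝ) => if (t : ℝ) < 1 then (1:ℝ) else 0)
        = Set.indicator (Set.Iio (⟨1, Set.mem_Ioi.2 one_pos⟩ : Set.Ioi (0:ℝ))) 1 := by
      funext t
      have hmem : t ∈ Set.Iio (⟨1, Set.mem_Ioi.2 one_pos⟩ : Set.Ioi (0:ℝ)) ↔ (t:ℝ) < 1 := by
        simp [Set.mem_Iio, ← Subtype.coe_lt_coe]
      by_cases h : (t:ℝ) < 1
      · simp [Set.indicator, hmem, h]
      · simp [Set.indicator, hmem, h]
    rw [hind, integral_indicator_one measurableSet_Iio, measureReal_def,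
      Measure.volumeIoiPow_apply_Iio]
    norm_num
  rw [h3, h2, h4, h5]
  ring

lemma exists_iso (r r' : E3) (hr : ‖r‖ = 1) (hr' : ‖r'‖ = 1) :
    ∃ O : E3 ≃ₗᵢ[ℝ] E3, O r = r' := by
  rcases eq_or_ne r r' with rfl | h
  · exact ⟨LinearIsometryEquiv.refl ℝ E3, rfl⟩
  · exact ⟨Submodule.reflection (ℝ ∙ (r - r'))ᗮ, Submodule.reflection_sub (hr.trans hr'.symm)⟩

lemma inv3 (f : ℝ → ℝ) (hf : Continuous f) (r r' : E3) (hr : ‖r‖ = 1) (hr' : ‖r'‖ = 1) :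
    ∫ x : E3, bi f r x = ∫ x : E3, bi f r' x := by
  obtain ⟨O, hO⟩ := exists_iso r r' hr hr'
  have hMP : MeasurePreserving (⇑O) (volume : Measure E3) volume :=
    O.measurePreserving
  symm
  calc ∫ x : E3, bi f r' x = ∫ x : E3, bi f r' (O x) :=
        (hMP.integral_comp O.toHomeomorph.measurableEmbedding (bi f r')).symm
    _ = ∫ x : E3, bi f r x := by
        refine integral_congr_ae (Filter.Eventually.of_forall fun x => ?_)
        simp only [bi, O.norm_map]
        rw [← hO, O.inner_map_map]

lemma tau_eval (f : ℝ → ℝ) (hf : Continuous f) (r : E3) (hr : ‖r‖ = 1) :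
    (∫ v : Metric.sphere (0 : E3) 1, f (inner ℝ (v : E3) r : ℝ) ∂τ)
      = (2 * π) * ∫ t in (-1 : ℝ)..1, f t := by
  rw [polar3 f hf r, inv3 f hf r e0 hr norm_e0, key3d f hf]
  ring

lemma tau_univ : τ Set.univ = ENNReal.ofReal (4 * π) := by
  have h1 := tau_eval (fun _ => 1) continuous_const e0 norm_e0
  simp only [integral_const, smul_eq_mul, mul_one, intervalIntegral.integral_const,
    sub_neg_eq_add] at h1
  have hne : τ Set.univ ≠ ⊤ := measure_ne_top τ _
  rw [← ENNReal.ofReal_toReal hne, ← measureReal_def, h1]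
  congr 1
  ring

instance : IsProbabilityMeasure τ' := by
  constructor
  rw [τ', Measure.smul_apply, tau_univ, smul_eq_mul]
  rw [ENNReal.inv_mul_cancel]
  · simp [Real.pi_pos, mul_pos]
  · exact ENNReal.ofReal_ne_top

lemma tau'_eval (f : ℝ → ℝ) (hf : Continuous f) (r : E3) (hr : ‖r‖ = 1) :
    (∫ v : Metric.sphere (0 : E3) 1, f (inner ℝ (v : E3) r : ℝ) ∂τ')
      = (1 / 2) * ∫ t in (-1 : ℝ)..1, f t := by
  rw [τ', integral_smul_measure, tau_eval f hf r hr]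
  rw [ENNReal.toReal_inv, ENNReal.toReal_ofReal (by positivity)]
  have hπ : (0:ℝ) < π := Real.pi_pos
  field_simp
  rw [smul_eq_mul]
  field_simp
  ring


def hh (C t : ℝ) : ℝ := Real.sqrt (C ^ 2 + (1 - C ^ 2) * t ^ 2)

lemma hh_cont (C : ℝ) : Continuous (hh C) :=
  Real.continuous_sqrt.comp (continuous_const.add (continuous_const.mul (continuous_pow 2)))

lemma hh_abs_le {C : ℝ} (hC0 : 0 ≤ C) (hC1 : C ≤ 1) {t : ℝ} (ht : |t| ≤ 1) : |hh C t| ≤ 1 := by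
  simp only [hh]
  rw [abs_of_nonneg (Real.sqrt_nonneg _)]
  have harg : C ^ 2 + (1 - C ^ 2) * t ^ 2 ≤ 1 := by
    have ht2 : t ^ 2 ≤ 1 := by nlinarith [sq_abs t, abs_nonneg t]
    have hc2 : C ^ 2 ≤ 1 := by nlinarith
    nlinarith [mul_nonneg (sub_nonneg.2 hc2) (sub_nonneg.2 ht2)]
  calc Real.sqrt (C ^ 2 + (1 - C ^ 2) * t ^ 2) ≤ Real.sqrt 1 := Real.sqrt_le_sqrt harg
  _ = 1 := Real.sqrt_one

lemma hh_even (C t : ℝ) : hh C (-t) = hh C t := by simp [hh]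

lemma fold (C : ℝ) : (1 / 2) * ∫ t in (-1:ℝ)..1, hh C t = ∫ t in (0:ℝ)..1, hh C t := by
  have h1 : ∫ t in (-1:ℝ)..0, hh C t = ∫ t in (0:ℝ)..1, hh C t := by
    have h := intervalIntegral.integral_comp_neg (a := (0:ℝ)) (b := 1) (f := hh C)
    simp only [hh_even, neg_zero] at h
    rw [← h]
  have h2 := intervalIntegral.integral_add_adjacent_intervals (a := (-1:ℝ)) (b := 0) (c := 1)
    (μ := volume) ((hh_cont C).intervalIntegrable _ _) ((hh_cont C).intervalIntegrable _ _)
  rw [← h2, h1]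
  ring

lemma ae_unit (μ : Measure E3) (hμ : μ unitSphereᶜ = 0) : ∀ᵐ r ∂μ, ‖r‖ = 1 := by
  rw [ae_iff]
  refine measure_mono_null ?_ hμ
  intro r hr
  simp only [Set.mem_compl_iff, unitSphere, Metric.mem_sphere, dist_zero_right]
  exact hr

lemma inner_abs_le {r v : E3} (hr : ‖r‖ = 1) (hv : ‖v‖ = 1) : |(inner ℝ r v : ℝ)| ≤ 1 := by
  calc |(inner ℝ r v : ℝ)| ≤ ‖r‖ * ‖v‖ := abs_real_inner_le_norm _ _
  _ = 1 := by rw [hr, hv, one_mul]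

lemma integrable_h {C : ℝ} (μ : Measure E3) [IsProbabilityMeasure μ] (hμ : μ unitSphereᶜ = 0)
    (hC0 : 0 ≤ C) (hC1 : C ≤ 1) (v : E3) (hv : ‖v‖ = 1) :
    Integrable (fun r : E3 => hh C (inner ℝ r v : ℝ)) μ := by
  refine Integrable.mono' (integrable_const 1) ?_ ?_
  · exact ((hh_cont C).comp (continuous_id.inner continuous_const)).aestronglyMeasurable
  · filter_upwards [ae_unit μ hμ] with r hr
    rw [Real.norm_eq_abs]
    exact hh_abs_le hC0 hC1 (inner_abs_le hr hv)

lemma int_le_one {C : ℝ} (μ : Measure E3) [IsProbabilityMeasure μ] (hμ : μ unitSphereᶜ = 0)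
    (hC0 : 0 ≤ C) (hC1 : C ≤ 1) (v : E3) (hv : ‖v‖ = 1) :
    (∫ r, hh C (inner ℝ r v : ℝ) ∂μ) ≤ 1 := by
  calc (∫ r, hh C (inner ℝ r v : ℝ) ∂μ) ≤ ∫ _, (1:ℝ) ∂μ := by
        refine integral_mono_ae (integrable_h μ hμ hC0 hC1 v hv) (integrable_const 1) ?_
        filter_upwards [ae_unit μ hμ] with r hr
        have := hh_abs_le hC0 hC1 (inner_abs_le hr hv)
        exact (abs_le.1 this).2
  _ = 1 := by simp

lemma prod_int {C : ℝ} (μ : Measure E3) [IsProbabilityMeasure μ] (hμ : μ unitSphereᶜ = 0)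
    (hC0 : 0 ≤ C) (hC1 : C ≤ 1) :
    Integrable (Function.uncurry fun (v : Metric.sphere (0:E3) 1) (r : E3) =>
      hh C (inner ℝ r (v:E3) : ℝ)) (τ'.prod μ) := by
  have hae : ∀ᵐ p : (Metric.sphere (0:E3) 1) × E3 ∂(τ'.prod μ), p.2 ∈ unitSphere := by
    rw [ae_iff]
    have hnull : (τ'.prod μ) (Set.univ ×ˢ unitSphereᶜ) = 0 := by
      rw [Measure.prod_prod, hμ, mul_zero]
    refine measure_mono_null ?_ hnull
    intro p hp
    exact ⟨trivial, hp⟩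
  refine Integrable.mono' (integrable_const 1) ?_ ?_
  · exact ((hh_cont C).comp
      (continuous_snd.inner (continuous_subtype_val.comp continuous_fst))).aestronglyMeasurable
  · filter_upwards [hae] with p hp
    rw [Function.uncurry, Real.norm_eq_abs]
    exact hh_abs_le hC0 hC1 (inner_abs_le (mem_sphere_zero_iff_norm.1 hp)
      (mem_sphere_zero_iff_norm.1 p.1.2))

lemma avg {C : ℝ} (μ : Measure E3) [IsProbabilityMeasure μ] (hμ : μ unitSphereᶜ = 0)
    (hC0 : 0 ≤ C) (hC1 : C ≤ 1) :
    (∫ v : Metric.sphere (0:E3) 1, (∫ r, hh C (inner ℝ r (v:E3) : ℝ) ∂μ) ∂τ')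
      = ∫ t in (0:ℝ)..1, hh C t := by
  rw [integral_integral_swap (prod_int μ hμ hC0 hC1)]
  have h : ∀ᵐ r ∂μ, (∫ v : Metric.sphere (0:E3) 1, hh C (inner ℝ r (v:E3) : ℝ) ∂τ')
      = ∫ t in (0:ℝ)..1, hh C t := by
    filter_upwards [ae_unit μ hμ] with r hr
    have h1 : (fun v : Metric.sphere (0:E3) 1 => hh C (inner ℝ r (v:E3) : ℝ))
        = fun v : Metric.sphere (0:E3) 1 => hh C (inner ℝ (v:E3) r : ℝ) :=
      funext fun v => by rw [real_inner_comm]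
    rw [h1, tau'_eval (hh C) (hh_cont C) r hr, fold]
  rw [integral_congr_ae h, integral_const]
  simp

section sigma

variable {C : ℝ} (σ : Measure E3) [IsProbabilityMeasure σ]

lemma sigma_const (hinv : ∀ O : E3 ≃ₗᵢ[ℝ] E3, Measure.map ⇑O σ = σ)
    (v : E3) (hv : ‖v‖ = 1) :
    ∫ r, hh C (inner ℝ r v : ℝ) ∂σ = ∫ r, hh C (inner ℝ r e0 : ℝ) ∂σ := by
  obtain ⟨O, hO⟩ := exists_iso e0 v norm_e0 hv
  calc ∫ r, hh C (inner ℝ r v : ℝ) ∂σ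
      = ∫ r, hh C (inner ℝ r v : ℝ) ∂(Measure.map ⇑O σ) := by rw [hinv O]
    _ = ∫ r, hh C (inner ℝ (O r) v : ℝ) ∂σ := by
        have hcont : Continuous fun r : E3 => hh C (inner ℝ r v : ℝ) :=
          (hh_cont C).comp (continuous_id.inner continuous_const)
        rw [integral_map O.continuous.measurable.aemeasurable hcont.aestronglyMeasurable]
    _ = ∫ r, hh C (inner ℝ r e0 : ℝ) ∂σ := by
        refine integral_congr_ae (Filter.Eventually.of_forall fun r => ?_)
        simp only [← hO, O.inner_map_map]

lemma g_eq (hσ : σ unitSphereᶜ = 0)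
    (hinv : ∀ O : E3 ≃ₗᵢ[ℝ] E3, Measure.map ⇑O σ = σ) (hC0 : 0 ≤ C) (hC1 : C ≤ 1) :
    g C σ = ∫ t in (0:ℝ)..1, hh C t := by
  have hconst : ∀ v : Metric.sphere (0:E3) 1,
      (∫ r, hh C (inner ℝ r (v:E3) : ℝ) ∂σ) = ∫ r, hh C (inner ℝ r e0 : ℝ) ∂σ :=
    fun v => sigma_const σ hinv (v:E3) (mem_sphere_zero_iff_norm.1 v.2)
  have hg : g C σ = ∫ r, hh C (inner ℝ r e0 : ℝ) ∂σ := by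
    show (⨆ v : unitSphere, ∫ r, hh C (inner ℝ r (v : E3) : ℝ) ∂σ) = _
    have : (fun v : unitSphere => ∫ r, hh C (inner ℝ r (v : E3) : ℝ) ∂σ)
        = fun _ : unitSphere => ∫ r, hh C (inner ℝ r e0 : ℝ) ∂σ :=
      funext fun v => hconst ⟨(v : E3), v.2⟩
    rw [this]
    exact ciSup_const
  rw [hg, ← avg σ hσ hC0 hC1]
  have : (fun v : Metric.sphere (0:E3) 1 => ∫ r, hh C (inner ℝ r (v:E3) : ℝ) ∂σ)
      = fun _ : Metric.sphere (0:E3) 1 => ∫ r, hh C (inner ℝ r e0 : ℝ) ∂σ := funext hconst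
  rw [this, integral_const]
  simp

end sigma

lemma g_ge {C : ℝ} (μ : Measure E3) [IsProbabilityMeasure μ] (hμ : μ unitSphereᶜ = 0)
    (hC0 : 0 ≤ C) (hC1 : C ≤ 1) :
    (∫ t in (0:ℝ)..1, hh C t) ≤ g C μ := by
  have hbdd : BddAbove (Set.range fun v : unitSphere => ∫ r, hh C (inner ℝ r (v:E3) : ℝ) ∂μ) := by
    refine ⟨1, ?_⟩
    rintro x ⟨v, rfl⟩
    exact int_le_one μ hμ hC0 hC1 _ (mem_sphere_zero_iff_norm.1 v.2)
  have hle : ∀ v : Metric.sphere (0:E3) 1,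
      (∫ r, hh C (inner ℝ r (v:E3) : ℝ) ∂μ) ≤ g C μ := by
    intro v
    exact le_ciSup hbdd (⟨(v : E3), v.2⟩ : unitSphere)
  calc (∫ t in (0:ℝ)..1, hh C t)
      = ∫ v : Metric.sphere (0:E3) 1, (∫ r, hh C (inner ℝ r (v:E3) : ℝ) ∂μ) ∂τ' :=
        (avg μ hμ hC0 hC1).symm
  _ ≤ ∫ _ : Metric.sphere (0:E3) 1, g C μ ∂τ' := by
      refine integral_mono ((prod_int μ hμ hC0 hC1).integral_prod_left) (integrable_const _) hle
  _ = g C μ := by simp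

lemma closed_form {C : ℝ} (h0 : 0 < C) (h1 : C < 1) :
    (∫ t in (0:ℝ)..1, hh C t)
      = 1/2 + C^2 * arsinh (Real.sqrt (1-C^2) / C) / (2 * Real.sqrt (1-C^2)) := by
  set d := Real.sqrt (1 - C^2) with hd
  have hd2 : d ^ 2 = 1 - C ^ 2 := Real.sq_sqrt (by nlinarith)
  have hdpos : 0 < d := Real.sqrt_pos.2 (by nlinarith)
  have hs : ∀ x : ℝ, (0:ℝ) < C^2 + (1-C^2)*x^2 := fun x => by nlinarith [sq_nonneg x]
  set F : ℝ → ℝ := fun x => (x * Real.sqrt (C^2 + (1-C^2)*x^2) + (C^2/d) * arsinh (d*x/C)) / 2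
    with hFdef
  have hderiv : ∀ x ∈ Set.uIcc (0:ℝ) 1, HasDerivAt F (hh C x) x := by
    intro x _
    set s := Real.sqrt (C^2 + (1-C^2)*x^2) with hsdef
    have hspos : 0 < s := Real.sqrt_pos.2 (hs x)
    have hs2 : s^2 = C^2 + (1-C^2)*x^2 := Real.sq_sqrt (hs x).le
    have hq : HasDerivAt (fun y : ℝ => C^2 + (1-C^2)*y^2) ((1-C^2)*(2*x)) x := by
      have := ((hasDerivAt_pow 2 x).const_mul (1-C^2)).const_add (C^2)
      refine this.congr_deriv (Eq.symm ?_)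
      norm_num
    have hsq : HasDerivAt (fun y : ℝ => Real.sqrt (C^2+(1-C^2)*y^2)) ((1-C^2)*x / s) x := by
      have h := (Real.hasDerivAt_sqrt (ne_of_gt (hs x))).comp x hq
      refine h.congr_deriv (Eq.symm ?_)
      rw [← hsdef]
      field_simp
    have hmul : HasDerivAt (fun y : ℝ => y * Real.sqrt (C^2+(1-C^2)*y^2))
        (1 * s + x * ((1-C^2)*x / s)) x := (hasDerivAt_id x).mul hsq
    have hinner : HasDerivAt (fun y : ℝ => d*y/C) (d/C) x := by
      have := ((hasDerivAt_id x).const_mul d).div_const C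
      refine this.congr_deriv (Eq.symm ?_)
      norm_num
    have harsinh : HasDerivAt (fun y : ℝ => arsinh (d*y/C))
        ((Real.sqrt (1+(d*x/C)^2))⁻¹ * (d/C)) x :=
      (Real.hasDerivAt_arsinh _).comp x hinner
    have hsqrt1 : Real.sqrt (1+(d*x/C)^2) = s/C := by
      have e1 : (1:ℝ)+(d*x/C)^2 = (C^2+(1-C^2)*x^2)/C^2 := by
        rw [div_pow, mul_pow, hd2]
        field_simp
      rw [e1, ← hs2, show s^2/C^2 = (s/C)^2 by rw [div_pow], Real.sqrt_sq (by positivity)]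
    have htotal := (hmul.add (harsinh.const_mul (C^2/d))).div_const 2
    refine htotal.congr_deriv (Eq.symm ?_)
    rw [hsqrt1]
    simp only [hh, ← hsdef]
    field_simp
    linear_combination hs2
  rw [intervalIntegral.integral_eq_sub_of_hasDerivAt hderiv
    ((hh_cont C).intervalIntegrable _ _)]
  have hF0 : F 0 = 0 := by simp [hFdef]
  set A := arsinh (d / C) with hA
  have hF1 : F 1 = (1 + (C^2/d) * A) / 2 := by
    simp only [hFdef, hA]
    rw [show C^2+(1-C^2)*(1:ℝ)^2 = 1 by ring, Real.sqrt_one]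
    norm_num
  rw [hF0, hF1, sub_zero]
  ring


lemma hh_zero_int : (∫ t in (0:ℝ)..1, hh 0 t) = 1/2 := by
  have : ∀ t ∈ Set.uIcc (0:ℝ) 1, hh 0 t = t := by
    intro t ht
    rw [Set.uIcc_of_le (by norm_num)] at ht
    simp only [hh]
    rw [show (0:ℝ)^2 + (1 - 0^2) * t^2 = t^2 by ring, Real.sqrt_sq ht.1]
  rw [intervalIntegral.integral_congr this, integral_id]
  norm_num

end GIso

open GIso in
/-- Let `σ` be the uniform (rotation-invariant) probability measure on the unit sphere S² of ℝ³.
Then for every `C ∈ [0,1]`, `g(C,σ) = ∫₀¹ √(C² + (1−C²)x²) dx`, which for `0 < C < 1` equals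
`1/2 + C²·arcsinh(√(1−C²)/C)/(2√(1−C²))`; in particular `g(0,σ) = 1/2`.  Moreover `σ` is
optimal: every Borel probability measure `μ` on S² satisfies `g(C,μ) ≥ g(C,σ)` on `[0,1]`. -/
theorem g_isotropic (σ : Measure E3) [IsProbabilityMeasure σ] (hσ : σ unitSphereᶜ = 0)
    (hinv : ∀ O : E3 ≃ₗᵢ[ℝ] E3, Measure.map ⇑O σ = σ) :
    (∀ C ∈ Set.Icc (0 : ℝ) 1,
      g C σ = ∫ x in (0 : ℝ)..1, Real.sqrt (C ^ 2 + (1 - C ^ 2) * x ^ 2)) ∧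
    (∀ C : ℝ, 0 < C → C < 1 →
      g C σ = 1 / 2 + C ^ 2 * Real.arsinh (Real.sqrt (1 - C ^ 2) / C)
          / (2 * Real.sqrt (1 - C ^ 2))) ∧
    g 0 σ = 1 / 2 ∧
    (∀ μ : Measure E3, IsProbabilityMeasure μ → μ unitSphereᶜ = 0 →
      ∀ C ∈ Set.Icc (0 : ℝ) 1, g C σ ≤ g C μ) := by
  refine ⟨fun C hC => g_eq σ hσ hinv hC.1 hC.2, fun C h0 h1 => ?_, ?_, ?_⟩
  · rw [g_eq σ hσ hinv h0.le h1.le, closed_form h0 h1]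
  · rw [g_eq σ hσ hinv le_rfl zero_le_one, hh_zero_int]
  · intro μ _ hμ C hC
    rw [g_eq σ hσ hinv hC.1 hC.2]
    exact g_ge μ hμ hC.1 hC.2
end
end

section
/- For an integer M ≥ 3, let μ_M be the uniform distribution on the M vertices r_j = (cos(2π(j−1)/M), sin(2π(j−1)/M), 0), j = 1,…,M, of a regular M-gon inscribed in the equator of the unit sphere S² of ℝ³. Then g*(μ_M) = 2/(M·sin(π/M)) if M is even, and g*(μ_M) = 1/(M·sin(π/(2M))) if M is odd. -/
open MeasureTheory Real
open scoped ENNReal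

noncomputable section

/-- The point `(cos φ, sin φ, 0)` on the equator of the unit sphere. -/
def eqPt (φ : ℝ) : E3 := (WithLp.equiv 2 (Fin 3 → ℝ)).symm ![Real.cos φ, Real.sin φ, 0]

/-- The uniform probability measure on the equator: the pushforward of the normalized
Lebesgue measure on `[0, 2π)` under `φ ↦ (cos φ, sin φ, 0)`. -/
def equatorUniform : Measure E3 :=
  Measure.map eqPt ((ENNReal.ofReal (2 * π))⁻¹ • volume.restrict (Set.Ico 0 (2 * π)))

/-! ### Auxiliary trigonometric lemmas -/

lemma geomCos (n : ℕ) (x d : ℝ) :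
    ∑ k ∈ Finset.range n, 2 * Real.sin (d/2) * Real.cos (x + k * d)
      = Real.sin (x + n * d - d/2) - Real.sin (x - d/2) := by
  induction n with
  | zero => simp
  | succ n ih =>
    rw [Finset.sum_range_succ, ih]
    have h := Real.sin_sub_sin (x + (n+1 : ℕ) * d - d/2) (x + n * d - d/2)
    push_cast at h ⊢
    have h1 : (x + (n+1) * d - d/2 - (x + n * d - d/2)) / 2 = d / 2 := by ring
    have h2 : (x + (n+1) * d - d/2 + (x + n * d - d/2)) / 2 = x + n * d := by ring
    rw [h1, h2] at h
    linarith

lemma sinpos (n : ℕ) (hn : 1 ≤ n) : 0 < Real.sin (π / (2 * n)) := by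
  apply Real.sin_pos_of_pos_of_lt_pi
  · positivity
  · have h2 : (2:ℝ) ≤ 2 * n := by
      have : (1:ℝ) ≤ (n:ℝ) := by exact_mod_cast hn
      linarith
    calc π / (2*n) ≤ π / 2 := by
          apply div_le_div_of_nonneg_left pi_pos.le (by norm_num) h2
      _ < π := by linarith [pi_pos]

lemma FcosEq (n : ℕ) (hn : 1 ≤ n) (α : ℝ) (h1 : π/2 - π/n ≤ α) (h2 : α ≤ π/2) :
    ∑ k ∈ Finset.range n, |Real.cos (k * π / n - α)|
      = Real.sin (α + π/(2*n)) / Real.sin (π/(2*n)) := by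
  have hs := sinpos n hn
  have hnR : (1:ℝ) ≤ (n:ℝ) := by exact_mod_cast hn
  have hn0 : (0:ℝ) < n := by linarith
  have hd : π / n / 2 = π / (2*n) := by ring
  have geom := geomCos n (-α) (π/n)
  rw [hd] at geom
  have hnd : (n:ℝ) * (π/n) = π := by field_simp
  rw [hnd] at geom
  have e1 : Real.sin (-α + π - π/(2*n)) = Real.sin (α + π/(2*n)) := by
    rw [show -α + π - π/(2*n) = π - (α + π/(2*n)) by ring, Real.sin_pi_sub]
  have e2 : Real.sin (-α - π/(2*n)) = - Real.sin (α + π/(2*n)) := by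
    rw [show -α - π/(2*n) = -(α + π/(2*n)) by ring, Real.sin_neg]
  rw [e1, e2] at geom
  have habs : ∀ k ∈ Finset.range n, |Real.cos (k * π / n - α)| = Real.cos (-α + k * (π/n)) := by
    intro k hk
    rw [Finset.mem_range] at hk
    have hkR : (k:ℝ) ≤ (n:ℝ) - 1 := by
      have : (k:ℝ) + 1 ≤ (n:ℝ) := by exact_mod_cast hk
      linarith
    have harg : (k:ℝ) * π / n - α = -α + k * (π/n) := by ring
    rw [harg]
    apply abs_of_nonneg
    apply Real.cos_nonneg_of_mem_Icc
    constructor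
    · have : 0 ≤ (k:ℝ) * (π/n) := by positivity
      linarith
    · have : (k:ℝ) * (π/n) ≤ ((n:ℝ)-1) * (π/n) := by
        apply mul_le_mul_of_nonneg_right hkR (by positivity)
      have h3 : ((n:ℝ)-1) * (π/n) = π - π/n := by field_simp
      rw [h3] at this
      linarith
  rw [Finset.sum_congr rfl habs]
  have : ∑ k ∈ Finset.range n, 2 * Real.sin (π/(2*n)) * Real.cos (-α + k * (π/n))
      = 2 * Real.sin (π/(2*n)) * ∑ k ∈ Finset.range n, Real.cos (-α + k * (π/n)) := by
    rw [Finset.mul_sum]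
  rw [this] at geom
  rw [eq_div_iff hs.ne']
  linarith

lemma FcosLe' (n : ℕ) (hn : 1 ≤ n) (α : ℝ) (h1 : π/2 - π/n ≤ α) (h2 : α ≤ π/2) :
    ∑ k ∈ Finset.range n, |Real.cos (k * π / n - α)| ≤ 1 / Real.sin (π/(2*n)) := by
  rw [FcosEq n hn α h1 h2]
  have hs := sinpos n hn
  gcongr
  exact Real.sin_le_one _

lemma Fperiodic (n : ℕ) (hn : 1 ≤ n) :
    Function.Periodic (fun α => ∑ k ∈ Finset.range n, |Real.cos (k * π / n - α)|) (π / n) := by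
  intro α
  obtain ⟨m, rfl⟩ := Nat.exists_eq_add_of_le hn
  simp only []
  rw [show 1 + m = m + 1 from Nat.add_comm 1 m]
  rw [Finset.sum_range_succ']
  rw [Finset.sum_range_succ]
  congr 1
  · apply Finset.sum_congr rfl
    intro k hk
    congr 1
    push_cast
    field_simp
    ring
  · have hn0 : ((m:ℝ) + 1) ≠ 0 := by positivity
    have harg : (m:ℝ) * π / (m+1) - α = ((0:ℝ) * π / (m+1) - (α + π/(m+1))) + π := by
      field_simp
      ring
    push_cast
    rw [harg, Real.cos_add_pi, abs_neg]

lemma FcosLe (n : ℕ) (hn : 1 ≤ n) (α : ℝ) :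
    ∑ k ∈ Finset.range n, |Real.cos (k * π / n - α)| ≤ 1 / Real.sin (π/(2*n)) := by
  have hn0 : (0:ℝ) < n := by exact_mod_cast hn
  have hper := Fperiodic n hn
  obtain ⟨β, hβ, heq⟩ := hper.exists_mem_Ico (div_pos pi_pos hn0) α (π/2 - π/n)
  rw [heq]
  exact FcosLe' n hn β hβ.1 (by linarith [hβ.2, show π/2 - π/n + π/n = π/2 by ring])

lemma FcosMax (n : ℕ) (hn : 1 ≤ n) :
    ∑ k ∈ Finset.range n, |Real.cos (k * π / n - (π/2 - π/(2*n)))|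
      = 1 / Real.sin (π/(2*n)) := by
  have hn0 : (0:ℝ) < n := by exact_mod_cast hn
  have h1 : π/2 - π/n ≤ π/2 - π/(2*n) := by
    have : π/(2*n) ≤ π/n := by
      apply div_le_div_of_nonneg_left pi_pos.le hn0
      linarith
    linarith
  have h2 : π/2 - π/(2*n) ≤ π/2 := by
    have : 0 < π/(2*n) := by positivity
    linarith
  rw [FcosEq n hn _ h1 h2]
  rw [show π/2 - π/(2*n) + π/(2*n) = π/2 by ring, Real.sin_pi_div_two]

lemma Teven (n : ℕ) (hn : 1 ≤ n) (α : ℝ) :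
    ∑ j ∈ Finset.range (n+n), |Real.cos (2*π*j/(n+n) - α)|
      = 2 * ∑ k ∈ Finset.range n, |Real.cos (k*π/n - α)| := by
  have hn0 : ((n:ℝ)) ≠ 0 := by
    have : (0:ℝ) < n := by exact_mod_cast hn
    linarith
  rw [Finset.sum_range_add]
  have e1 : ∀ j ∈ Finset.range n, |Real.cos (2*π*(j:ℝ)/((n:ℝ)+(n:ℝ)) - α)|
      = |Real.cos ((j:ℝ)*π/(n:ℝ) - α)| := by
    intro j _
    congr 2
    field_simp
    ring
  have e2 : ∀ j ∈ Finset.range n, |Real.cos (2*π*((n+j : ℕ):ℝ)/((n:ℝ)+(n:ℝ)) - α)|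
      = |Real.cos ((j:ℝ)*π/(n:ℝ) - α)| := by
    intro j _
    have harg : 2*π*((n+j : ℕ):ℝ)/((n:ℝ)+(n:ℝ)) - α = ((j:ℝ)*π/(n:ℝ) - α) + π := by
      push_cast
      field_simp
      ring
    rw [harg, Real.cos_add_pi, abs_neg]
  rw [Finset.sum_congr rfl e1, Finset.sum_congr rfl e2]
  ring

lemma Todd (M : ℕ) (hModd : M % 2 = 1) (hM : 1 ≤ M) (α : ℝ) :
    ∑ j ∈ Finset.range M, |Real.cos (2*π*j/M - α)|
      = ∑ k ∈ Finset.range M, |Real.cos (k*π/M - α)| := by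
  have hM0 : 0 < M := hM
  apply Finset.sum_nbij' (i := fun j => 2*j % M)
    (j := fun k => if k % 2 = 0 then k/2 else (k+M)/2)
  · intro j hj
    exact Finset.mem_range.mpr (Nat.mod_lt _ hM0)
  · intro k hk
    rw [Finset.mem_range] at *
    split_ifs <;> omega
  · intro j hj
    rw [Finset.mem_range] at hj
    rcases lt_or_ge (2*j) M with h | h
    · rw [Nat.mod_eq_of_lt h, if_pos (by omega)]
      omega
    · have h2 : 2*j % M = 2*j - M := by
        rw [Nat.mod_eq_sub_mod h, Nat.mod_eq_of_lt (by omega)]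
      rw [h2, if_neg (by omega)]
      omega
  · intro k hk
    rw [Finset.mem_range] at hk
    split_ifs with h
    · have h1 : 2 * (k/2) = k := by omega
      rw [h1, Nat.mod_eq_of_lt hk]
    · have h1 : 2 * ((k+M)/2) = k + M := by omega
      rw [h1, Nat.add_mod_right, Nat.mod_eq_of_lt hk]
  · intro j hj
    rw [Finset.mem_range] at hj
    rcases lt_or_ge (2*j) M with h | h
    · rw [Nat.mod_eq_of_lt h]
      congr 2
      push_cast
      ring
    · have h2 : 2*j % M = 2*j - M := by
        rw [Nat.mod_eq_sub_mod h, Nat.mod_eq_of_lt (by omega)]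
      rw [h2]
      have hMR : (0:ℝ) < M := by exact_mod_cast hM0
      have hcast : ((2*j - M : ℕ) : ℝ) = 2*(j:ℝ) - M := by
        push_cast [Nat.cast_sub h]
        ring
      have harg : 2*π*(j:ℝ)/M - α = (((2*j - M : ℕ):ℝ)*π/M - α) + π := by
        rw [hcast]
        field_simp
        ring
      rw [harg, Real.cos_add_pi, abs_neg]

/-! ### Geometry lemmas -/

lemma integrable_dirac'_s15 {α E : Type*} [MeasurableSpace α] [MeasurableSingletonClass α]
    [NormedAddCommGroup E] {f : α → E} (a : α)
    (hf : AEStronglyMeasurable f (Measure.dirac a)) : Integrable f (Measure.dirac a) := by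
  refine ⟨hf, ?_⟩
  rw [HasFiniteIntegral, lintegral_dirac]
  exact ENNReal.coe_lt_top

lemma inner_eqPt (φ : ℝ) (v : E3) :
    (inner ℝ (eqPt φ) v : ℝ) = Real.cos φ * v 0 + Real.sin φ * v 1 := by
  rw [PiLp.inner_apply, Fin.sum_univ_three]
  simp [eqPt, WithLp.equiv_symm_apply, PiLp.toLp_apply, RCLike.inner_apply, mul_comm]

lemma eqPt_mem (φ : ℝ) : eqPt φ ∈ unitSphere := by
  rw [unitSphere, mem_sphere_zero_iff_norm, EuclideanSpace.norm_eq, Fin.sum_univ_three]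
  simp [eqPt, WithLp.equiv_symm_apply, PiLp.toLp_apply, Real.norm_eq_abs, sq_abs,
    Real.cos_sq_add_sin_sq]

lemma eqPt_apply0 (φ : ℝ) : eqPt φ 0 = Real.cos φ := by
  simp [eqPt, WithLp.equiv_symm_apply, PiLp.toLp_apply]

lemma eqPt_apply1 (φ : ℝ) : eqPt φ 1 = Real.sin φ := by
  simp [eqPt, WithLp.equiv_symm_apply, PiLp.toLp_apply]

lemma sum_sq_le (v : E3) (hv : v ∈ unitSphere) : v 0 ^ 2 + v 1 ^ 2 ≤ 1 := by
  rw [unitSphere, mem_sphere_zero_iff_norm, EuclideanSpace.norm_eq, Fin.sum_univ_three] at hv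
  have h := Real.sqrt_eq_one.mp hv
  have h2 : ‖v 0‖^2 + ‖v 1‖^2 + ‖v 2‖^2 = 1 := h
  simp only [Real.norm_eq_abs, sq_abs] at h2
  nlinarith [sq_nonneg (v 2)]

lemma polar (a b : ℝ) (h : a^2 + b^2 ≤ 1) :
    ∃ ρ α : ℝ, 0 ≤ ρ ∧ ρ ≤ 1 ∧ a = ρ * Real.cos α ∧ b = ρ * Real.sin α := by
  set z : ℂ := ⟨a, b⟩ with hz
  refine ⟨‖z‖, Complex.arg z, norm_nonneg z, ?_, ?_, ?_⟩
  · have hsq : (‖z‖)^2 = a^2 + b^2 := by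
      rw [Complex.sq_norm, Complex.normSq_mk]
      ring
    nlinarith [norm_nonneg z]
  · rw [Complex.norm_mul_cos_arg]
  · rw [Complex.norm_mul_sin_arg]

lemma integral_polygon (M : ℕ) (v : E3) :
    ∫ r, |(inner ℝ r v : ℝ)|
        ∂((M : ℝ≥0∞)⁻¹ • ∑ j : Fin M, Measure.dirac (eqPt (2 * π * (j : ℕ) / M)))
      = (M:ℝ)⁻¹ * ∑ j ∈ Finset.range M,
          |Real.cos (2*π*j/M) * v 0 + Real.sin (2*π*j/M) * v 1| := by
  have hcont : Continuous (fun r : E3 => |(inner ℝ r v : ℝ)|) :=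
    (continuous_id.inner continuous_const).abs
  rw [integral_smul_measure]
  rw [integral_finset_sum_measure (fun i _ => integrable_dirac'_s15 _ hcont.aestronglyMeasurable)]
  simp only [integral_dirac, inner_eqPt]
  rw [Fin.sum_univ_eq_sum_range (fun j => |Real.cos (2*π*j/M) * v 0 + Real.sin (2*π*j/M) * v 1|)]
  rw [ENNReal.toReal_inv]
  simp [ENNReal.toReal_natCast, smul_eq_mul]

/-! ### Main theorem -/

/-- For an integer `M ≥ 3`, let `μ_M` be the uniform distribution on the `M` vertices
`(cos(2πj/M), sin(2πj/M), 0)`, `j = 0, …, M−1`, of a regular `M`-gon inscribed in the equator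
of the unit sphere S² of ℝ³.  Then `g*(μ_M) = 2/(M·sin(π/M))` when `M` is even and
`g*(μ_M) = 1/(M·sin(π/(2M)))` when `M` is odd. -/
theorem gstar_polygon (M : ℕ) (hM : 3 ≤ M) :
    gstar ((M : ℝ≥0∞)⁻¹ • ∑ j : Fin M, Measure.dirac (eqPt (2 * π * (j : ℕ) / M)))
      = if Even M then 2 / (M * Real.sin (π / M)) else 1 / (M * Real.sin (π / (2 * M))) := by
  have hM0 : 0 < M := by omega
  have hMR : (0:ℝ) < M := by exact_mod_cast hM0
  set B : ℝ := if Even M then 2 / Real.sin (π/M) else 1 / Real.sin (π/(2*M)) with hB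
  -- upper bound for the angular sums
  have hTle : ∀ α : ℝ, ∑ j ∈ Finset.range M, |Real.cos (2*π*j/M - α)| ≤ B := by
    intro α
    by_cases hE : Even M
    · obtain ⟨n, rfl⟩ := hE
      have hn : 1 ≤ n := by omega
      have hEv : Even (n+n) := ⟨n, rfl⟩
      rw [hB, if_pos hEv]
      have hsum : ∑ j ∈ Finset.range (n+n), |Real.cos (2*π*(j:ℝ)/((n+n : ℕ):ℝ) - α)|
          = ∑ j ∈ Finset.range (n+n), |Real.cos (2*π*(j:ℝ)/((n:ℝ)+(n:ℝ)) - α)| := by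
        apply Finset.sum_congr rfl
        intro j _
        congr 3
        push_cast
        ring
      rw [hsum, Teven n hn α]
      have hle := FcosLe n hn α
      have hcast : Real.sin (π / ((n+n : ℕ):ℝ)) = Real.sin (π / (2*(n:ℝ))) := by
        congr 1
        push_cast
        ring
      rw [hcast]
      have hs := sinpos n hn
      rw [show (2:ℝ) / Real.sin (π/(2*(n:ℝ))) = 2 * (1 / Real.sin (π/(2*(n:ℝ)))) by ring]
      linarith
    · have hModd : M % 2 = 1 := Nat.odd_iff.mp (Nat.not_even_iff_odd.mp hE)
      rw [hB, if_neg hE]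
      rw [Todd M hModd hM0 α]
      exact FcosLe M hM0 α
  -- the maximizing angle
  have hTmax : ∃ α : ℝ, ∑ j ∈ Finset.range M, |Real.cos (2*π*j/M - α)| = B := by
    by_cases hE : Even M
    · obtain ⟨n, rfl⟩ := hE
      have hn : 1 ≤ n := by omega
      refine ⟨π/2 - π/(2*(n:ℝ)), ?_⟩
      have hEv : Even (n+n) := ⟨n, rfl⟩
      rw [hB, if_pos hEv]
      have hsum : ∑ j ∈ Finset.range (n+n),
            |Real.cos (2*π*(j:ℝ)/((n+n : ℕ):ℝ) - (π/2 - π/(2*(n:ℝ))))|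
          = ∑ j ∈ Finset.range (n+n),
            |Real.cos (2*π*(j:ℝ)/((n:ℝ)+(n:ℝ)) - (π/2 - π/(2*(n:ℝ))))| := by
        apply Finset.sum_congr rfl
        intro j _
        congr 3
        push_cast
        ring
      rw [hsum, Teven n hn _, FcosMax n hn]
      have hcast : Real.sin (π / ((n+n : ℕ):ℝ)) = Real.sin (π / (2*(n:ℝ))) := by
        congr 1
        push_cast
        ring
      rw [hcast]
      ring
    · have hModd : M % 2 = 1 := Nat.odd_iff.mp (Nat.not_even_iff_odd.mp hE)
      refine ⟨π/2 - π/(2*(M:ℝ)), ?_⟩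
      rw [hB, if_neg hE]
      rw [Todd M hModd hM0 _]
      exact FcosMax M hM0
  -- bound for arbitrary unit vectors
  have key : ∀ v : E3, v ∈ unitSphere →
      ∑ j ∈ Finset.range M, |Real.cos (2*π*j/M) * v 0 + Real.sin (2*π*j/M) * v 1| ≤ B := by
    intro v hv
    obtain ⟨ρ, α, hρ0, hρ1, ha, hb⟩ := polar (v 0) (v 1) (sum_sq_le v hv)
    have hterm : ∀ j ∈ Finset.range M,
        |Real.cos (2*π*j/M) * v 0 + Real.sin (2*π*j/M) * v 1|
          = ρ * |Real.cos (2*π*j/M - α)| := by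
      intro j _
      rw [ha, hb, Real.cos_sub]
      rw [show Real.cos (2*π*j/M) * (ρ * Real.cos α) + Real.sin (2*π*j/M) * (ρ * Real.sin α)
          = ρ * (Real.cos (2*π*j/M) * Real.cos α + Real.sin (2*π*j/M) * Real.sin α) by ring]
      rw [abs_mul, abs_of_nonneg hρ0]
    rw [Finset.sum_congr rfl hterm, ← Finset.mul_sum]
    have hT0 : 0 ≤ ∑ j ∈ Finset.range M, |Real.cos (2*π*j/M - α)| :=
      Finset.sum_nonneg fun j _ => abs_nonneg _
    calc ρ * ∑ j ∈ Finset.range M, |Real.cos (2*π*j/M - α)|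
        ≤ 1 * ∑ j ∈ Finset.range M, |Real.cos (2*π*j/M - α)| := by
          apply mul_le_mul_of_nonneg_right hρ1 hT0
      _ = ∑ j ∈ Finset.range M, |Real.cos (2*π*j/M - α)| := by ring
      _ ≤ B := hTle α
  -- final supremum computation
  have htarget : (if Even M then 2 / ((M:ℝ) * Real.sin (π / M))
      else 1 / ((M:ℝ) * Real.sin (π / (2 * M)))) = (M:ℝ)⁻¹ * B := by
    by_cases hE : Even M
    · rw [hB, if_pos hE, if_pos hE]
      ring
    · rw [hB, if_neg hE, if_neg hE]
      ring
  rw [htarget, gstar]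
  haveI : Nonempty ↥unitSphere := ⟨⟨eqPt 0, eqPt_mem 0⟩⟩
  apply le_antisymm
  · apply ciSup_le
    intro v
    refine le_trans (le_of_eq (integral_polygon M (v : E3))) ?_
    have := key (v : E3) v.2
    have hinv : (0:ℝ) ≤ (M:ℝ)⁻¹ := by positivity
    exact mul_le_mul_of_nonneg_left this hinv
  · obtain ⟨α₀, hα₀⟩ := hTmax
    have hbdd : BddAbove (Set.range fun v : ↥unitSphere =>
        ∫ r, |(inner ℝ r (v : E3) : ℝ)|
          ∂((M : ℝ≥0∞)⁻¹ • ∑ j : Fin M, Measure.dirac (eqPt (2 * π * (j : ℕ) / M)))) := by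
      refine ⟨(M:ℝ)⁻¹ * B, ?_⟩
      rintro x ⟨v, rfl⟩
      have hinv : (0:ℝ) ≤ (M:ℝ)⁻¹ := by positivity
      exact le_trans (le_of_eq (integral_polygon M (v : E3)))
        (mul_le_mul_of_nonneg_left (key (v : E3) v.2) hinv)
    have hval : (∫ r, |(inner ℝ r ((⟨eqPt α₀, eqPt_mem α₀⟩ : ↥unitSphere) : E3) : ℝ)|
          ∂((M : ℝ≥0∞)⁻¹ • ∑ j : Fin M, Measure.dirac (eqPt (2 * π * (j : ℕ) / M))))
        = (M:ℝ)⁻¹ * B := by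
      rw [integral_polygon M (eqPt α₀)]
      congr 1
      rw [← hα₀]
      apply Finset.sum_congr rfl
      intro j _
      rw [eqPt_apply0, eqPt_apply1, Real.cos_sub]
    calc (M:ℝ)⁻¹ * B = _ := hval.symm
      _ ≤ _ := le_ciSup hbdd (⟨eqPt α₀, eqPt_mem α₀⟩ : ↥unitSphere)
end
end
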